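/- arXiv:2512.11910 — 11 statements merged into one kernel-verified Lean document; each statement's English description precedes it below -/
import Mathlib

section
/- For any continuous integrable function F : ℝ → ℝ, the principal value integral over ℝ of F(x - 1/x) dx equals the integral over ℝ of F(x) dx (Cauchy–Schlömilch identity). -/
open MeasureTheory Set Real

noncomputable def sq4 (x : ℝ) : ℝ := Real.sqrt (x ^ 2 + 4)

lemma sq4_pos (x : ℝ) : 0 < sq4 x := Real.sqrt_pos.mpr (by positivity)

lemma abs_lt_sq4 (x : ℝ) : |x| < sq4 x := by
  rw [← Real.sqrt_sq_eq_abs]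
  exact Real.sqrt_lt_sqrt (sq_nonneg x) (by linarith)

lemma sq4_sq (x : ℝ) : sq4 x ^ 2 = x ^ 2 + 4 := Real.sq_sqrt (by positivity)

lemma hasDerivAt_sq4 (x : ℝ) : HasDerivAt sq4 (x / sq4 x) x := by
  have h := (Real.hasDerivAt_sqrt (x := x ^ 2 + 4) (by positivity)).comp x
    ((hasDerivAt_pow 2 x).add_const 4)
  have hne : Real.sqrt (x ^ 2 + 4) ≠ 0 := (sq4_pos x).ne'
  refine h.congr_deriv ?_
  symm
  show x / sq4 x = _
  push_cast
  rw [show sq4 x = Real.sqrt (x ^ 2 + 4) from rfl]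
  field_simp

noncomputable def gp (x : ℝ) : ℝ := (x + sq4 x) / 2
noncomputable def hm (x : ℝ) : ℝ := (x - sq4 x) / 2
noncomputable def gp' (x : ℝ) : ℝ := (1 + x / sq4 x) / 2
noncomputable def hm' (x : ℝ) : ℝ := (1 - x / sq4 x) / 2

lemma gp_pos (x : ℝ) : 0 < gp x := by
  have := abs_lt_sq4 x; have := neg_abs_le x; unfold gp; nlinarith

lemma hm_neg (x : ℝ) : hm x < 0 := by
  have := abs_lt_sq4 x; have := le_abs_self x; unfold hm; nlinarith

lemma gp'_mem (x : ℝ) : 0 ≤ gp' x ∧ gp' x ≤ 1 := by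
  have h1 := abs_lt_sq4 x
  have h2 := sq4_pos x
  have h3 : -1 ≤ x / sq4 x := by
    rw [le_div_iff₀ h2]; have := neg_abs_le x; nlinarith
  have h4 : x / sq4 x ≤ 1 := by
    rw [div_le_one h2]; have := le_abs_self x; linarith
  constructor <;> [unfold gp'; unfold gp'] <;> linarith

lemma hm'_mem (x : ℝ) : 0 ≤ hm' x ∧ hm' x ≤ 1 := by
  have h2 := sq4_pos x
  have h3 : -1 ≤ x / sq4 x := by
    rw [le_div_iff₀ h2]; have := neg_abs_le x; have := abs_lt_sq4 x; nlinarith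
  have h4 : x / sq4 x ≤ 1 := by
    rw [div_le_one h2]; have := le_abs_self x; have := abs_lt_sq4 x; linarith
  constructor <;> [unfold hm'; unfold hm'] <;> linarith

lemma gp'_add_hm' (x : ℝ) : gp' x + hm' x = 1 := by unfold gp' hm'; ring

lemma hasDerivAt_gp (x : ℝ) : HasDerivAt gp (gp' x) x := by
  have := ((hasDerivAt_id x).add (hasDerivAt_sq4 x)).div_const 2
  unfold gp; simpa [gp'] using this

lemma hasDerivAt_hm (x : ℝ) : HasDerivAt hm (hm' x) x := by
  have := ((hasDerivAt_id x).sub (hasDerivAt_sq4 x)).div_const 2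
  unfold hm; simpa [hm'] using this

lemma gp_key (x : ℝ) : gp x - 1 / gp x = x := by
  have h0 := (gp_pos x).ne'
  have hsq : gp x ^ 2 = x * gp x + 1 := by
    unfold gp
    have := sq4_sq x
    nlinarith [sq4_sq x]
  field_simp
  nlinarith [hsq]

lemma hm_key (x : ℝ) : hm x - 1 / hm x = x := by
  have h0 := (hm_neg x).ne
  have hsq : hm x ^ 2 = x * hm x + 1 := by
    unfold hm
    nlinarith [sq4_sq x]
  field_simp
  nlinarith [hsq]

lemma gp_image : gp '' univ = Ioi (0 : ℝ) := by
  ext y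
  simp only [image_univ, mem_range, mem_Ioi]
  constructor
  · rintro ⟨x, rfl⟩; exact gp_pos x
  · intro hy
    refine ⟨y - 1 / y, ?_⟩
    have hy' : y ≠ 0 := hy.ne'
    have hpos : 0 < y + 1 / y := by positivity
    have hsq : (y - 1 / y) ^ 2 + 4 = (y + 1 / y) ^ 2 := by field_simp; ring
    have : sq4 (y - 1 / y) = y + 1 / y := by
      rw [sq4, hsq, Real.sqrt_sq hpos.le]
    unfold gp
    rw [this]; ring

lemma hm_image : hm '' univ = Iio (0 : ℝ) := by
  ext y
  simp only [image_univ, mem_range, mem_Iio]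
  constructor
  · rintro ⟨x, rfl⟩; exact hm_neg x
  · intro hy
    refine ⟨y - 1 / y, ?_⟩
    have hy' : y ≠ 0 := hy.ne
    have hpos : 0 < -(y + 1 / y) := by
      have : y + 1 / y < 0 := by
        have h1 : 1 / y < 0 := by exact div_neg_of_pos_of_neg one_pos hy
        linarith
      linarith
    have hsq : (y - 1 / y) ^ 2 + 4 = (-(y + 1 / y)) ^ 2 := by field_simp; ring
    have : sq4 (y - 1 / y) = -(y + 1 / y) := by
      rw [sq4, hsq, Real.sqrt_sq hpos.le]
    unfold hm
    rw [this]; ring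

lemma gp_inj : InjOn gp univ := by
  intro a _ b _ hab
  have := gp_key a
  rw [hab, gp_key b] at this
  exact this.symm

lemma hm_inj : InjOn hm univ := by
  intro a _ b _ hab
  have := hm_key a
  rw [hab, hm_key b] at this
  exact this.symm

lemma continuous_sq4 : Continuous sq4 :=
  Real.continuous_sqrt.comp (by continuity)

lemma continuous_gp' : Continuous gp' := by
  unfold gp'
  exact ((continuous_const.add (continuous_id.div continuous_sq4
    fun x => (sq4_pos x).ne')).div_const 2)

lemma continuous_hm' : Continuous hm' := by
  unfold hm'
  exact ((continuous_const.sub (continuous_id.div continuous_sq4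
    fun x => (sq4_pos x).ne')).div_const 2)

theorem cauchy_schlomilch (F : ℝ → ℝ) (hF : Continuous F) (hInt : Integrable F) :
    (∫ x in Iio (0:ℝ), F (x - 1/x)) + (∫ x in Ioi (0:ℝ), F (x - 1/x))
      = ∫ x, F x := by
  have hIoi : (∫ x in Ioi (0:ℝ), F (x - 1/x)) = ∫ x, |gp' x| * F x := by
    rw [← gp_image,
      integral_image_eq_integral_abs_deriv_smul MeasurableSet.univ
        (fun x _ => (hasDerivAt_gp x).hasDerivWithinAt) gp_inj (fun y => F (y - 1/y))]
    simp only [smul_eq_mul, setIntegral_univ, gp_key]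
  have hIio : (∫ x in Iio (0:ℝ), F (x - 1/x)) = ∫ x, |hm' x| * F x := by
    rw [← hm_image,
      integral_image_eq_integral_abs_deriv_smul MeasurableSet.univ
        (fun x _ => (hasDerivAt_hm x).hasDerivWithinAt) hm_inj (fun y => F (y - 1/y))]
    simp only [smul_eq_mul, setIntegral_univ, hm_key]
  have int1 : Integrable (fun x => |gp' x| * F x) :=
    hInt.bdd_mul (continuous_gp'.abs.aestronglyMeasurable)
      (c := 1) (Filter.Eventually.of_forall fun x => by
        rw [Real.norm_eq_abs, abs_abs, abs_of_nonneg (gp'_mem x).1]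
        exact (gp'_mem x).2)
  have int2 : Integrable (fun x => |hm' x| * F x) :=
    hInt.bdd_mul (continuous_hm'.abs.aestronglyMeasurable)
      (c := 1) (Filter.Eventually.of_forall fun x => by
        rw [Real.norm_eq_abs, abs_abs, abs_of_nonneg (hm'_mem x).1]
        exact (hm'_mem x).2)
  rw [hIoi, hIio, ← integral_add int2 int1]
  congr 1
  ext x
  rw [abs_of_nonneg (hm'_mem x).1, abs_of_nonneg (gp'_mem x).1]
  linear_combination F x * (gp'_add_hm' x)
end

section
/- For any a > 0 and b > 0 and any continuous integrable F : ℝ → ℝ, the principal-value integral over ℝ of F(ax - b/x) dx equals (1/a) times the integral over ℝ of F(x) dx. -/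
open MeasureTheory Set Real

theorem cauchy_schlomilch_ab (a b : ℝ) (ha : 0 < a) (hb : 0 < b)
    (F : ℝ → ℝ) (hF : Continuous F) (hInt : Integrable F) :
    (∫ x in Iio (0:ℝ), F (a * x - b / x)) + (∫ x in Ioi (0:ℝ), F (a * x - b / x))
      = (1 / a) * ∫ x, F x := by
  set r : ℝ → ℝ := fun u => Real.sqrt (u ^ 2 + 4 * a * b) with hr
  have hrpos : ∀ u, 0 < r u := fun u => Real.sqrt_pos.2 (by positivity)
  have hrsq : ∀ u, (r u) ^ 2 = u ^ 2 + 4 * a * b := fun u => Real.sq_sqrt (by positivity)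
  have hrabs : ∀ u, |u| < r u := by
    intro u
    rw [← Real.sqrt_sq_eq_abs]
    exact Real.sqrt_lt_sqrt (sq_nonneg u) (by nlinarith)
  have hru1 : ∀ u, -r u < u := fun u => neg_lt_of_abs_lt (hrabs u)
  have hru2 : ∀ u, u < r u := fun u => lt_of_abs_lt (hrabs u)
  set f₁ : ℝ → ℝ := fun u => (u + r u) / (2 * a) with hf₁
  set f₂ : ℝ → ℝ := fun u => (u - r u) / (2 * a) with hf₂
  have hf₁pos : ∀ u, 0 < f₁ u := fun u => div_pos (by linarith [hru1 u]) (by linarith)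
  have hf₂neg : ∀ u, f₂ u < 0 := fun u => div_neg_of_neg_of_pos (by linarith [hru2 u]) (by linarith)
  have hrcont : Continuous r := by
    exact Real.continuous_sqrt.comp (by continuity)
  have hrderiv : ∀ u, HasDerivAt r (u / r u) u := by
    intro u
    have h1 : HasDerivAt (fun u : ℝ => u ^ 2 + 4 * a * b) (2 * u) u := by
      simpa using ((hasDerivAt_pow 2 u).add_const (4 * a * b))
    have h2 := (Real.hasDerivAt_sqrt (by positivity : u ^ 2 + 4 * a * b ≠ 0)).comp u h1
    refine h2.congr_deriv ?_
    have := (hrpos u).ne'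
    field_simp [hr]
    ring
  have hd₁ : ∀ u, HasDerivAt f₁ ((1 + u / r u) / (2 * a)) u := by
    intro u
    exact ((hasDerivAt_id u).add (hrderiv u)).div_const (2 * a)
  have hd₂ : ∀ u, HasDerivAt f₂ ((1 - u / r u) / (2 * a)) u := by
    intro u
    exact ((hasDerivAt_id u).sub (hrderiv u)).div_const (2 * a)
  have key₁ : ∀ u, a * f₁ u - b / f₁ u = u := by
    intro u
    have hx := (hf₁pos u).ne'
    have hsq := hrsq u
    have hne : u + r u ≠ 0 := by linarith [hru1 u]
    rw [hf₁]
    field_simp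
    nlinarith [hrsq u]
  have key₂ : ∀ u, a * f₂ u - b / f₂ u = u := by
    intro u
    have hx := (hf₂neg u).ne
    have hne : u - r u ≠ 0 := by linarith [hru2 u]
    rw [hf₂]
    field_simp
    nlinarith [hrsq u]
  have hinj₁ : InjOn f₁ univ := by
    intro u _ v _ h
    rw [← key₁ u, ← key₁ v, h]
  have hinj₂ : InjOn f₂ univ := by
    intro u _ v _ h
    rw [← key₂ u, ← key₂ v, h]
  have hrange₁ : f₁ '' univ = Ioi (0 : ℝ) := by
    apply Subset.antisymm
    · rintro x ⟨u, -, rfl⟩; exact hf₁pos u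
    · intro x hx
      have hx0 : (0 : ℝ) < x := hx
      refine ⟨a * x - b / x, trivial, ?_⟩
      have hval : r (a * x - b / x) = a * x + b / x := by
        show Real.sqrt ((a * x - b / x) ^ 2 + 4 * a * b) = a * x + b / x
        have : (a * x - b / x) ^ 2 + 4 * a * b = (a * x + b / x) ^ 2 := by
          field_simp
          ring
        rw [this]
        exact Real.sqrt_sq (by positivity)
      rw [hf₁]
      simp only [hval]
      field_simp
      ring
  have hrange₂ : f₂ '' univ = Iio (0 : ℝ) := by
    apply Subset.antisymm
    · rintro x ⟨u, -, rfl⟩; exact hf₂neg u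
    · intro x hx
      have hx0 : x < 0 := hx
      refine ⟨a * x - b / x, trivial, ?_⟩
      have hval : r (a * x - b / x) = -(a * x + b / x) := by
        show Real.sqrt ((a * x - b / x) ^ 2 + 4 * a * b) = -(a * x + b / x)
        have : (a * x - b / x) ^ 2 + 4 * a * b = (-(a * x + b / x)) ^ 2 := by
          have : x ≠ 0 := hx0.ne
          field_simp
          ring
        rw [this]
        refine Real.sqrt_sq ?_
        have h1 : a * x < 0 := mul_neg_of_pos_of_neg ha hx0
        have h2 : b / x < 0 := div_neg_of_pos_of_neg hb hx0
        linarith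
      rw [hf₂]
      simp only [hval]
      have : x ≠ 0 := hx0.ne
      field_simp
      ring
  set g₁ : ℝ → ℝ := fun u => (1 + u / r u) / (2 * a) with hg₁
  set g₂ : ℝ → ℝ := fun u => (1 - u / r u) / (2 * a) with hg₂
  have hg₁pos : ∀ u, 0 < g₁ u := by
    intro u
    apply div_pos _ (by linarith)
    have : -1 < u / r u := by
      rw [lt_div_iff₀ (hrpos u)]; linarith [hru1 u]
    linarith
  have hg₂pos : ∀ u, 0 < g₂ u := by
    intro u
    apply div_pos _ (by linarith)
    have : u / r u < 1 := by
      rw [div_lt_one (hrpos u)]; exact hru2 u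
    linarith
  have hg₁bd : ∀ u, ‖g₁ u‖ ≤ 1 / a := by
    intro u
    rw [Real.norm_eq_abs, abs_of_pos (hg₁pos u)]
    have : u / r u < 1 := by rw [div_lt_one (hrpos u)]; exact hru2 u
    rw [hg₁, div_le_div_iff₀ (by linarith) ha]
    nlinarith
  have hg₂bd : ∀ u, ‖g₂ u‖ ≤ 1 / a := by
    intro u
    rw [Real.norm_eq_abs, abs_of_pos (hg₂pos u)]
    have : -1 < u / r u := by rw [lt_div_iff₀ (hrpos u)]; linarith [hru1 u]
    rw [hg₂, div_le_div_iff₀ (by linarith) ha]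
    nlinarith
  have hgcont : ∀ u, r u ≠ 0 := fun u => (hrpos u).ne'
  have hg₁cont : Continuous g₁ := by
    apply Continuous.div_const
    exact continuous_const.add (continuous_id.div hrcont hgcont)
  have hg₂cont : Continuous g₂ := by
    apply Continuous.div_const
    exact continuous_const.sub (continuous_id.div hrcont hgcont)
  have hI₁ : Integrable (fun u => g₁ u * F u) := by
    exact hInt.bdd_mul hg₁cont.aestronglyMeasurable (ae_of_all _ hg₁bd)
  have hI₂ : Integrable (fun u => g₂ u * F u) := by
    exact hInt.bdd_mul hg₂cont.aestronglyMeasurable (ae_of_all _ hg₂bd)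
  have hcv₁ : (∫ x in Ioi (0:ℝ), F (a * x - b / x)) = ∫ u, g₁ u * F u := by
    rw [← hrange₁,
      integral_image_eq_integral_abs_deriv_smul MeasurableSet.univ
        (fun x _ => (hd₁ x).hasDerivWithinAt) hinj₁]
    rw [Measure.restrict_univ]
    congr 1
    ext u
    rw [key₁ u, abs_of_pos (hg₁pos u), smul_eq_mul]
  have hcv₂ : (∫ x in Iio (0:ℝ), F (a * x - b / x)) = ∫ u, g₂ u * F u := by
    rw [← hrange₂,
      integral_image_eq_integral_abs_deriv_smul MeasurableSet.univ
        (fun x _ => (hd₂ x).hasDerivWithinAt) hinj₂]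
    rw [Measure.restrict_univ]
    congr 1
    ext u
    rw [key₂ u, abs_of_pos (hg₂pos u), smul_eq_mul]
  rw [hcv₁, hcv₂, ← integral_add hI₂ hI₁]
  rw [← integral_const_mul]
  congr 1
  ext u
  have : g₂ u + g₁ u = 1 / a := by
    rw [hg₁, hg₂]
    field_simp
    ring
  rw [← this]; ring
end

section
/- Let u(x) = x - a/(x - b) with a > 0, b ∈ ℝ, and let F : ℝ → ℝ be continuous and integrable. Then the sum of the integrals of F(u(x)) over (-∞, b) and over (b, ∞) equals the integral of F over ℝ. -/
open MeasureTheory Set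

theorem meromorphic_reduction_one_pole (a b : ℝ) (ha : 0 < a)
    (F : ℝ → ℝ) (hF : Continuous F) (hInt : Integrable F) :
    (∫ x in Iio b, F (x - a / (x - b))) + (∫ x in Ioi b, F (x - a / (x - b)))
      = ∫ x, F x := by
  set d : ℝ → ℝ := fun y => Real.sqrt ((y - b)^2 + 4*a) with hd
  have hDpos : ∀ y : ℝ, 0 < (y - b)^2 + 4*a := fun y => by positivity
  have hdpos : ∀ y, 0 < d y := fun y => Real.sqrt_pos.2 (hDpos y)
  have hdsq : ∀ y, d y ^ 2 = (y - b)^2 + 4*a := fun y => Real.sq_sqrt (hDpos y).le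
  have habs : ∀ y, |y - b| < d y := by
    intro y
    rw [← Real.sqrt_sq_eq_abs]
    exact Real.sqrt_lt_sqrt (sq_nonneg _) (by linarith)
  set x₁ : ℝ → ℝ := fun y => (b + y - d y)/2 with hx1
  set x₂ : ℝ → ℝ := fun y => (b + y + d y)/2 with hx2
  -- derivative of d
  have hd' : ∀ y, HasDerivAt d ((y - b)/ d y) y := by
    intro y
    have h1 : HasDerivAt (fun y : ℝ => (y - b)^2 + 4*a) (2*(y-b)) y := by
      have := (((hasDerivAt_id y).sub_const b).pow 2).add_const (4*a)
      simpa using this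
    have h2 := (Real.hasDerivAt_sqrt (hDpos y).ne').comp y h1
    refine h2.congr_deriv ?_
    have := (hdpos y).ne'
    field_simp [hd]
    ring
  have hx1' : ∀ y, HasDerivAt x₁ ((1 - (y - b)/d y)/2) y := by
    intro y
    have := (((hasDerivAt_const y b).add (hasDerivAt_id y)).sub (hd' y)).div_const 2
    exact this.congr_deriv (by ring)
  have hx2' : ∀ y, HasDerivAt x₂ ((1 + (y - b)/d y)/2) y := by
    intro y
    have := (((hasDerivAt_const y b).add (hasDerivAt_id y)).add (hd' y)).div_const 2
    exact this.congr_deriv (by ring)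
  have hq : ∀ y, -1 < (y - b)/d y ∧ (y - b)/d y < 1 := by
    intro y
    have h1 := (abs_lt.1 (habs y)).1
    have h2 := (abs_lt.1 (habs y)).2
    have h3 := hdpos y
    constructor
    · rw [neg_lt, ← neg_div]
      exact (div_lt_one h3).2 (by linarith)
    · exact (div_lt_one h3).2 h2
  have hc1pos : ∀ y, 0 < (1 - (y - b)/d y)/2 := fun y => by have := (hq y).2; linarith
  have hc2pos : ∀ y, 0 < (1 + (y - b)/d y)/2 := fun y => by have := (hq y).1; linarith
  -- u ∘ x₂ = id and u ∘ x₁ = id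
  have hx2b : ∀ y, 0 < x₂ y - b := by
    intro y
    have h1 := (abs_lt.1 (habs y)).1
    simp only [hx2]; linarith
  have hx1b : ∀ y, x₁ y - b < 0 := by
    intro y
    have h2 := (abs_lt.1 (habs y)).2
    simp only [hx1]; linarith
  have hu2 : ∀ y, x₂ y - a / (x₂ y - b) = y := by
    intro y
    have h : x₂ y - b ≠ 0 := (hx2b y).ne'
    have hs := hdsq y
    have key : a / (x₂ y - b) = x₂ y - y := by
      rw [div_eq_iff h]
      simp only [hx2]
      linear_combination -hs/4
    rw [key]; ring
  have hu1 : ∀ y, x₁ y - a / (x₁ y - b) = y := by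
    intro y
    have h : x₁ y - b ≠ 0 := (hx1b y).ne
    have hs := hdsq y
    have key : a / (x₁ y - b) = x₁ y - y := by
      rw [div_eq_iff h]
      simp only [hx1]
      linear_combination -hs/4
    rw [key]; ring
  -- ranges
  have hr2 : x₂ '' univ = Ioi b := by
    rw [image_univ]
    ext x
    constructor
    · rintro ⟨y, rfl⟩
      have := hx2b y
      exact mem_Ioi.2 (by linarith)
    · intro hx
      have hxb : 0 < x - b := sub_pos.2 hx
      have hne : x - b ≠ 0 := hxb.ne'
      refine ⟨x - a/(x-b), ?_⟩
      have key : d (x - a/(x-b)) = (x - b) + a/(x-b) := by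
        simp only [hd]
        rw [show (x - a/(x-b) - b)^2 + 4*a = ((x-b) + a/(x-b))^2 by
          field_simp; ring]
        exact Real.sqrt_sq (by positivity)
      simp only [hx2, key]
      field_simp
      ring
  have hr1 : x₁ '' univ = Iio b := by
    rw [image_univ]
    ext x
    constructor
    · rintro ⟨y, rfl⟩
      have := hx1b y
      exact mem_Iio.2 (by linarith)
    · intro hx
      have hxb : x - b < 0 := sub_neg.2 hx
      have hne : x - b ≠ 0 := hxb.ne
      refine ⟨x - a/(x-b), ?_⟩
      have key : d (x - a/(x-b)) = -((x - b) + a/(x-b)) := by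
        simp only [hd]
        rw [show (x - a/(x-b) - b)^2 + 4*a = (-((x-b) + a/(x-b)))^2 by
          field_simp; ring]
        refine Real.sqrt_sq ?_
        have h1 : a/(x-b) < 0 := div_neg_of_pos_of_neg ha hxb
        linarith
      simp only [hx1, key]
      field_simp
      ring
  -- injectivity
  have hinj2 : InjOn x₂ univ := by
    intro y _ z _ h
    have := hu2 y
    rw [h, hu2 z] at this
    exact this.symm
  have hinj1 : InjOn x₁ univ := by
    intro y _ z _ h
    have := hu1 y
    rw [h, hu1 z] at this
    exact this.symm
  -- change of variables
  have h2 : ∫ x in Ioi b, F (x - a / (x - b))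
      = ∫ y, ((1 + (y - b)/d y)/2) * F y := by
    rw [← hr2, integral_image_eq_integral_abs_deriv_smul MeasurableSet.univ
      (fun y _ => (hx2' y).hasDerivWithinAt) hinj2]
    rw [Measure.restrict_univ]
    congr 1
    ext y
    rw [hu2 y, abs_of_pos (hc2pos y), smul_eq_mul]
  have h1 : ∫ x in Iio b, F (x - a / (x - b))
      = ∫ y, ((1 - (y - b)/d y)/2) * F y := by
    rw [← hr1, integral_image_eq_integral_abs_deriv_smul MeasurableSet.univ
      (fun y _ => (hx1' y).hasDerivWithinAt) hinj1]
    rw [Measure.restrict_univ]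
    congr 1
    ext y
    rw [hu1 y, abs_of_pos (hc1pos y), smul_eq_mul]
  -- continuity of coefficients
  have hcd : Continuous d := by
    apply Real.continuous_sqrt.comp
    continuity
  have hcq : Continuous (fun y => (y - b)/d y) :=
    (continuous_id.sub continuous_const).div hcd (fun y => (hdpos y).ne')
  have hint1 : Integrable (fun y => ((1 - (y - b)/d y)/2) * F y) := by
    refine hInt.bdd_mul (c := 1) ?_ (Filter.Eventually.of_forall fun y => ?_)
    · exact (((continuous_const.sub hcq).div_const 2)).aestronglyMeasurable
    · rw [Real.norm_eq_abs, abs_of_pos (hc1pos y)]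
      have := (hq y).1
      linarith
  have hint2 : Integrable (fun y => ((1 + (y - b)/d y)/2) * F y) := by
    refine hInt.bdd_mul (c := 1) ?_ (Filter.Eventually.of_forall fun y => ?_)
    · exact (((continuous_const.add hcq).div_const 2)).aestronglyMeasurable
    · rw [Real.norm_eq_abs, abs_of_pos (hc2pos y)]
      have := (hq y).2
      linarith
  rw [h1, h2, ← integral_add hint1 hint2]
  congr 1
  ext y
  ring
end

section
/- Let u(x) = x - a₁/(x - b₁) - a₂/(x - b₂) with a₁, a₂ > 0, b₁ < b₂, and let F : ℝ → ℝ be continuous and integrable. Then the sum of the integrals of F(u(x)) over the three intervals (-∞, b₁), (b₁, b₂), (b₂, ∞) equals the integral of F over ℝ. -/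
open MeasureTheory Set Filter
open MeasureTheory Set Filter

/-- Inverse function package on one interval. -/
lemma interval_package (s : Set ℝ) (hso : IsOpen s) (hconv : Convex ℝ s)
    (u u' : ℝ → ℝ) (hder : ∀ x ∈ s, HasDerivAt u (u' x) x) (hpos : ∀ x ∈ s, 0 < u' x)
    (l₁ l₂ : Filter ℝ) [l₁.NeBot] [l₂.NeBot] (h₁ : l₁ ≤ Filter.principal s)
    (h₂ : l₂ ≤ Filter.principal s)
    (hbot : Tendsto u l₁ atBot) (htop : Tendsto u l₂ atTop) :
    ∃ g : ℝ → ℝ, (∀ y, g y ∈ s) ∧ (∀ y, u (g y) = y) ∧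
      (∀ y, HasDerivAt g ((u' (g y))⁻¹) y) ∧
      (∀ F : ℝ → ℝ, ∫ x in s, F (u x) = ∫ y, (u' (g y))⁻¹ * F y) := by
  have hcontOn : ContinuousOn u s := fun x hx => ((hder x hx).continuousAt).continuousWithinAt
  have hmono : StrictMonoOn u s := by
    apply strictMonoOn_of_deriv_pos hconv hcontOn
    intro x hx
    rw [hso.interior_eq] at hx
    rw [(hder x hx).deriv]
    exact hpos x hx
  -- surjectivity
  have hsurj : ∀ y, ∃ x ∈ s, u x = y := by
    intro y
    have himg : OrdConnected (u '' s) :=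
      ((hconv.isPreconnected).image u hcontOn).ordConnected
    have h1 : ∃ x, x ∈ s ∧ u x < y :=
      ((show ∀ᶠ x in l₁, x ∈ s from h₁ (mem_principal_self s)).and (hbot.eventually (eventually_lt_atBot y))).exists
    have h2 : ∃ x, x ∈ s ∧ y < u x :=
      ((show ∀ᶠ x in l₂, x ∈ s from h₂ (mem_principal_self s)).and (htop.eventually (eventually_gt_atTop y))).exists
    obtain ⟨x₁, hx₁, hx₁'⟩ := h1
    obtain ⟨x₂, hx₂, hx₂'⟩ := h2
    have : y ∈ u '' s := himg.out ⟨x₁, hx₁, rfl⟩ ⟨x₂, hx₂, rfl⟩ ⟨hx₁'.le, hx₂'.le⟩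
    obtain ⟨x, hx, hxy⟩ := this
    exact ⟨x, hx, hxy⟩
  choose g hgs hgu using hsurj
  have hginj : StrictMono g := by
    intro y y' h
    rcases lt_trichotomy (g y) (g y') with h' | h' | h'
    · exact h'
    · exact absurd h (by rw [← hgu y, ← hgu y', h']; exact lt_irrefl _)
    · have := hmono (hgs y') (hgs y) h'
      rw [hgu, hgu] at this
      exact absurd h (not_lt.2 this.le)
  have hcont : ∀ y, ContinuousAt g y := by
    intro y₀
    rw [ContinuousAt]
    apply tendsto_order.2
    constructor
    · intro b hb
      obtain ⟨ε, hε, hball⟩ := Metric.isOpen_iff.1 hso (g y₀) (hgs y₀)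
      set c := max b (g y₀ - ε / 2) with hc
      have hcs : c ∈ s := by
        apply hball
        rw [Metric.mem_ball, Real.dist_eq, abs_lt]
        constructor
        · have : g y₀ - ε / 2 ≤ c := le_max_right _ _
          linarith
        · have : c < g y₀ := max_lt hb (by linarith)
          linarith
      have hclt : c < g y₀ := max_lt hb (by linarith)
      have huc : u c < y₀ := by
        have := hmono hcs (hgs y₀) hclt
        rwa [hgu] at this
      filter_upwards [Ioi_mem_nhds huc] with y hy
      have : c < g y := by
        rw [← hmono.lt_iff_lt hcs (hgs y), hgu]
        exact hy
      exact lt_of_le_of_lt (le_max_left _ _) this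
    · intro b hb
      obtain ⟨ε, hε, hball⟩ := Metric.isOpen_iff.1 hso (g y₀) (hgs y₀)
      set c := min b (g y₀ + ε / 2) with hc
      have hcs : c ∈ s := by
        apply hball
        rw [Metric.mem_ball, Real.dist_eq, abs_lt]
        constructor
        · have : g y₀ < c := lt_min hb (by linarith)
          linarith
        · have : c ≤ g y₀ + ε / 2 := min_le_right _ _
          linarith
      have hclt : g y₀ < c := lt_min hb (by linarith)
      have huc : y₀ < u c := by
        have := hmono (hgs y₀) hcs hclt
        rwa [hgu] at this
      filter_upwards [Iio_mem_nhds huc] with y hy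
      have : g y < c := by
        rw [← hmono.lt_iff_lt (hgs y) hcs, hgu]
        exact hy
      exact lt_of_lt_of_le this (min_le_left _ _)
  have hgder : ∀ y, HasDerivAt g ((u' (g y))⁻¹) y := fun y =>
    HasDerivAt.of_local_left_inverse (hcont y) (hder _ (hgs y))
      (ne_of_gt (hpos _ (hgs y))) (Eventually.of_forall hgu)
  have hrange : g '' univ = s := by
    rw [image_univ]
    apply Subset.antisymm
    · rintro _ ⟨y, rfl⟩; exact hgs y
    · intro x hx
      refine ⟨u x, ?_⟩
      rcases lt_trichotomy (g (u x)) x with h' | h' | h'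
      · have := hmono (hgs _) hx h'
        rw [hgu] at this
        exact absurd this (lt_irrefl _)
      · exact h'
      · have := hmono hx (hgs _) h'
        rw [hgu] at this
        exact absurd this (lt_irrefl _)
  refine ⟨g, hgs, hgu, hgder, fun F => ?_⟩
  have h := integral_image_eq_integral_abs_deriv_smul (f := g)
    (f' := fun y => (u' (g y))⁻¹) MeasurableSet.univ
    (fun y _ => (hgder y).hasDerivWithinAt) (hginj.injective.injOn) (fun x => F (u x))
  rw [hrange, Measure.restrict_univ] at h
  rw [h]
  congr 1
  ext y
  rw [smul_eq_mul, hgu y, abs_of_pos (inv_pos.2 (hpos _ (hgs y)))]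

theorem aux_glasser (b₁ b₂ : ℝ) (hb : b₁ < b₂) (u u' : ℝ → ℝ)
    (hder : ∀ x, x ≠ b₁ → x ≠ b₂ → HasDerivAt u (u' x) x)
    (hpos : ∀ x, x ≠ b₁ → x ≠ b₂ → 1 ≤ u' x)
    (hbot0 : Tendsto u atBot atBot) (htop0 : Tendsto u (nhdsWithin b₁ (Iio b₁)) atTop)
    (hbot1 : Tendsto u (nhdsWithin b₁ (Ioi b₁)) atBot)
    (htop1 : Tendsto u (nhdsWithin b₂ (Iio b₂)) atTop)
    (hbot2 : Tendsto u (nhdsWithin b₂ (Ioi b₂)) atBot) (htop2 : Tendsto u atTop atTop)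
    (hvieta : ∀ y r₀ r₁ r₂, r₀ < b₁ → b₁ < r₁ → r₁ < b₂ → b₂ < r₂ →
      u r₀ = y → u r₁ = y → u r₂ = y → r₀ + r₁ + r₂ = y + b₁ + b₂)
    (F : ℝ → ℝ) (hF : Continuous F) (hInt : Integrable F) :
    (∫ x in Iio b₁, F (u x)) + (∫ x in Ioo b₁ b₂, F (u x)) + (∫ x in Ioi b₂, F (u x))
      = ∫ x, F x := by
  obtain ⟨g₀, hg₀s, hg₀u, hg₀d, hg₀i⟩ := interval_package (Iio b₁) isOpen_Iio (convex_Iio b₁)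
    u u' (fun x hx => hder x (ne_of_lt hx) (ne_of_lt (hx.trans hb)))
    (fun x hx => lt_of_lt_of_le one_pos (hpos x (ne_of_lt hx) (ne_of_lt (hx.trans hb))))
    atBot (nhdsWithin b₁ (Iio b₁)) (le_principal_iff.2 (Iio_mem_atBot b₁))
    (le_principal_iff.2 self_mem_nhdsWithin) hbot0 htop0
  obtain ⟨g₁, hg₁s, hg₁u, hg₁d, hg₁i⟩ := interval_package (Ioo b₁ b₂) isOpen_Ioo (convex_Ioo b₁ b₂)
    u u' (fun x hx => hder x (ne_of_gt hx.1) (ne_of_lt hx.2))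
    (fun x hx => lt_of_lt_of_le one_pos (hpos x (ne_of_gt hx.1) (ne_of_lt hx.2)))
    (nhdsWithin b₁ (Ioi b₁)) (nhdsWithin b₂ (Iio b₂))
    (le_principal_iff.2 (Ioo_mem_nhdsGT_of_mem ⟨le_refl b₁, hb⟩))
    (le_principal_iff.2 (Ioo_mem_nhdsLT_of_mem ⟨hb, le_refl b₂⟩)) hbot1 htop1
  obtain ⟨g₂, hg₂s, hg₂u, hg₂d, hg₂i⟩ := interval_package (Ioi b₂) isOpen_Ioi (convex_Ioi b₂)
    u u' (fun x hx => hder x (ne_of_gt (hb.trans hx)) (ne_of_gt hx))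
    (fun x hx => lt_of_lt_of_le one_pos (hpos x (ne_of_gt (hb.trans hx)) (ne_of_gt hx)))
    (nhdsWithin b₂ (Ioi b₂)) atTop (le_principal_iff.2 self_mem_nhdsWithin)
    (le_principal_iff.2 (Ioi_mem_atTop b₂)) hbot2 htop2
  have key : ∀ y, (u' (g₀ y))⁻¹ + (u' (g₁ y))⁻¹ + (u' (g₂ y))⁻¹ = 1 := by
    intro y₀
    have hsum : ∀ y, g₀ y + g₁ y + g₂ y = y + b₁ + b₂ := fun y =>
      hvieta y (g₀ y) (g₁ y) (g₂ y) (hg₀s y) (hg₁s y).1 (hg₁s y).2 (hg₂s y)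
        (hg₀u y) (hg₁u y) (hg₂u y)
    have hS : HasDerivAt (fun y => g₀ y + g₁ y + g₂ y)
        ((u' (g₀ y₀))⁻¹ + (u' (g₁ y₀))⁻¹ + (u' (g₂ y₀))⁻¹) y₀ :=
      ((hg₀d y₀).add (hg₁d y₀)).add (hg₂d y₀)
    have hone : HasDerivAt (fun y : ℝ => y + b₁ + b₂) 1 y₀ :=
      ((hasDerivAt_id y₀).add_const b₁).add_const b₂
    have hS' : HasDerivAt (fun y => g₀ y + g₁ y + g₂ y) 1 y₀ :=
      hone.congr_of_eventuallyEq (Eventually.of_forall hsum)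
    exact hS.unique hS'
  have hmain : ∀ (g : ℝ → ℝ), (∀ y, g y ≠ b₁) → (∀ y, g y ≠ b₂) →
      (∀ y, HasDerivAt g ((u' (g y))⁻¹) y) →
      Integrable (fun y => (u' (g y))⁻¹ * F y) := by
    intro g hne₁ hne₂ hgd
    have hds : ∀ y, (u' (g y))⁻¹ = deriv g y := fun y => ((hgd y).deriv).symm
    apply hInt.mono
    · have : (fun y => (u' (g y))⁻¹ * F y) = fun y => deriv g y * F y :=
        funext fun y => by rw [hds]
      rw [this]
      exact ((measurable_deriv g).mul hF.measurable).aestronglyMeasurable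
    · apply Eventually.of_forall
      intro y
      have h1 : 1 ≤ u' (g y) := hpos _ (hne₁ y) (hne₂ y)
      have h2 : 0 < (u' (g y))⁻¹ := inv_pos.2 (lt_of_lt_of_le one_pos h1)
      rw [Real.norm_eq_abs, Real.norm_eq_abs, abs_mul]
      calc |(u' (g y))⁻¹| * |F y| ≤ 1 * |F y| := by
            apply mul_le_mul_of_nonneg_right _ (abs_nonneg _)
            rw [abs_of_pos h2]
            exact inv_le_one_of_one_le₀ h1
        _ = |F y| := one_mul _
  have hint₀ := hmain g₀ (fun y => ne_of_lt (hg₀s y)) (fun y => ne_of_lt ((hg₀s y).trans hb)) hg₀d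
  have hint₁ := hmain g₁ (fun y => ne_of_gt (hg₁s y).1) (fun y => ne_of_lt (hg₁s y).2) hg₁d
  have hint₂ := hmain g₂ (fun y => ne_of_gt (hb.trans (hg₂s y))) (fun y => ne_of_gt (hg₂s y)) hg₂d
  have hint01 : Integrable (fun y => (u' (g₀ y))⁻¹ * F y + (u' (g₁ y))⁻¹ * F y) :=
    hint₀.add hint₁
  have e1 : (∫ y, (u' (g₀ y))⁻¹ * F y) + (∫ y, (u' (g₁ y))⁻¹ * F y)
      = ∫ y, ((u' (g₀ y))⁻¹ * F y + (u' (g₁ y))⁻¹ * F y) := (integral_add hint₀ hint₁).symm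
  have e2 : (∫ y, ((u' (g₀ y))⁻¹ * F y + (u' (g₁ y))⁻¹ * F y)) + (∫ y, (u' (g₂ y))⁻¹ * F y)
      = ∫ y, ((u' (g₀ y))⁻¹ * F y + (u' (g₁ y))⁻¹ * F y + (u' (g₂ y))⁻¹ * F y) :=
    (integral_add hint01 hint₂).symm
  rw [hg₀i F, hg₁i F, hg₂i F, e1, e2]
  apply integral_congr_ae
  apply Eventually.of_forall
  intro y
  calc (u' (g₀ y))⁻¹ * F y + (u' (g₁ y))⁻¹ * F y + (u' (g₂ y))⁻¹ * F y
      = ((u' (g₀ y))⁻¹ + (u' (g₁ y))⁻¹ + (u' (g₂ y))⁻¹) * F y := by ring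
    _ = 1 * F y := by rw [key y]
    _ = F y := one_mul _


section limits

lemma div_tendsto_zero_atTop (a b : ℝ) : Tendsto (fun x => a / (x - b)) atTop (nhds 0) := by
  have h : Tendsto (fun x : ℝ => x - b) atTop atTop := by
    simpa [sub_eq_add_neg] using tendsto_atTop_add_const_right atTop (-b) tendsto_id
  have h2 := h.inv_tendsto_atTop
  have h3 := h2.const_mul a
  rw [mul_zero] at h3
  refine h3.congr fun x => ?_
  simp [div_eq_mul_inv]

lemma div_tendsto_zero_atBot (a b : ℝ) : Tendsto (fun x => a / (x - b)) atBot (nhds 0) := by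
  have h : Tendsto (fun x : ℝ => b - x) atBot atTop := by
    simpa [sub_eq_add_neg] using tendsto_atTop_add_const_left atBot b tendsto_neg_atBot_atTop
  have h2 := h.inv_tendsto_atTop
  have h3 := h2.const_mul (-a)
  rw [mul_zero] at h3
  refine h3.congr fun x => ?_
  simp only [Pi.inv_apply]
  rw [div_eq_mul_inv, show x - b = -(b - x) by ring, inv_neg]
  ring

lemma neg_div_tendsto_atTop (a b : ℝ) (ha : 0 < a) :
    Tendsto (fun x => -(a / (x - b))) (nhdsWithin b (Iio b)) atTop := by
  have h1 : Tendsto (fun x : ℝ => b - x) (nhdsWithin b (Iio b)) (nhdsWithin 0 (Ioi 0)) := by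
    apply tendsto_nhdsWithin_iff.2
    constructor
    · have h0 : Continuous (fun x : ℝ => b - x) := continuous_const.sub continuous_id
      have := h0.tendsto b
      rw [sub_self] at this
      exact this.mono_left nhdsWithin_le_nhds
    · filter_upwards [self_mem_nhdsWithin] with x hx
      simpa using hx
  have h2 := tendsto_inv_nhdsGT_zero.comp h1
  have h3 := h2.const_mul_atTop ha
  refine h3.congr fun x => ?_
  rw [Function.comp_apply, show x - b = -(b - x) by ring, div_neg, neg_neg, div_eq_mul_inv]

lemma neg_div_tendsto_atBot (a b : ℝ) (ha : 0 < a) :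
    Tendsto (fun x => -(a / (x - b))) (nhdsWithin b (Ioi b)) atBot := by
  have h1 : Tendsto (fun x : ℝ => x - b) (nhdsWithin b (Ioi b)) (nhdsWithin 0 (Ioi 0)) := by
    apply tendsto_nhdsWithin_iff.2
    constructor
    · have h0 : Continuous (fun x : ℝ => x - b) := continuous_id.sub continuous_const
      have := h0.tendsto b
      rw [sub_self] at this
      exact this.mono_left nhdsWithin_le_nhds
    · filter_upwards [self_mem_nhdsWithin] with x hx
      simpa [sub_pos] using hx
  have h2 := tendsto_inv_nhdsGT_zero.comp h1
  have h3 := h2.const_mul_atTop ha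
  have h4 := tendsto_neg_atTop_atBot.comp h3
  refine h4.congr fun x => ?_
  rw [Function.comp_apply, Function.comp_apply, div_eq_mul_inv]

end limits

theorem meromorphic_reduction_two_poles (a₁ a₂ b₁ b₂ : ℝ) (ha₁ : 0 < a₁) (ha₂ : 0 < a₂)
    (hb : b₁ < b₂) (F : ℝ → ℝ) (hF : Continuous F) (hInt : Integrable F) :
    (∫ x in Iio b₁, F (x - a₁ / (x - b₁) - a₂ / (x - b₂))) +
    (∫ x in Ioo b₁ b₂, F (x - a₁ / (x - b₁) - a₂ / (x - b₂))) +
    (∫ x in Ioi b₂, F (x - a₁ / (x - b₁) - a₂ / (x - b₂)))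
      = ∫ x, F x := by
  set u : ℝ → ℝ := fun x => x - a₁ / (x - b₁) - a₂ / (x - b₂) with hu
  set u' : ℝ → ℝ := fun x => 1 + a₁ / (x - b₁) ^ 2 + a₂ / (x - b₂) ^ 2 with hu'
  have hder : ∀ x, x ≠ b₁ → x ≠ b₂ → HasDerivAt u (u' x) x := by
    intro x h1 h2
    have hn1 : x - b₁ ≠ 0 := sub_ne_zero.2 h1
    have hn2 : x - b₂ ≠ 0 := sub_ne_zero.2 h2
    have d1 : HasDerivAt (fun x => a₁ / (x - b₁))
        ((0 * (x - b₁) - a₁ * 1) / (x - b₁) ^ 2) x :=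
      (hasDerivAt_const x a₁).div ((hasDerivAt_id x).sub_const b₁) hn1
    have d2 : HasDerivAt (fun x => a₂ / (x - b₂))
        ((0 * (x - b₂) - a₂ * 1) / (x - b₂) ^ 2) x :=
      (hasDerivAt_const x a₂).div ((hasDerivAt_id x).sub_const b₂) hn2
    have : HasDerivAt (fun x => x - a₁ / (x - b₁) - a₂ / (x - b₂)) _ x := ((hasDerivAt_id x).sub d1).sub d2
    convert this using 1
    rw [hu']
    field_simp
    ring
  have hpos : ∀ x, x ≠ b₁ → x ≠ b₂ → 1 ≤ u' x := by
    intro x h1 h2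
    have e1 : 0 ≤ a₁ / (x - b₁) ^ 2 := div_nonneg ha₁.le (sq_nonneg _)
    have e2 : 0 ≤ a₂ / (x - b₂) ^ 2 := div_nonneg ha₂.le (sq_nonneg _)
    rw [hu']
    dsimp only
    linarith
  -- limits
  have hbot0 : Tendsto u atBot atBot := by
    have hr : Tendsto (fun x => -(a₁ / (x - b₁)) + -(a₂ / (x - b₂))) atBot (nhds 0) := by
      have := (div_tendsto_zero_atBot a₁ b₁).neg.add (div_tendsto_zero_atBot a₂ b₂).neg
      simpa using this
    have := Filter.Tendsto.atBot_add tendsto_id hr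
    refine this.congr fun x => ?_
    rw [hu]; simp only [id_eq]; ring
  have htop2 : Tendsto u atTop atTop := by
    have hr : Tendsto (fun x => -(a₁ / (x - b₁)) + -(a₂ / (x - b₂))) atTop (nhds 0) := by
      have := (div_tendsto_zero_atTop a₁ b₁).neg.add (div_tendsto_zero_atTop a₂ b₂).neg
      simpa using this
    have := Filter.Tendsto.atTop_add tendsto_id hr
    refine this.congr fun x => ?_
    rw [hu]; simp only [id_eq]; ring
  have hrest1 : ∀ c : ℝ, c ≠ b₂ → Tendsto (fun x => x - a₂ / (x - b₂)) (nhds c)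
      (nhds (c - a₂ / (c - b₂))) := by
    intro c hc
    exact (continuousAt_id.sub ((continuousAt_const).div
      (continuousAt_id.sub continuousAt_const) (sub_ne_zero.2 hc)))
  have hrest2 : ∀ c : ℝ, c ≠ b₁ → Tendsto (fun x => x - a₁ / (x - b₁)) (nhds c)
      (nhds (c - a₁ / (c - b₁))) := by
    intro c hc
    exact (continuousAt_id.sub ((continuousAt_const).div
      (continuousAt_id.sub continuousAt_const) (sub_ne_zero.2 hc)))
  have htop0 : Tendsto u (nhdsWithin b₁ (Iio b₁)) atTop := by
    have h1 := neg_div_tendsto_atTop a₁ b₁ ha₁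
    have h2 := (hrest1 b₁ hb.ne).mono_left (nhdsWithin_le_nhds (s := Iio b₁))
    have := Filter.Tendsto.atTop_add h1 h2
    refine this.congr fun x => ?_
    rw [hu]; simp only [id_eq]; ring
  have hbot1 : Tendsto u (nhdsWithin b₁ (Ioi b₁)) atBot := by
    have h1 := neg_div_tendsto_atBot a₁ b₁ ha₁
    have h2 := (hrest1 b₁ hb.ne).mono_left (nhdsWithin_le_nhds (s := Ioi b₁))
    have := Filter.Tendsto.atBot_add h1 h2
    refine this.congr fun x => ?_
    rw [hu]; simp only [id_eq]; ring
  have htop1 : Tendsto u (nhdsWithin b₂ (Iio b₂)) atTop := by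
    have h1 := neg_div_tendsto_atTop a₂ b₂ ha₂
    have h2 := (hrest2 b₂ hb.ne').mono_left (nhdsWithin_le_nhds (s := Iio b₂))
    have := Filter.Tendsto.atTop_add h1 h2
    refine this.congr fun x => ?_
    rw [hu]; simp only [id_eq]; ring
  have hbot2 : Tendsto u (nhdsWithin b₂ (Ioi b₂)) atBot := by
    have h1 := neg_div_tendsto_atBot a₂ b₂ ha₂
    have h2 := (hrest2 b₂ hb.ne').mono_left (nhdsWithin_le_nhds (s := Ioi b₂))
    have := Filter.Tendsto.atBot_add h1 h2
    refine this.congr fun x => ?_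
    rw [hu]; simp only [id_eq]; ring
  -- Vieta
  have hvieta : ∀ y r₀ r₁ r₂, r₀ < b₁ → b₁ < r₁ → r₁ < b₂ → b₂ < r₂ →
      u r₀ = y → u r₁ = y → u r₂ = y → r₀ + r₁ + r₂ = y + b₁ + b₂ := by
    intro y r₀ r₁ r₂ h0 h1 h2 h3 hu₀ hu₁ hu₂
    rw [hu] at hu₀ hu₁ hu₂
    dsimp only at hu₀ hu₁ hu₂
    have hP : ∀ r : ℝ, r ≠ b₁ → r ≠ b₂ → r - a₁ / (r - b₁) - a₂ / (r - b₂) = y →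
        (r - y) * (r - b₁) * (r - b₂) - a₁ * (r - b₂) - a₂ * (r - b₁) = 0 := by
      intro r hr1 hr2 hr
      have e1 : a₁ / (r - b₁) * (r - b₁) = a₁ := div_mul_cancel₀ a₁ (sub_ne_zero.2 hr1)
      have e2 : a₂ / (r - b₂) * (r - b₂) = a₂ := div_mul_cancel₀ a₂ (sub_ne_zero.2 hr2)
      linear_combination (r - b₁) * (r - b₂) * hr + (r - b₂) * e1 + (r - b₁) * e2
    have hP₀ := hP r₀ (ne_of_lt h0) (ne_of_lt (h0.trans hb)) hu₀
    have hP₁ := hP r₁ (ne_of_gt h1) (ne_of_lt h2) hu₁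
    have hP₂ := hP r₂ (ne_of_gt (hb.trans h3)) (ne_of_gt h3) hu₂
    have hd10 : r₁ - r₀ ≠ 0 := sub_ne_zero.2 (ne_of_gt (h0.trans h1))
    have hd21 : r₂ - r₁ ≠ 0 := sub_ne_zero.2 (ne_of_gt (h2.trans h3))
    have hd20 : r₂ - r₀ ≠ 0 := sub_ne_zero.2 (ne_of_gt ((h0.trans hb).trans h3))
    have hE10 : r₁ ^ 2 + r₁ * r₀ + r₀ ^ 2 - (y + b₁ + b₂) * (r₁ + r₀) +
        (b₁ * b₂ + y * (b₁ + b₂) - a₁ - a₂) = 0 := by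
      apply mul_left_cancel₀ hd10
      rw [mul_zero]
      linear_combination hP₁ - hP₀
    have hE21 : r₂ ^ 2 + r₂ * r₁ + r₁ ^ 2 - (y + b₁ + b₂) * (r₂ + r₁) +
        (b₁ * b₂ + y * (b₁ + b₂) - a₁ - a₂) = 0 := by
      apply mul_left_cancel₀ hd21
      rw [mul_zero]
      linear_combination hP₂ - hP₁
    have hfin : (r₂ - r₀) * (r₀ + r₁ + r₂ - (y + b₁ + b₂)) = 0 := by
      linear_combination hE21 - hE10
    have := (mul_eq_zero.1 hfin).resolve_left hd20
    linarith
  exact aux_glasser b₁ b₂ hb u u' hder hpos hbot0 htop0 hbot1 htop1 hbot2 htop2 hvieta F hF hInt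
end

section
/- Let u(x) = x - a/(x - b) with a > 0, b = 0, and let F : ℝ → ℝ be continuous with x ↦ x²·F(x) and F integrable on ℝ. Then the sum over the two intervals (-∞, 0), (0, ∞) of the integrals of x²·F(u(x)) dx equals the integral over ℝ of (x² + a)·F(x) dx. -/
open MeasureTheory Set

set_option maxHeartbeats 1600000 in
theorem meromorphic_reduction_weight_sq (a : ℝ) (ha : 0 < a)
    (F : ℝ → ℝ) (hF : Continuous F)
    (hInt : Integrable F) (hx2Int : Integrable (fun x => x ^ 2 * F x)) :
    (∫ x in Iio (0:ℝ), x ^ 2 * F (x - a / x)) + (∫ x in Ioi (0:ℝ), x ^ 2 * F (x - a / x))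
      = ∫ x, (x ^ 2 + a) * F x := by
  set u : ℝ → ℝ := fun x => x - a / x with hu_def
  set s : ℝ → ℝ := fun y => Real.sqrt (y ^ 2 + 4 * a) with hs_def
  have hs_pos : ∀ y, 0 < s y := fun y => Real.sqrt_pos.2 (by positivity)
  have hs_sq : ∀ y, s y ^ 2 = y ^ 2 + 4 * a := fun y => Real.sq_sqrt (by positivity)
  have hs_gt : ∀ y, |y| < s y := by
    intro y
    refine lt_of_pow_lt_pow_left₀ 2 (hs_pos y).le ?_
    rw [hs_sq, sq_abs]; linarith
  have hys_pos : ∀ y, 0 < y + s y := by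
    intro y
    have h1 : -y ≤ |y| := neg_le_abs y
    have := hs_gt y; linarith
  have hsy_pos : ∀ y, 0 < s y - y := by
    intro y
    have h1 : y ≤ |y| := le_abs_self y
    have := hs_gt y; linarith
  have hs_cont : Continuous s := Real.continuous_sqrt.comp (by continuity)
  set φ : ℝ → ℝ := fun y => (y + s y) ^ 3 / (8 * s y) with hφ_def
  set ψ : ℝ → ℝ := fun y => (s y - y) ^ 3 / (8 * s y) with hψ_def
  have hsum : ∀ y, φ y + ψ y = y ^ 2 + a := by
    intro y
    have h8 : (8 : ℝ) * s y ≠ 0 := by positivity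
    simp only [hφ_def, hψ_def]
    rw [← add_div, div_eq_iff h8]
    linear_combination (2 * s y) * hs_sq y
  have hφ_nonneg : ∀ y, 0 ≤ φ y := fun y => by
    have h1 := hys_pos y; have h2 := hs_pos y; positivity
  have hψ_nonneg : ∀ y, 0 ≤ ψ y := fun y => by
    have h1 := hsy_pos y; have h2 := hs_pos y; positivity
  have hφ_cont : Continuous φ := by
    apply Continuous.div
    · continuity
    · continuity
    · intro y; have := hs_pos y; positivity
  have hψ_cont : Continuous ψ := by
    apply Continuous.div
    · continuity
    · continuity
    · intro y; have := hs_pos y; positivity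
  -- derivative of u
  have hderiv : ∀ x : ℝ, x ≠ 0 → HasDerivAt u (1 + a / x ^ 2) x := by
    intro x hx
    have h1 : HasDerivAt (fun x : ℝ => x⁻¹) (-(x ^ 2)⁻¹) x := hasDerivAt_inv hx
    have h2 : HasDerivAt (fun x : ℝ => a * x⁻¹) (a * -(x ^ 2)⁻¹) x := h1.const_mul a
    have h3 : HasDerivAt (fun x : ℝ => x - a * x⁻¹) (1 - a * -(x ^ 2)⁻¹) x :=
      (hasDerivAt_id x).sub h2
    have h4 : HasDerivAt u (1 - a * -(x ^ 2)⁻¹) x := by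
      rw [hu_def]; simpa [div_eq_mul_inv] using h3
    convert h4 using 1
    field_simp
    ring
  -- injectivity on a sign-definite set
  have hinj : ∀ x y : ℝ, x ≠ 0 → y ≠ 0 → 0 < x * y → u x = u y → x = y := by
    intro x y hx hy hxy h
    rw [hu_def] at h; simp only at h
    have key : (x - y) * (x * y + a) = 0 := by
      field_simp at h
      nlinarith [h]
    have h2 : x * y + a > 0 := by linarith
    have := mul_eq_zero.1 key
    rcases this with h3 | h3
    · linarith
    · linarith
  have hsolve : ∀ x y : ℝ, x ≠ 0 → x ^ 2 - y * x - a = 0 → u x = y := by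
    intro x y hx h
    have ha' : a = x ^ 2 - y * x := by linarith
    rw [hu_def]; simp only [ha']
    field_simp
    ring
  -- sqrt identities along u
  have hsqrt_pos : ∀ x : ℝ, 0 < x → s (u x) = x + a / x := by
    intro x hx
    have hx0 : x ≠ 0 := ne_of_gt hx
    have h1 : (u x) ^ 2 + 4 * a = (x + a / x) ^ 2 := by
      rw [hu_def]; field_simp; ring
    rw [hs_def]; simp only [h1]
    exact Real.sqrt_sq (by positivity)
  have hsqrt_neg : ∀ x : ℝ, x < 0 → s (u x) = -(x + a / x) := by
    intro x hx
    have hx0 : x ≠ 0 := ne_of_lt hx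
    have h1 : (u x) ^ 2 + 4 * a = (-(x + a / x)) ^ 2 := by
      rw [hu_def]; field_simp; ring
    have h2 : 0 < -(x + a / x) := by
      have : a / x < 0 := div_neg_of_pos_of_neg ha hx
      linarith
    rw [hs_def]; simp only [h1]
    exact Real.sqrt_sq h2.le
  -- positive branch
  have hpos : (∫ x in Ioi (0:ℝ), x ^ 2 * F (u x)) = ∫ y, φ y * F y := by
    have himg : u '' Ioi 0 = univ := by
      apply eq_univ_of_forall
      intro y
      refine ⟨(y + s y) / 2, by simpa using half_pos (hys_pos y), ?_⟩
      exact hsolve _ y (ne_of_gt (half_pos (hys_pos y))) (by linear_combination (1/4) * hs_sq y)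
    have hder : ∀ x ∈ Ioi (0:ℝ), HasDerivWithinAt u (1 + a / x ^ 2) (Ioi 0) x :=
      fun x hx => (hderiv x (ne_of_gt hx)).hasDerivWithinAt
    have hinj' : InjOn u (Ioi 0) := fun x hx y hy h =>
      hinj x y (ne_of_gt hx) (ne_of_gt hy) (mul_pos hx hy) h
    have := integral_image_eq_integral_abs_deriv_smul measurableSet_Ioi hder hinj'
      (fun y => φ y * F y)
    rw [himg, MeasureTheory.setIntegral_univ] at this
    rw [this]
    apply setIntegral_congr_fun measurableSet_Ioi
    intro x hx
    have hx0 : (0:ℝ) < x := hx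
    have hxne : x ≠ 0 := ne_of_gt hx0
    have hxa : 0 < x + a / x := by positivity
    have habs : |1 + a / x ^ 2| = 1 + a / x ^ 2 := abs_of_pos (by positivity)
    have hφu : φ (u x) = x ^ 4 / (x ^ 2 + a) := by
      simp only [hφ_def]
      rw [hsqrt_pos x hx0]
      rw [hu_def]; simp only
      rw [show x - a / x + (x + a / x) = 2 * x by ring]
      rw [div_eq_div_iff (by positivity) (by positivity)]
      field_simp
      ring
    simp only [smul_eq_mul]
    rw [habs, hφu]
    rw [show (1 + a / x ^ 2) * (x ^ 4 / (x ^ 2 + a) * F (u x))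
        = ((1 + a / x ^ 2) * (x ^ 4 / (x ^ 2 + a))) * F (u x) by ring]
    congr 1
    field_simp
  -- negative branch
  have hneg : (∫ x in Iio (0:ℝ), x ^ 2 * F (u x)) = ∫ y, ψ y * F y := by
    have himg : u '' Iio 0 = univ := by
      apply eq_univ_of_forall
      intro y
      have hneg2 : (y - s y) / 2 < 0 := by
        have := hsy_pos y; linarith
      refine ⟨(y - s y) / 2, by simpa using hneg2, ?_⟩
      exact hsolve _ y (ne_of_lt hneg2) (by linear_combination (1/4) * hs_sq y)
    have hder : ∀ x ∈ Iio (0:ℝ), HasDerivWithinAt u (1 + a / x ^ 2) (Iio 0) x :=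
      fun x hx => (hderiv x (ne_of_lt hx)).hasDerivWithinAt
    have hinj' : InjOn u (Iio 0) := fun x hx y hy h =>
      hinj x y (ne_of_lt hx) (ne_of_lt hy) (mul_pos_of_neg_of_neg hx hy) h
    have := integral_image_eq_integral_abs_deriv_smul measurableSet_Iio hder hinj'
      (fun y => ψ y * F y)
    rw [himg, MeasureTheory.setIntegral_univ] at this
    rw [this]
    apply setIntegral_congr_fun measurableSet_Iio
    intro x hx
    have hx0 : x < 0 := hx
    have hxne : x ≠ 0 := ne_of_lt hx0
    have hxa : x + a / x < 0 := by
      have : a / x < 0 := div_neg_of_pos_of_neg ha hx0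
      linarith
    have habs : |1 + a / x ^ 2| = 1 + a / x ^ 2 := abs_of_pos (by positivity)
    have hψu : ψ (u x) = x ^ 4 / (x ^ 2 + a) := by
      simp only [hψ_def]
      rw [hsqrt_neg x hx0]
      rw [hu_def]; simp only
      rw [show -(x + a / x) - (x - a / x) = -(2 * x) by ring]
      have h8 : (0:ℝ) < 8 * -(x + a / x) := by nlinarith
      rw [div_eq_div_iff h8.ne' (by positivity)]
      field_simp
      ring
    simp only [smul_eq_mul]
    rw [habs, hψu]
    rw [show (1 + a / x ^ 2) * (x ^ 4 / (x ^ 2 + a) * F (u x))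
        = ((1 + a / x ^ 2) * (x ^ 4 / (x ^ 2 + a))) * F (u x) by ring]
    congr 1
    field_simp
  -- integrability
  have hbound : Integrable (fun y => (y ^ 2 + a) * F y) := by
    have h1 : Integrable (fun y => y ^ 2 * F y + a * F y) := hx2Int.add (hInt.const_mul a)
    convert h1 using 2 with y
    ring
  have hφInt : Integrable (fun y => φ y * F y) := by
    refine hbound.mono ((hφ_cont.mul hF).aestronglyMeasurable) ?_
    filter_upwards with y
    have h1 : |φ y * F y| ≤ |(y ^ 2 + a) * F y| := by
      rw [abs_mul, abs_mul]
      apply mul_le_mul_of_nonneg_right _ (abs_nonneg _)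
      rw [abs_of_nonneg (hφ_nonneg y), abs_of_nonneg (by nlinarith : (0:ℝ) ≤ y ^ 2 + a)]
      have := hψ_nonneg y
      linarith [hsum y]
    simpa [abs_mul] using h1
  have hψInt : Integrable (fun y => ψ y * F y) := by
    refine hbound.mono ((hψ_cont.mul hF).aestronglyMeasurable) ?_
    filter_upwards with y
    have h1 : |ψ y * F y| ≤ |(y ^ 2 + a) * F y| := by
      rw [abs_mul, abs_mul]
      apply mul_le_mul_of_nonneg_right _ (abs_nonneg _)
      rw [abs_of_nonneg (hψ_nonneg y), abs_of_nonneg (by nlinarith : (0:ℝ) ≤ y ^ 2 + a)]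
      have := hφ_nonneg y
      linarith [hsum y]
    simpa [abs_mul] using h1
  calc (∫ x in Iio (0:ℝ), x ^ 2 * F (u x)) + (∫ x in Ioi (0:ℝ), x ^ 2 * F (u x))
      = (∫ y, ψ y * F y) + ∫ y, φ y * F y := by rw [hpos, hneg]
    _ = ∫ y, (ψ y * F y + φ y * F y) := (integral_add hψInt hφInt).symm
    _ = ∫ x, (x ^ 2 + a) * F x := by
        apply integral_congr_ae
        filter_upwards with y
        rw [← add_mul, add_comm (ψ y), hsum y]
end

section
/- Let u(x) = x - a/x with a > 0, and let F : ℝ → ℝ be continuous with F, x·F(x), and x³·F(x) all integrable on ℝ. Then the principal-value integral of x³·F(u(x)) over ℝ equals the integral over ℝ of (x³ + 2a x)·F(x) dx. -/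
open MeasureTheory Set

noncomputable def sg (a t : ℝ) : ℝ := Real.sqrt (t^2 + 4*a)

lemma sg_pos {a : ℝ} (ha : 0 < a) (t : ℝ) : 0 < sg a t :=
  Real.sqrt_pos.2 (by nlinarith)

lemma sg_sq {a : ℝ} (ha : 0 < a) (t : ℝ) : sg a t ^ 2 = t^2 + 4*a :=
  Real.sq_sqrt (by nlinarith)

lemma abs_lt_sg {a : ℝ} (ha : 0 < a) (t : ℝ) : |t| < sg a t := by
  have h1 := sg_pos ha t
  have h2 := sg_sq ha t
  nlinarith [abs_nonneg t, sq_abs t]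

lemma sg_cont {a : ℝ} : Continuous (sg a) := by
  exact Real.continuous_sqrt.comp (by continuity)

-- deriv of u on nonzero x
lemma u_hasDeriv {a x : ℝ} (hx : x ≠ 0) :
    HasDerivAt (fun x : ℝ => x - a / x) (1 + a / x^2) x := by
  have h := ((hasDerivAt_inv hx).const_mul a)
  have h2 := (hasDerivAt_id x).sub h
  rw [show (fun x : ℝ => x - a / x) = id - fun y => a * y⁻¹ by funext y; simp [div_eq_mul_inv],
    show (1 + a / x^2) = 1 - a * -(x ^ 2)⁻¹ by ring]
  exact h2

lemma u_injOn_pos {a : ℝ} (ha : 0 < a) : InjOn (fun x : ℝ => x - a / x) (Ioi 0) := by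
  intro x hx y hy h
  simp only [mem_Ioi] at hx hy
  have hx0 : x ≠ 0 := ne_of_gt hx
  have hy0 : y ≠ 0 := ne_of_gt hy
  simp only at h
  have h3 : (x - y) * (x*y + a) = 0 := by
    field_simp at h
    linear_combination h
  rcases mul_eq_zero.1 h3 with h4 | h4
  · linarith [sub_eq_zero.1 h4]
  · nlinarith [mul_pos hx hy]

lemma u_injOn_neg {a : ℝ} (ha : 0 < a) : InjOn (fun x : ℝ => x - a / x) (Iio 0) := by
  intro x hx y hy h
  simp only [mem_Iio] at hx hy
  have hx0 : x ≠ 0 := ne_of_lt hx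
  have hy0 : y ≠ 0 := ne_of_lt hy
  simp only at h
  have h3 : (x - y) * (x*y + a) = 0 := by
    field_simp at h
    linear_combination h
  rcases mul_eq_zero.1 h3 with h4 | h4
  · linarith [sub_eq_zero.1 h4]
  · nlinarith [mul_pos_of_neg_of_neg hx hy]

lemma u_image_pos {a : ℝ} (ha : 0 < a) : (fun x : ℝ => x - a / x) '' (Ioi 0) = univ := by
  refine eq_univ_of_forall fun t => ?_
  have hσ := sg_pos ha t
  have hσ2 := sg_sq ha t
  have habs := abs_lt_sg ha t
  have hx : 0 < (t + sg a t)/2 := by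
    have := neg_abs_le t
    nlinarith
  refine ⟨(t + sg a t)/2, hx, ?_⟩
  have hne : t + sg a t ≠ 0 := by nlinarith [neg_abs_le t]
  simp only
  field_simp
  linear_combination hσ2

lemma u_image_neg {a : ℝ} (ha : 0 < a) : (fun x : ℝ => x - a / x) '' (Iio 0) = univ := by
  refine eq_univ_of_forall fun t => ?_
  have hσ := sg_pos ha t
  have hσ2 := sg_sq ha t
  have habs := abs_lt_sg ha t
  have hx : (t - sg a t)/2 < 0 := by
    have := le_abs_self t
    nlinarith
  refine ⟨(t - sg a t)/2, hx, ?_⟩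
  have hne : t - sg a t ≠ 0 := by nlinarith [le_abs_self t]
  simp only
  field_simp
  linear_combination hσ2

lemma subst_pos {a : ℝ} (ha : 0 < a) (F : ℝ → ℝ) :
    ∫ x in Ioi (0:ℝ), x^3 * F (x - a/x)
      = ∫ t, ((t + sg a t)/2)^3 * ((1 + t / sg a t)/2) * F t := by
  have hderiv : ∀ x ∈ Ioi (0:ℝ), HasDerivWithinAt (fun x : ℝ => x - a/x) (1 + a/x^2) (Ioi 0) x :=
    fun x hx => (u_hasDeriv (ne_of_gt hx)).hasDerivWithinAt
  have key := integral_image_eq_integral_abs_deriv_smul measurableSet_Ioi hderiv (u_injOn_pos ha)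
      (fun t => ((t + sg a t)/2)^3 * ((1 + t / sg a t)/2) * F t)
  rw [u_image_pos ha, Measure.restrict_univ] at key
  rw [key]
  apply setIntegral_congr_fun measurableSet_Ioi
  intro x hx
  simp only [smul_eq_mul]
  have hx0 : (0:ℝ) < x := hx
  have hxne : x ≠ 0 := ne_of_gt hx0
  have hsum : 0 < x + a/x := by positivity
  have hsne : x + a/x ≠ 0 := ne_of_gt hsum
  have hs : sg a (x - a/x) = x + a/x := by
    have h2 : (x - a/x)^2 + 4*a = (x+a/x)^2 := by field_simp; ring
    rw [sg, h2, Real.sqrt_sq hsum.le]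
  rw [hs]
  have h1 : |1 + a/x^2| = 1 + a/x^2 := abs_of_pos (by positivity)
  rw [h1]
  field_simp
  ring

lemma subst_neg {a : ℝ} (ha : 0 < a) (F : ℝ → ℝ) :
    ∫ x in Iio (0:ℝ), x^3 * F (x - a/x)
      = ∫ t, ((t - sg a t)/2)^3 * ((1 - t / sg a t)/2) * F t := by
  have hderiv : ∀ x ∈ Iio (0:ℝ), HasDerivWithinAt (fun x : ℝ => x - a/x) (1 + a/x^2) (Iio 0) x :=
    fun x hx => (u_hasDeriv (ne_of_lt hx)).hasDerivWithinAt
  have key := integral_image_eq_integral_abs_deriv_smul measurableSet_Iio hderiv (u_injOn_neg ha)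
      (fun t => ((t - sg a t)/2)^3 * ((1 - t / sg a t)/2) * F t)
  rw [u_image_neg ha, Measure.restrict_univ] at key
  rw [key]
  apply setIntegral_congr_fun measurableSet_Iio
  intro x hx
  simp only [smul_eq_mul]
  have hx0 : x < 0 := hx
  have hxne : x ≠ 0 := ne_of_lt hx0
  have hsum : 0 < -(x + a/x) := by
    have : a / x < 0 := div_neg_of_pos_of_neg ha hx0
    nlinarith
  have hsne : x + a/x ≠ 0 := by intro h; rw [h] at hsum; simp at hsum
  have hs : sg a (x - a/x) = -(x + a/x) := by
    have h2 : (x - a/x)^2 + 4*a = (-(x+a/x))^2 := by field_simp; ring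
    rw [sg, h2, Real.sqrt_sq hsum.le]
  rw [hs]
  have h1 : |1 + a/x^2| = 1 + a/x^2 := abs_of_pos (by positivity)
  rw [h1]
  simp only [sub_neg_eq_add, div_neg, sub_neg_eq_add]
  have hne3 : x^2 + a ≠ 0 := by positivity
  have h4 : (x^2 + a) * (x^2 + a)⁻¹ = 1 := mul_inv_cancel₀ hne3
  generalize F (x - a/x) = f
  field_simp
  ring

lemma cube_aux1 {u : ℝ} (hu : 0 ≤ u) : u^2 ≤ 1 + u^3 := by
  nlinarith [mul_nonneg hu (sq_nonneg (u-1)), sq_nonneg (2*u-1), sq_nonneg (u-1)]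

lemma cube_aux2 {u : ℝ} (hu : 0 ≤ u) : u ≤ 1 + u^3 := by
  nlinarith [mul_nonneg hu (sq_nonneg (u-1)), sq_nonneg (2*u-1), sq_nonneg (u-1)]

lemma gneg_cont {a : ℝ} (ha : 0 < a) {F : ℝ → ℝ} (hF : Continuous F) :
    Continuous (fun t => ((t - sg a t)/2)^3 * ((1 - t / sg a t)/2) * F t) := by
  have hne : ∀ t : ℝ, sg a t ≠ 0 := fun t => ne_of_gt (sg_pos ha t)
  exact ((((continuous_id.sub sg_cont).div_const 2).pow 3).mul
    ((continuous_const.sub (continuous_id.div sg_cont hne)).div_const 2)).mul hF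

lemma gneg_integrable {a : ℝ} (ha : 0 < a) {F : ℝ → ℝ} (hF : Continuous F)
    (hInt : Integrable F) (hx3Int : Integrable (fun x => x ^ 3 * F x)) :
    Integrable (fun t => ((t - sg a t)/2)^3 * ((1 - t / sg a t)/2) * F t) := by
  set b := Real.sqrt a with hbdef
  have hb : 0 ≤ b := Real.sqrt_nonneg a
  have hb2 : b^2 = a := Real.sq_sqrt ha.le
  apply Integrable.mono' (((hInt.abs).add hx3Int.abs).const_mul ((1+b)^3))
  · exact (gneg_cont ha hF).aestronglyMeasurable
  · filter_upwards with t
    have hσ := sg_pos ha t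
    have hσ2 := sg_sq ha t
    have habs := abs_lt_sg ha t
    have hu : (0:ℝ) ≤ |t| := abs_nonneg t
    have hσle : sg a t ≤ |t| + 2*b := by nlinarith [sq_abs t]
    have h1 : |(t - sg a t)/2| ≤ |t| + b := by
      rw [abs_le]
      constructor
      · nlinarith [neg_abs_le t]
      · nlinarith [le_abs_self t]
    have h2 : |(1 - t / sg a t)/2| ≤ 1 := by
      have hts : |t / sg a t| ≤ 1 := by
        rw [abs_div, abs_of_pos hσ]
        exact (div_le_one hσ).2 habs.le
      rw [abs_le] at hts ⊢
      constructor <;> nlinarith [hts.1, hts.2]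
    have hFt : (0:ℝ) ≤ |F t| := abs_nonneg _
    calc ‖((t - sg a t)/2)^3 * ((1 - t / sg a t)/2) * F t‖
        = |(t - sg a t)/2|^3 * |(1 - t / sg a t)/2| * |F t| := by
          rw [Real.norm_eq_abs, abs_mul, abs_mul, abs_pow]
      _ ≤ (|t| + b)^3 * 1 * |F t| := by
          gcongr
      _ ≤ (1+b)^3 * (|F t| + |t^3 * F t|) := by
          have h3 : |t^3 * F t| = |t|^3 * |F t| := by rw [abs_mul, abs_pow]
          rw [h3]
          have h4 : (|t| + b)^3 ≤ (1+b)^3 * (1 + |t|^3) := by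
            nlinarith [mul_nonneg hb (sub_nonneg.2 (cube_aux1 hu)),
              mul_nonneg (mul_nonneg hb hb) (sub_nonneg.2 (cube_aux2 hu)),
              pow_nonneg hb 3, mul_nonneg (pow_nonneg hb 3) (pow_nonneg hu 3),
              mul_nonneg (mul_nonneg hb hb) (mul_nonneg hu (mul_nonneg hu hu))]
          nlinarith [mul_le_mul_of_nonneg_right h4 hFt]

theorem meromorphic_reduction_weight_cube (a : ℝ) (ha : 0 < a)
    (F : ℝ → ℝ) (hF : Continuous F)
    (hInt : Integrable F) (hxInt : Integrable (fun x => x * F x))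
    (hx3Int : Integrable (fun x => x ^ 3 * F x)) :
    (∫ x in Iio (0:ℝ), x ^ 3 * F (x - a / x)) + (∫ x in Ioi (0:ℝ), x ^ 3 * F (x - a / x))
      = ∫ x, (x ^ 3 + 2 * a * x) * F x := by
  have alg : ∀ t : ℝ, ((t - sg a t)/2)^3 * ((1 - t/sg a t)/2) * F t
      + ((t + sg a t)/2)^3 * ((1 + t/sg a t)/2) * F t = (t^3 + 2*a*t) * F t := by
    intro t
    have hσ := sg_pos ha t
    have hσ2 := sg_sq ha t
    have hσ0 : sg a t ≠ 0 := ne_of_gt hσ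
    field_simp
    linear_combination (8*t*(sg a t)*(F t)) * hσ2
  have htotal : Integrable (fun t => (t^3 + 2*a*t) * F t) := by
    have h := hx3Int.add (hxInt.const_mul (2*a))
    apply h.congr
    filter_upwards with t
    simp only [Pi.add_apply]
    ring
  have hgneg := gneg_integrable ha hF hInt hx3Int
  have hgpos : Integrable (fun t => ((t + sg a t)/2)^3 * ((1 + t / sg a t)/2) * F t) := by
    have heq : (fun t => ((t + sg a t)/2)^3 * ((1 + t / sg a t)/2) * F t)
        = fun t => (t^3 + 2*a*t) * F t - ((t - sg a t)/2)^3 * ((1 - t/sg a t)/2) * F t := by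
      funext t
      have := alg t
      linarith
    rw [heq]
    exact htotal.sub hgneg
  rw [subst_neg ha F, subst_pos ha F, ← integral_add hgneg hgpos]
  congr 1
  funext t
  exact alg t
end

section
/- For 0 < b < a, the integral over (0, ∞) of x^(-5/2)·exp(-(1/x)·((1 - a x)/(1 - b x))²) dx equals √π·(a - b + 1/2). -/
open MeasureTheory Set Real Filter Topology


noncomputable def phiF (a b : ℝ) : ℝ → ℝ := fun s => s * ((s^2 - a)/(s^2 - b))
noncomputable def DF (a b : ℝ) : ℝ → ℝ := fun s => (s^4 + (a - 3*b)*s^2 + a*b) / (s^2 - b)^2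

lemma phiF_hasDerivAt (a b : ℝ) {s : ℝ} (h : s^2 - b ≠ 0) :
    HasDerivAt (phiF a b) (DF a b s) s := by
  have h1 : HasDerivAt (fun s : ℝ => s^3 - a*s) (3*s^2 - a) s := by
    exact ((hasDerivAt_pow 3 s).sub ((hasDerivAt_id s).const_mul a)).congr_deriv (by simp)
  have h2 : HasDerivAt (fun s : ℝ => s^2 - b) (2*s) s := by
    simpa using ((hasDerivAt_pow 2 s).sub_const b)
  have h3 : HasDerivAt (fun s : ℝ => (s^3 - a*s)/(s^2 - b))
      (((3*s^2 - a)*(s^2 - b) - (s^3 - a*s)*(2*s))/(s^2 - b)^2) s := h1.div h2 h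
  have e : phiF a b = fun s : ℝ => (s^3 - a*s)/(s^2 - b) := by
    funext t; simp only [phiF]; ring
  rw [e]
  convert h3 using 1
  rw [DF]
  field_simp
  ring

lemma DF_pos {a b : ℝ} (hb : 0 < b) (hab : b < a) {s : ℝ} (h : s^2 - b ≠ 0) :
    0 < DF a b s := by
  apply div_pos
  · nlinarith [sq_nonneg (s^2 - b), sq_nonneg s]
  · positivity

lemma key_alg (a b u s₁ s₂ s₃ : ℝ) (h12 : s₁ ≠ s₂) (h13 : s₁ ≠ s₃) (h23 : s₂ ≠ s₃)
    (d1 : s₁^2 - b ≠ 0) (d2 : s₂^2 - b ≠ 0) (d3 : s₃^2 - b ≠ 0)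
    (r1 : phiF a b s₁ = u) (r2 : phiF a b s₂ = u) (r3 : phiF a b s₃ = u) :
    s₁^2 / DF a b s₁ + s₂^2 / DF a b s₂ + s₃^2 / DF a b s₃ = u^2 + a - b := by
  -- cubic root equations
  have P : ∀ s : ℝ, s^2 - b ≠ 0 → phiF a b s = u → s^3 - u*s^2 - a*s + u*b = 0 := by
    intro s hs hr
    have : s * ((s^2 - a)/(s^2 - b)) = u := hr
    rw [mul_div_assoc', div_eq_iff hs] at this
    linear_combination this
  have P1 := P s₁ d1 r1
  have P2 := P s₂ d2 r2
  have P3 := P s₃ d3 r3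
  have q12 : s₁^2 + s₁*s₂ + s₂^2 - u*(s₁+s₂) - a = 0 := by
    have : (s₁ - s₂) * (s₁^2 + s₁*s₂ + s₂^2 - u*(s₁+s₂) - a) = 0 := by
      linear_combination P1 - P2
    rcases mul_eq_zero.mp this with h | h
    · exact absurd (sub_eq_zero.mp h) h12
    · exact h
  have q13 : s₁^2 + s₁*s₃ + s₃^2 - u*(s₁+s₃) - a = 0 := by
    have : (s₁ - s₃) * (s₁^2 + s₁*s₃ + s₃^2 - u*(s₁+s₃) - a) = 0 := by
      linear_combination P1 - P3
    rcases mul_eq_zero.mp this with h | h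
    · exact absurd (sub_eq_zero.mp h) h13
    · exact h
  have hu : u = s₁ + s₂ + s₃ := by
    have : (s₂ - s₃) * (s₁ + s₂ + s₃ - u) = 0 := by linear_combination q12 - q13
    rcases mul_eq_zero.mp this with h | h
    · exact absurd (sub_eq_zero.mp h) h23
    · linarith [sub_eq_zero.mp h]
  have ha : a = -(s₁*s₂ + s₁*s₃ + s₂*s₃) := by
    rw [hu] at q12; linear_combination -q12
  subst hu; subst ha
  have E1 : DF (-(s₁*s₂ + s₁*s₃ + s₂*s₃)) b s₁ = ((s₁-s₂)*(s₁-s₃))/(s₁^2-b) := by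
    rw [DF]
    rw [div_eq_div_iff (pow_ne_zero 2 d1) d1]
    linear_combination (-2*s₁*(s₁^2-b)) * P1
  have E2 : DF (-(s₁*s₂ + s₁*s₃ + s₂*s₃)) b s₂ = ((s₂-s₁)*(s₂-s₃))/(s₂^2-b) := by
    rw [DF]
    rw [div_eq_div_iff (pow_ne_zero 2 d2) d2]
    linear_combination (-2*s₂*(s₂^2-b)) * P2
  have E3 : DF (-(s₁*s₂ + s₁*s₃ + s₂*s₃)) b s₃ = ((s₃-s₁)*(s₃-s₂))/(s₃^2-b) := by
    rw [DF]
    rw [div_eq_div_iff (pow_ne_zero 2 d3) d3]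
    linear_combination (-2*s₃*(s₃^2-b)) * P3
  rw [E1, E2, E3]
  have n12 : s₁ - s₂ ≠ 0 := sub_ne_zero.mpr h12
  have n13 : s₁ - s₃ ≠ 0 := sub_ne_zero.mpr h13
  have n23 : s₂ - s₃ ≠ 0 := sub_ne_zero.mpr h23
  have n21 : s₂ - s₁ ≠ 0 := sub_ne_zero.mpr h12.symm
  have n31 : s₃ - s₁ ≠ 0 := sub_ne_zero.mpr h13.symm
  have n32 : s₃ - s₂ ≠ 0 := sub_ne_zero.mpr h23.symm
  field_simp
  ring


lemma sq_exp_bound (u : ℝ) : u^2 * Real.exp (-u^2) ≤ 2 * Real.exp (-(1/2) * u^2) := by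
  have h1 : u^2/2 + 1 ≤ Real.exp (u^2/2) := by
    have := Real.add_one_le_exp (u^2/2); linarith
  have h2 : Real.exp (u^2/2) * Real.exp (-u^2) = Real.exp (-(1/2) * u^2) := by
    rw [← Real.exp_add]; ring_nf
  have h3 : (0:ℝ) < Real.exp (-u^2) := Real.exp_pos _
  nlinarith [Real.exp_pos (-(1/2) * u^2)]

lemma integrable_sq_exp : Integrable (fun u : ℝ => u^2 * Real.exp (-u^2)) := by
  apply Integrable.mono' ((integrable_exp_neg_mul_sq (by norm_num : (0:ℝ) < 1/2)).const_mul 2)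
  · exact (continuous_pow 2 |>.mul (Real.continuous_exp.comp (continuous_pow 2).neg)).aestronglyMeasurable
  · filter_upwards with u
    rw [Real.norm_eq_abs, abs_of_nonneg (by positivity)]
    simpa [mul_comm] using sq_exp_bound u

lemma integral_sq_exp : ∫ u : ℝ, u^2 * Real.exp (-u^2) = Real.sqrt π / 2 := by
  have habs : ∀ u : ℝ, |u|^2 * Real.exp (-|u|^2) = u^2 * Real.exp (-u^2) := by
    intro u; rw [sq_abs]
  have h1 : ∫ u : ℝ, u^2 * Real.exp (-u^2)
      = 2 * ∫ u in Ioi (0:ℝ), u^2 * Real.exp (-u^2) := by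
    rw [← integral_comp_abs (f := fun u => u^2 * Real.exp (-u^2))]
    congr 1; funext u; exact (habs u).symm
  have h2 : (∫ x in Ioi (0:ℝ), ((2:ℝ) * x ^ ((2:ℝ) - 1)) •
        (Real.exp (-(x ^ (2:ℝ))) * (x ^ (2:ℝ)) ^ ((3/2:ℝ) - 1)))
      = ∫ y in Ioi (0:ℝ), Real.exp (-y) * y ^ ((3/2:ℝ) - 1) :=
    integral_comp_rpow_Ioi_of_pos (p := 2)
      (g := fun y => Real.exp (-y) * y ^ ((3/2:ℝ) - 1)) two_pos
  have h3 : Real.Gamma (3/2) = ∫ y in Ioi (0:ℝ), Real.exp (-y) * y ^ ((3/2:ℝ) - 1) :=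
    Real.Gamma_eq_integral (by norm_num)
  have h4 : ∀ x ∈ Ioi (0:ℝ), ((2:ℝ) * x ^ ((2:ℝ) - 1)) •
        (Real.exp (-(x ^ (2:ℝ))) * (x ^ (2:ℝ)) ^ ((3/2:ℝ) - 1))
      = 2 * (x^2 * Real.exp (-x^2)) := by
    intro x hx
    have hx0 : (0:ℝ) < x := hx
    have e1 : x ^ ((2:ℝ) - 1) = x := by norm_num
    have e2 : x ^ ((2:ℝ)) = x^2 := by
      rw [show ((2:ℝ)) = ((2:ℕ):ℝ) by norm_num, Real.rpow_natCast]
    have e3 : ((x^2 : ℝ)) ^ ((3/2:ℝ) - 1) = x := by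
      rw [← Real.rpow_natCast x 2, ← Real.rpow_mul hx0.le]; norm_num
    rw [e1, e2, e3, smul_eq_mul]
    ring
  have h5 : (∫ x in Ioi (0:ℝ), ((2:ℝ) * x ^ ((2:ℝ) - 1)) •
        (Real.exp (-(x ^ (2:ℝ))) * (x ^ (2:ℝ)) ^ ((3/2:ℝ) - 1)))
      = 2 * ∫ x in Ioi (0:ℝ), x^2 * Real.exp (-x^2) := by
    rw [← integral_const_mul]
    exact setIntegral_congr_fun measurableSet_Ioi h4
  have h6 : Real.Gamma (3/2) = Real.sqrt π / 2 := by
    have : (3/2 : ℝ) = 1/2 + 1 := by norm_num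
    rw [this, Real.Gamma_add_one (by norm_num), Real.Gamma_one_half_eq]
    ring
  rw [h1, ← h5, h2, ← h3, h6]

lemma integrable_comb (c : ℝ) (hc : 0 ≤ c) :
    Integrable (fun u : ℝ => (u^2 + c) * Real.exp (-u^2)) := by
  have : (fun u : ℝ => (u^2 + c) * Real.exp (-u^2))
      = fun u => u^2 * Real.exp (-u^2) + c * Real.exp (-(1:ℝ)*u^2) := by
    funext u; rw [neg_one_mul]; ring
  rw [this]
  exact integrable_sq_exp.add ((integrable_exp_neg_mul_sq one_pos).const_mul c)

lemma integral_comb (c : ℝ) (hc : 0 ≤ c) :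
    ∫ u : ℝ, (u^2 + c) * Real.exp (-u^2) = Real.sqrt π * (c + 1/2) := by
  have : (fun u : ℝ => (u^2 + c) * Real.exp (-u^2))
      = fun u => u^2 * Real.exp (-u^2) + c * Real.exp (-(1:ℝ)*u^2) := by
    funext u; rw [neg_one_mul]; ring
  rw [this, integral_add integrable_sq_exp ((integrable_exp_neg_mul_sq one_pos).const_mul c),
    integral_sq_exp, integral_const_mul, integral_gaussian]
  rw [div_one]; ring




lemma tendsto_div_atTop' {f g : ℝ → ℝ} {l : Filter ℝ} {L : ℝ} (hL : 0 < L)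
    (hf : Tendsto f l (𝓝 L)) (hg : Tendsto g l (𝓝[>] 0)) :
    Tendsto (fun x => f x / g x) l atTop := by
  simpa [div_eq_mul_inv] using hf.pos_mul_atTop hL hg.inv_tendsto_nhdsGT_zero

lemma surj_helper {f : ℝ → ℝ} {S : Set ℝ} (hS : S.OrdConnected) (hf : ContinuousOn f S)
    (h1 : ∀ u, ∃ s ∈ S, f s ≤ u) (h2 : ∀ u, ∃ s ∈ S, u ≤ f s) :
    ∀ u, ∃ s ∈ S, f s = u := by
  intro u
  obtain ⟨s₁, hs₁, hle⟩ := h1 u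
  obtain ⟨s₂, hs₂, hge⟩ := h2 u
  have hsub : uIcc s₁ s₂ ⊆ S := hS.uIcc_subset hs₁ hs₂
  have hu : u ∈ uIcc (f s₁) (f s₂) := by
    rw [Set.mem_uIcc]; left; exact ⟨hle, hge⟩
  obtain ⟨s, hs, hfs⟩ := intermediate_value_uIcc (hf.mono hsub) hu
  exact ⟨s, hsub hs, hfs⟩

lemma phiF_continuousOn {a b : ℝ} {S : Set ℝ} (h : ∀ s ∈ S, s^2 - b ≠ 0) :
    ContinuousOn (phiF a b) S := by
  apply continuousOn_id.mul
  exact ContinuousOn.div ((continuous_pow 2).continuousOn.sub continuousOn_const)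
    ((continuous_pow 2).continuousOn.sub continuousOn_const) h

section Branches

variable {a b : ℝ} (hb : 0 < b) (hab : b < a)

lemma sq_ne_of_Ioo {s : ℝ} (hb : 0 < b) (hs : s ∈ Ioo (-Real.sqrt b) (Real.sqrt b)) :
    s^2 - b ≠ 0 := by
  have h := abs_lt.mpr ⟨hs.1, hs.2⟩
  have : s^2 < b := by
    have := sq_lt_sq' hs.1 hs.2
    rwa [Real.sq_sqrt hb.le] at this
  linarith

lemma sq_ne_of_Iio {s : ℝ} (hb : 0 < b) (hs : s ∈ Iio (-Real.sqrt b)) : s^2 - b ≠ 0 := by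
  have h0 : 0 < Real.sqrt b := Real.sqrt_pos.mpr hb
  have : b < s^2 := by
    have h1 : Real.sqrt b < -s := by have := hs.out; linarith
    nlinarith [Real.sq_sqrt hb.le]
  linarith

lemma sq_ne_of_Ioi {s : ℝ} (hb : 0 < b) (hs : s ∈ Ioi (Real.sqrt b)) : s^2 - b ≠ 0 := by
  have h0 : 0 < Real.sqrt b := Real.sqrt_pos.mpr hb
  have : b < s^2 := by nlinarith [Real.sq_sqrt hb.le, hs.out]
  linarith

-- φ → atTop as s → atTop
lemma phiF_tendsto_atTop (hb : 0 < b) (hab : b < a) : Tendsto (phiF a b) atTop atTop := by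
  apply tendsto_atTop_mono' atTop (f₁ := fun s : ℝ => s - 1)
  · filter_upwards [eventually_ge_atTop (a + b + 1)] with s hs
    have hs1 : 0 < s := by linarith
    have hden : 0 < s^2 - b := by nlinarith
    have heq : phiF a b s = s - (a - b)*s/(s^2 - b) := by
      rw [phiF]; field_simp; ring
    have hle : (a - b)*s/(s^2 - b) ≤ 1 := by
      rw [div_le_one hden]; nlinarith
    rw [heq]; linarith
  · exact tendsto_atTop_add_const_right _ _ tendsto_id

lemma phiF_neg (a b s : ℝ) : phiF a b (-s) = -phiF a b s := by
  simp only [phiF]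
  rw [show (-s)^2 = s^2 from by ring]
  ring

lemma phiF_tendsto_atBot (hb : 0 < b) (hab : b < a) : Tendsto (phiF a b) atBot atBot := by
  have h := (phiF_tendsto_atTop hb hab).comp tendsto_neg_atBot_atTop
  have h2 := tendsto_neg_atTop_atBot.comp h
  refine h2.congr fun s => ?_
  simp [Function.comp, phiF_neg]

-- denominator limits
lemma den_right (hb : 0 < b) :
    Tendsto (fun s : ℝ => s^2 - b) (𝓝[>] (Real.sqrt b)) (𝓝[>] 0) := by
  rw [tendsto_nhdsWithin_iff]
  constructor
  · have : Tendsto (fun s : ℝ => s^2 - b) (𝓝 (Real.sqrt b)) (𝓝 ((Real.sqrt b)^2 - b)) :=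
      ((continuous_pow 2).sub continuous_const).tendsto _
    rw [Real.sq_sqrt hb.le, sub_self] at this
    exact this.mono_left nhdsWithin_le_nhds
  · filter_upwards [self_mem_nhdsWithin] with s hs
    have := sq_ne_of_Ioi hb hs
    have h0 : 0 < Real.sqrt b := Real.sqrt_pos.mpr hb
    have : b < s^2 := by nlinarith [Real.sq_sqrt hb.le, hs.out]
    exact mem_Ioi.mpr (by linarith)

lemma den_left_out (hb : 0 < b) :
    Tendsto (fun s : ℝ => s^2 - b) (𝓝[<] (-Real.sqrt b)) (𝓝[>] 0) := by
  rw [tendsto_nhdsWithin_iff]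
  constructor
  · have : Tendsto (fun s : ℝ => s^2 - b) (𝓝 (-Real.sqrt b)) (𝓝 ((-Real.sqrt b)^2 - b)) :=
      ((continuous_pow 2).sub continuous_const).tendsto _
    rw [neg_pow, Real.sq_sqrt hb.le] at this
    simpa using this.mono_left nhdsWithin_le_nhds
  · filter_upwards [self_mem_nhdsWithin] with s hs
    have h0 : 0 < Real.sqrt b := Real.sqrt_pos.mpr hb
    have h1 : Real.sqrt b < -s := by have := hs.out; simp at this ⊢; linarith
    have : b < s^2 := by nlinarith [Real.sq_sqrt hb.le]
    exact mem_Ioi.mpr (by linarith)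

lemma den_inner_right (hb : 0 < b) :
    Tendsto (fun s : ℝ => b - s^2) (𝓝[<] (Real.sqrt b)) (𝓝[>] 0) := by
  rw [tendsto_nhdsWithin_iff]
  constructor
  · have : Tendsto (fun s : ℝ => b - s^2) (𝓝 (Real.sqrt b)) (𝓝 (b - (Real.sqrt b)^2)) :=
      (continuous_const.sub (continuous_pow 2)).tendsto _
    rw [Real.sq_sqrt hb.le, sub_self] at this
    exact this.mono_left nhdsWithin_le_nhds
  · have h0 : 0 < Real.sqrt b := Real.sqrt_pos.mpr hb
    filter_upwards [Ioo_mem_nhdsLT_of_mem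
      (show Real.sqrt b ∈ Ioc (-Real.sqrt b) (Real.sqrt b) from ⟨by linarith, le_rfl⟩)]
      with s hs
    have h2 : s^2 < b := by
      have := sq_lt_sq' hs.1 hs.2
      rwa [Real.sq_sqrt hb.le] at this
    exact mem_Ioi.mpr (by linarith)

lemma den_inner_left (hb : 0 < b) :
    Tendsto (fun s : ℝ => b - s^2) (𝓝[>] (-Real.sqrt b)) (𝓝[>] 0) := by
  rw [tendsto_nhdsWithin_iff]
  constructor
  · have : Tendsto (fun s : ℝ => b - s^2) (𝓝 (-Real.sqrt b)) (𝓝 (b - (-Real.sqrt b)^2)) :=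
      (continuous_const.sub (continuous_pow 2)).tendsto _
    rw [neg_pow, Real.sq_sqrt hb.le] at this
    simpa using this.mono_left nhdsWithin_le_nhds
  · have h0 : 0 < Real.sqrt b := Real.sqrt_pos.mpr hb
    filter_upwards [Ioo_mem_nhdsGT_of_mem
      (show -Real.sqrt b ∈ Ico (-Real.sqrt b) (Real.sqrt b) from ⟨le_rfl, by linarith⟩)]
      with s hs
    have h2 : s^2 < b := by
      have := sq_lt_sq' hs.1 hs.2
      rwa [Real.sq_sqrt hb.le] at this
    exact mem_Ioi.mpr (by linarith)


lemma phiF_div_eq (a b s : ℝ) : phiF a b s = (s*(s^2-a))/(s^2-b) := by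
  rw [phiF, mul_div_assoc]

lemma phiF_inner_top (hb : 0 < b) (hab : b < a) :
    Tendsto (phiF a b) (𝓝[<] (Real.sqrt b)) atTop := by
  have hc : 0 < Real.sqrt b := Real.sqrt_pos.mpr hb
  have hsq : (Real.sqrt b)^2 = b := Real.sq_sqrt hb.le
  have hnum : Tendsto (fun s : ℝ => -(s*(s^2-a))) (𝓝[<] (Real.sqrt b))
      (𝓝 (-(Real.sqrt b*((Real.sqrt b)^2-a)))) :=
    (((continuous_id.mul ((continuous_pow 2).sub continuous_const)).neg).tendsto
      _).mono_left nhdsWithin_le_nhds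
  rw [hsq] at hnum
  have hL : 0 < -(Real.sqrt b*(b-a)) := by nlinarith
  have := tendsto_div_atTop' hL hnum (den_inner_right hb)
  refine this.congr fun s => ?_
  rw [phiF_div_eq, show b - s^2 = -(s^2-b) from by ring, neg_div_neg_eq]

lemma phiF_outer_left_top (hb : 0 < b) (hab : b < a) :
    Tendsto (phiF a b) (𝓝[<] (-Real.sqrt b)) atTop := by
  have hc : 0 < Real.sqrt b := Real.sqrt_pos.mpr hb
  have hsq : (-Real.sqrt b)^2 = b := by rw [neg_pow]; simp [Real.sq_sqrt hb.le]
  have hnum : Tendsto (fun s : ℝ => s*(s^2-a)) (𝓝[<] (-Real.sqrt b))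
      (𝓝 ((-Real.sqrt b)*((-Real.sqrt b)^2-a))) :=
    ((continuous_id.mul ((continuous_pow 2).sub continuous_const)).tendsto
      _).mono_left nhdsWithin_le_nhds
  rw [hsq] at hnum
  have hL : 0 < (-Real.sqrt b)*(b-a) := by nlinarith
  have := tendsto_div_atTop' hL hnum (den_left_out hb)
  refine this.congr fun s => (phiF_div_eq a b s).symm

lemma phiF_inner_bot (hb : 0 < b) (hab : b < a) :
    Tendsto (phiF a b) (𝓝[>] (-Real.sqrt b)) atBot := by
  have hc : 0 < Real.sqrt b := Real.sqrt_pos.mpr hb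
  have hsq : (-Real.sqrt b)^2 = b := by rw [neg_pow]; simp [Real.sq_sqrt hb.le]
  have hnum : Tendsto (fun s : ℝ => s*(s^2-a)) (𝓝[>] (-Real.sqrt b))
      (𝓝 ((-Real.sqrt b)*((-Real.sqrt b)^2-a))) :=
    ((continuous_id.mul ((continuous_pow 2).sub continuous_const)).tendsto
      _).mono_left nhdsWithin_le_nhds
  rw [hsq] at hnum
  have hL : 0 < (-Real.sqrt b)*(b-a) := by nlinarith
  have h1 := tendsto_div_atTop' hL hnum (den_inner_left hb)
  have h2 := tendsto_neg_atTop_atBot.comp h1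
  refine h2.congr fun s => ?_
  simp only [Function.comp]
  rw [phiF_div_eq, show b - s^2 = -(s^2-b) from by ring, div_neg, neg_neg]

lemma phiF_outer_right_bot (hb : 0 < b) (hab : b < a) :
    Tendsto (phiF a b) (𝓝[>] (Real.sqrt b)) atBot := by
  have hc : 0 < Real.sqrt b := Real.sqrt_pos.mpr hb
  have hsq : (Real.sqrt b)^2 = b := Real.sq_sqrt hb.le
  have hnum : Tendsto (fun s : ℝ => -(s*(s^2-a))) (𝓝[>] (Real.sqrt b))
      (𝓝 (-(Real.sqrt b*((Real.sqrt b)^2-a)))) :=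
    (((continuous_id.mul ((continuous_pow 2).sub continuous_const)).neg).tendsto
      _).mono_left nhdsWithin_le_nhds
  rw [hsq] at hnum
  have hL : 0 < -(Real.sqrt b*(b-a)) := by nlinarith
  have h1 := tendsto_div_atTop' hL hnum (den_right hb)
  have h2 := tendsto_neg_atTop_atBot.comp h1
  refine h2.congr fun s => ?_
  simp only [Function.comp]
  rw [phiF_div_eq, neg_div, neg_neg]

lemma surj₁ (hb : 0 < b) (hab : b < a) :
    ∀ u, ∃ s ∈ Iio (-Real.sqrt b), phiF a b s = u := by
  apply surj_helper Set.ordConnected_Iio (phiF_continuousOn fun s hs => sq_ne_of_Iio hb hs)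
  · intro u
    obtain ⟨s, h1, h2⟩ := (((phiF_tendsto_atBot hb hab).eventually_le_atBot u).and
      (eventually_lt_atBot (-Real.sqrt b))).exists
    exact ⟨s, h2, h1⟩
  · intro u
    obtain ⟨s, h1, h2⟩ := (((phiF_outer_left_top hb hab).eventually_ge_atTop u).and
      self_mem_nhdsWithin).exists
    exact ⟨s, h2, h1⟩

lemma surj₂ (hb : 0 < b) (hab : b < a) :
    ∀ u, ∃ s ∈ Ioo (-Real.sqrt b) (Real.sqrt b), phiF a b s = u := by
  apply surj_helper Set.ordConnected_Ioo (phiF_continuousOn fun s hs => sq_ne_of_Ioo hb hs)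
  · intro u
    have hmem : Ioo (-Real.sqrt b) (Real.sqrt b) ∈ 𝓝[>] (-Real.sqrt b) :=
      Ioo_mem_nhdsGT_of_mem ⟨le_rfl, by have := Real.sqrt_pos.mpr hb; linarith⟩
    obtain ⟨s, h1, h2⟩ := (((phiF_inner_bot hb hab).eventually_le_atBot u).and hmem).exists
    exact ⟨s, h2, h1⟩
  · intro u
    have hmem : Ioo (-Real.sqrt b) (Real.sqrt b) ∈ 𝓝[<] (Real.sqrt b) :=
      Ioo_mem_nhdsLT_of_mem ⟨by have := Real.sqrt_pos.mpr hb; linarith, le_rfl⟩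
    obtain ⟨s, h1, h2⟩ := (((phiF_inner_top hb hab).eventually_ge_atTop u).and hmem).exists
    exact ⟨s, h2, h1⟩

lemma surj₃ (hb : 0 < b) (hab : b < a) :
    ∀ u, ∃ s ∈ Ioi (Real.sqrt b), phiF a b s = u := by
  apply surj_helper Set.ordConnected_Ioi (phiF_continuousOn fun s hs => sq_ne_of_Ioi hb hs)
  · intro u
    obtain ⟨s, h1, h2⟩ := (((phiF_outer_right_bot hb hab).eventually_le_atBot u).and
      self_mem_nhdsWithin).exists
    exact ⟨s, h2, h1⟩
  · intro u
    obtain ⟨s, h1, h2⟩ := (((phiF_tendsto_atTop hb hab).eventually_ge_atTop u).and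
      (eventually_gt_atTop (Real.sqrt b))).exists
    exact ⟨s, h2, h1⟩

end Branches




lemma frac_eq (a b s : ℝ) (hs : s ≠ 0) :
    (1 - a*(s^2)⁻¹)/(1 - b*(s^2)⁻¹) = (s^2-a)/(s^2-b) := by
  have hs2 : (s^2 : ℝ) ≠ 0 := pow_ne_zero 2 hs
  have h2 : 1 - b*(s^2)⁻¹ = (s^2-b)/s^2 := by field_simp
  by_cases hd : s^2 - b = 0
  · rw [hd, div_zero, h2, hd, zero_div, div_zero]
  · have hne2 : 1 - b*(s^2)⁻¹ ≠ 0 := by rw [h2]; exact div_ne_zero hd hs2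
    rw [h2, show 1 - a*(s^2)⁻¹ = (s^2-a)/s^2 from by field_simp, div_div_div_cancel_right₀]
    exact hs2

lemma step_A (a b : ℝ) :
    (∫ x in Ioi (0:ℝ), x ^ (-(5:ℝ)/2) * Real.exp (-(1/x) * ((1 - a*x)/(1 - b*x)) ^ 2))
      = ∫ s in Ioi (0:ℝ), 2 * (s^2 * Real.exp (-(phiF a b s)^2)) := by
  set g : ℝ → ℝ := fun x => x ^ (-(5:ℝ)/2) * Real.exp (-(1/x) * ((1 - a*x)/(1 - b*x)) ^ 2)
    with hg
  have himg : (fun s : ℝ => (s^2)⁻¹) '' Ioi (0:ℝ) = Ioi (0:ℝ) := by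
    ext x
    constructor
    · rintro ⟨s, hs, rfl⟩
      have hs0 : (0:ℝ) < s := hs
      exact mem_Ioi.mpr (by positivity)
    · intro hx
      have hx0 : (0:ℝ) < x := hx
      have hsx : (0:ℝ) < Real.sqrt x := Real.sqrt_pos.mpr hx0
      refine ⟨(Real.sqrt x)⁻¹, mem_Ioi.mpr (by positivity), ?_⟩
      show (((Real.sqrt x)⁻¹)^2)⁻¹ = x
      rw [inv_pow, Real.sq_sqrt hx0.le, inv_inv]
  have hderiv : ∀ x ∈ Ioi (0:ℝ), HasDerivWithinAt (fun s : ℝ => (s^2)⁻¹)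
      (-(2*x)/((x^2)^2)) (Ioi 0) x := by
    intro x hx
    have hx0 : (0:ℝ) < x := hx
    have h1 : HasDerivAt (fun s : ℝ => s^2) (2*x) x := by
      simpa using hasDerivAt_pow 2 x
    exact (h1.inv (by positivity)).hasDerivWithinAt
  have hinj : InjOn (fun s : ℝ => (s^2)⁻¹) (Ioi 0) := by
    intro x hx y hy h
    have hx0 : (0:ℝ) < x := hx
    have hy0 : (0:ℝ) < y := hy
    have h2 : x^2 = y^2 := by
      have := congrArg Inv.inv h; simpa using this
    have h3 : (x-y)*(x+y) = 0 := by linear_combination h2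
    rcases mul_eq_zero.mp h3 with h4 | h4
    · exact sub_eq_zero.mp h4
    · linarith
  have key := integral_image_eq_integral_abs_deriv_smul measurableSet_Ioi hderiv hinj g
  rw [himg] at key
  rw [key]
  apply setIntegral_congr_fun measurableSet_Ioi
  intro s hs
  have hs0 : (0:ℝ) < s := hs
  have hs' : s ≠ 0 := ne_of_gt hs0
  simp only [hg]
  have e1 : ((s^2)⁻¹ : ℝ) ^ (-(5:ℝ)/2) = s^5 := by
    rw [Real.inv_rpow (sq_nonneg s), ← Real.rpow_neg (sq_nonneg s)]
    rw [← Real.rpow_natCast s 2, ← Real.rpow_mul hs0.le]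
    rw [show ((2:ℕ):ℝ) * -(-(5:ℝ)/2) = ((5:ℕ):ℝ) from by push_cast; ring, Real.rpow_natCast]
  have e2 : (1/((s^2)⁻¹) : ℝ) = s^2 := by rw [one_div, inv_inv]
  have e3 := frac_eq a b s hs'
  have e4 : -(s^2) * ((s^2-a)/(s^2-b))^2 = -(phiF a b s)^2 := by
    simp only [phiF]; ring
  rw [e1, e2, e3, e4]
  have e5 : |(-(2*s)/((s^2)^2))| = 2*s/(s^2)^2 := by
    rw [abs_div, abs_neg, abs_of_nonneg (by positivity : (0:ℝ) ≤ 2*s),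
      abs_of_nonneg (by positivity : (0:ℝ) ≤ (s^2)^2)]
  rw [e5, smul_eq_mul]
  field_simp

set_option maxHeartbeats 2000000 in
theorem example_integral_I1 (a b : ℝ) (hb : 0 < b) (hab : b < a) :
    (∫ x in Ioi (0:ℝ), x ^ (-(5:ℝ)/2) * Real.exp (-(1/x) * ((1 - a*x)/(1 - b*x)) ^ 2))
      = Real.sqrt π * (a - b + 1/2) := by
  rw [step_A a b]
  set c := Real.sqrt b with hcdef
  have hc : 0 < c := Real.sqrt_pos.mpr hb
  set E : ℝ → ℝ := fun s => s^2 * Real.exp (-(phiF a b s)^2) with hE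
  -- evenness
  have hEabs : ∀ x : ℝ, E |x| = E x := by
    intro x
    rcases le_or_gt 0 x with h | h
    · rw [abs_of_nonneg h]
    · rw [abs_of_neg h]
      simp only [hE]
      rw [phiF_neg]
      have h1 : (-x)^2 = x^2 := by ring
      have h2 : (-(phiF a b x))^2 = (phiF a b x)^2 := by ring
      rw [h1, h2]
  have stepB : (∫ s in Ioi (0:ℝ), 2 * E s) = ∫ s : ℝ, E s := by
    rw [integral_const_mul, ← integral_comp_abs (f := E)]
    simp only [hEabs]
  -- branch data
  have hne₁ : ∀ s ∈ Iio (-c), s^2 - b ≠ 0 := fun s hs => sq_ne_of_Iio hb hs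
  have hne₂ : ∀ s ∈ Ioo (-c) c, s^2 - b ≠ 0 := fun s hs => sq_ne_of_Ioo hb hs
  have hne₃ : ∀ s ∈ Ioi c, s^2 - b ≠ 0 := fun s hs => sq_ne_of_Ioi hb hs
  have hd₁ : ∀ s ∈ Iio (-c), HasDerivWithinAt (phiF a b) (DF a b s) (Iio (-c)) s :=
    fun s hs => (phiF_hasDerivAt a b (hne₁ s hs)).hasDerivWithinAt
  have hd₂ : ∀ s ∈ Ioo (-c) c, HasDerivWithinAt (phiF a b) (DF a b s) (Ioo (-c) c) s :=
    fun s hs => (phiF_hasDerivAt a b (hne₂ s hs)).hasDerivWithinAt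
  have hd₃ : ∀ s ∈ Ioi c, HasDerivWithinAt (phiF a b) (DF a b s) (Ioi c) s :=
    fun s hs => (phiF_hasDerivAt a b (hne₃ s hs)).hasDerivWithinAt
  have hm₁ : StrictMonoOn (phiF a b) (Iio (-c)) := by
    apply strictMonoOn_of_deriv_pos (convex_Iio _) (phiF_continuousOn hne₁)
    intro x hx
    rw [interior_Iio] at hx
    rw [(phiF_hasDerivAt a b (hne₁ x hx)).deriv]
    exact DF_pos hb hab (hne₁ x hx)
  have hm₂ : StrictMonoOn (phiF a b) (Ioo (-c) c) := by
    apply strictMonoOn_of_deriv_pos (convex_Ioo _ _) (phiF_continuousOn hne₂)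
    intro x hx
    rw [interior_Ioo] at hx
    rw [(phiF_hasDerivAt a b (hne₂ x hx)).deriv]
    exact DF_pos hb hab (hne₂ x hx)
  have hm₃ : StrictMonoOn (phiF a b) (Ioi c) := by
    apply strictMonoOn_of_deriv_pos (convex_Ioi _) (phiF_continuousOn hne₃)
    intro x hx
    rw [interior_Ioi] at hx
    rw [(phiF_hasDerivAt a b (hne₃ x hx)).deriv]
    exact DF_pos hb hab (hne₃ x hx)
  have himg₁ : phiF a b '' (Iio (-c)) = univ := by
    rw [Set.eq_univ_iff_forall]
    intro u
    obtain ⟨s, hs, he⟩ := surj₁ hb hab u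
    exact ⟨s, hs, he⟩
  have himg₂ : phiF a b '' (Ioo (-c) c) = univ := by
    rw [Set.eq_univ_iff_forall]
    intro u
    obtain ⟨s, hs, he⟩ := surj₂ hb hab u
    exact ⟨s, hs, he⟩
  have himg₃ : phiF a b '' (Ioi c) = univ := by
    rw [Set.eq_univ_iff_forall]
    intro u
    obtain ⟨s, hs, he⟩ := surj₃ hb hab u
    exact ⟨s, hs, he⟩
  choose σ₁ hσ₁ hφ₁ using surj₁ (a := a) hb hab
  choose σ₂ hσ₂ hφ₂ using surj₂ (a := a) hb hab
  choose σ₃ hσ₃ hφ₃ using surj₃ (a := a) hb hab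
  have hmono₁ : Monotone σ₁ := by
    intro u v huv
    by_contra hlt
    push_neg at hlt
    have := hm₁ (hσ₁ v) (hσ₁ u) hlt
    rw [hφ₁, hφ₁] at this
    exact absurd huv (not_le.mpr this)
  have hmono₂ : Monotone σ₂ := by
    intro u v huv
    by_contra hlt
    push_neg at hlt
    have := hm₂ (hσ₂ v) (hσ₂ u) hlt
    rw [hφ₂, hφ₂] at this
    exact absurd huv (not_le.mpr this)
  have hmono₃ : Monotone σ₃ := by
    intro u v huv
    by_contra hlt
    push_neg at hlt
    have := hm₃ (hσ₃ v) (hσ₃ u) hlt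
    rw [hφ₃, hφ₃] at this
    exact absurd huv (not_le.mpr this)
  set g₁ : ℝ → ℝ := fun u => (σ₁ u)^2 / DF a b (σ₁ u) * Real.exp (-u^2) with hg₁
  set g₂ : ℝ → ℝ := fun u => (σ₂ u)^2 / DF a b (σ₂ u) * Real.exp (-u^2) with hg₂
  set g₃ : ℝ → ℝ := fun u => (σ₃ u)^2 / DF a b (σ₃ u) * Real.exp (-u^2) with hg₃
  have hDFm : Measurable (DF a b) := by
    have h1 : Continuous (fun s : ℝ => s^4 + (a - 3*b)*s^2 + a*b) := by continuity
    have h2 : Continuous (fun s : ℝ => (s^2 - b)^2) := by continuity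
    exact h1.measurable.div h2.measurable
  have hexpm : Measurable (fun u : ℝ => Real.exp (-u^2)) :=
    (Real.continuous_exp.comp (continuous_pow 2).neg).measurable
  have hgm₁ : Measurable g₁ :=
    ((hmono₁.measurable.pow_const 2).div (hDFm.comp hmono₁.measurable)).mul hexpm
  have hgm₂ : Measurable g₂ :=
    ((hmono₂.measurable.pow_const 2).div (hDFm.comp hmono₂.measurable)).mul hexpm
  have hgm₃ : Measurable g₃ :=
    ((hmono₃.measurable.pow_const 2).div (hDFm.comp hmono₃.measurable)).mul hexpm
  have hsum : ∀ u : ℝ, g₁ u + g₂ u + g₃ u = (u^2 + (a-b)) * Real.exp (-u^2) := by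
    intro u
    have h1 := hσ₁ u
    have h2 := hσ₂ u
    have h3 := hσ₃ u
    have n12 : σ₁ u < σ₂ u := lt_trans h1 h2.1
    have n23 : σ₂ u < σ₃ u := lt_trans h2.2 h3
    have n13 : σ₁ u < σ₃ u := lt_trans n12 n23
    have k := key_alg a b u (σ₁ u) (σ₂ u) (σ₃ u) (ne_of_lt n12) (ne_of_lt n13)
      (ne_of_lt n23) (hne₁ _ h1) (hne₂ _ h2) (hne₃ _ h3) (hφ₁ u) (hφ₂ u) (hφ₃ u)
    calc g₁ u + g₂ u + g₃ u
        = ((σ₁ u)^2 / DF a b (σ₁ u) + (σ₂ u)^2 / DF a b (σ₂ u)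
            + (σ₃ u)^2 / DF a b (σ₃ u)) * Real.exp (-u^2) := by
          simp only [hg₁, hg₂, hg₃]; ring
      _ = (u^2 + (a-b)) * Real.exp (-u^2) := by rw [k]; ring_nf
  have hpos₁ : ∀ u, 0 ≤ g₁ u := fun u => mul_nonneg
    (div_nonneg (sq_nonneg _) (DF_pos hb hab (hne₁ _ (hσ₁ u))).le) (Real.exp_pos _).le
  have hpos₂ : ∀ u, 0 ≤ g₂ u := fun u => mul_nonneg
    (div_nonneg (sq_nonneg _) (DF_pos hb hab (hne₂ _ (hσ₂ u))).le) (Real.exp_pos _).le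
  have hpos₃ : ∀ u, 0 ≤ g₃ u := fun u => mul_nonneg
    (div_nonneg (sq_nonneg _) (DF_pos hb hab (hne₃ _ (hσ₃ u))).le) (Real.exp_pos _).le
  have hcomb : Integrable (fun u : ℝ => (u^2 + (a-b)) * Real.exp (-u^2)) :=
    integrable_comb (a-b) (by linarith)
  have hint₁ : Integrable g₁ := by
    apply Integrable.mono' hcomb hgm₁.aestronglyMeasurable
    filter_upwards with u
    rw [Real.norm_eq_abs, abs_of_nonneg (hpos₁ u)]
    have := hsum u
    nlinarith [hpos₂ u, hpos₃ u]
  have hint₂ : Integrable g₂ := by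
    apply Integrable.mono' hcomb hgm₂.aestronglyMeasurable
    filter_upwards with u
    rw [Real.norm_eq_abs, abs_of_nonneg (hpos₂ u)]
    have := hsum u
    nlinarith [hpos₁ u, hpos₃ u]
  have hint₃ : Integrable g₃ := by
    apply Integrable.mono' hcomb hgm₃.aestronglyMeasurable
    filter_upwards with u
    rw [Real.norm_eq_abs, abs_of_nonneg (hpos₃ u)]
    have := hsum u
    nlinarith [hpos₁ u, hpos₂ u]
  -- pointwise identification on branches
  have hptw₁ : EqOn (fun s => |DF a b s| • g₁ (phiF a b s)) E (Iio (-c)) := by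
    intro s hs
    have hσs : σ₁ (phiF a b s) = s := hm₁.injOn (hσ₁ _) hs (hφ₁ (phiF a b s))
    have hD := DF_pos hb hab (hne₁ s hs)
    simp only [hg₁, hσs, hE, smul_eq_mul, abs_of_pos hD]
    field_simp
  have hptw₂ : EqOn (fun s => |DF a b s| • g₂ (phiF a b s)) E (Ioo (-c) c) := by
    intro s hs
    have hσs : σ₂ (phiF a b s) = s := hm₂.injOn (hσ₂ _) hs (hφ₂ (phiF a b s))
    have hD := DF_pos hb hab (hne₂ s hs)
    simp only [hg₂, hσs, hE, smul_eq_mul, abs_of_pos hD]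
    field_simp
  have hptw₃ : EqOn (fun s => |DF a b s| • g₃ (phiF a b s)) E (Ioi c) := by
    intro s hs
    have hσs : σ₃ (phiF a b s) = s := hm₃.injOn (hσ₃ _) hs (hφ₃ (phiF a b s))
    have hD := DF_pos hb hab (hne₃ s hs)
    simp only [hg₃, hσs, hE, smul_eq_mul, abs_of_pos hD]
    field_simp
  -- change of variables on branches
  have hcv₁ : ∫ s in Iio (-c), E s = ∫ u : ℝ, g₁ u := by
    have key := integral_image_eq_integral_abs_deriv_smul measurableSet_Iio hd₁ hm₁.injOn g₁
    rw [himg₁, Measure.restrict_univ] at key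
    rw [key]
    exact setIntegral_congr_fun measurableSet_Iio hptw₁.symm
  have hcv₂ : ∫ s in Ioo (-c) c, E s = ∫ u : ℝ, g₂ u := by
    have key := integral_image_eq_integral_abs_deriv_smul measurableSet_Ioo hd₂ hm₂.injOn g₂
    rw [himg₂, Measure.restrict_univ] at key
    rw [key]
    exact setIntegral_congr_fun measurableSet_Ioo hptw₂.symm
  have hcv₃ : ∫ s in Ioi c, E s = ∫ u : ℝ, g₃ u := by
    have key := integral_image_eq_integral_abs_deriv_smul measurableSet_Ioi hd₃ hm₃.injOn g₃
    rw [himg₃, Measure.restrict_univ] at key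
    rw [key]
    exact setIntegral_congr_fun measurableSet_Ioi hptw₃.symm
  -- integrability of E on branches
  have hIE₁ : IntegrableOn E (Iio (-c)) := by
    have h := (integrableOn_image_iff_integrableOn_abs_deriv_smul measurableSet_Iio hd₁
      hm₁.injOn g₁).mp (by rw [himg₁]; exact integrableOn_univ.mpr hint₁)
    exact h.congr_fun hptw₁ measurableSet_Iio
  have hIE₂ : IntegrableOn E (Ioo (-c) c) := by
    have h := (integrableOn_image_iff_integrableOn_abs_deriv_smul measurableSet_Ioo hd₂
      hm₂.injOn g₂).mp (by rw [himg₂]; exact integrableOn_univ.mpr hint₂)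
    exact h.congr_fun hptw₂ measurableSet_Ioo
  have hIE₃ : IntegrableOn E (Ioi c) := by
    have h := (integrableOn_image_iff_integrableOn_abs_deriv_smul measurableSet_Ioi hd₃
      hm₃.injOn g₃).mp (by rw [himg₃]; exact integrableOn_univ.mpr hint₃)
    exact h.congr_fun hptw₃ measurableSet_Ioi
  -- split the real line
  have hU : (Iio (-c) ∪ Ioo (-c) c ∪ Ioi c : Set ℝ) =ᵐ[volume] (univ : Set ℝ) := by
    rw [ae_eq_univ]
    have hsub : (Iio (-c) ∪ Ioo (-c) c ∪ Ioi c : Set ℝ)ᶜ ⊆ ({-c, c} : Set ℝ) := by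
      intro x hx
      rw [mem_compl_iff] at hx
      have hx1 : ¬ x < -c := fun h => hx (Or.inl (Or.inl h))
      have hx2 : ¬ (-c < x ∧ x < c) := fun h => hx (Or.inl (Or.inr h))
      have hx3 : ¬ c < x := fun h => hx (Or.inr h)
      simp only [mem_insert_iff, mem_singleton_iff]
      rcases eq_or_lt_of_le (not_lt.mp hx1) with h | h
      · exact Or.inl h.symm
      · have h4 : ¬ x < c := fun hlt => hx2 ⟨h, hlt⟩
        exact Or.inr (le_antisymm (not_lt.mp hx3) (not_lt.mp h4))
    exact measure_mono_null hsub
      ((Set.toFinite ({-c, c} : Set ℝ)).countable.measure_zero _)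
  have hdisj₁₂ : Disjoint (Iio (-c)) (Ioo (-c) c) := by
    rw [Set.disjoint_left]
    intro x hx hx2
    exact absurd hx2.1 (not_lt.mpr hx.out.le)
  have hdisj₃ : Disjoint (Iio (-c) ∪ Ioo (-c) c) (Ioi c) := by
    rw [Set.disjoint_left]
    rintro x (hx | hx) hx3
    · have : x < -c := hx
      have : c < x := hx3
      linarith
    · exact absurd hx3 (not_lt.mpr hx.2.le)
  have hunion : (∫ s : ℝ, E s)
      = (∫ s in Iio (-c), E s) + (∫ s in Ioo (-c) c, E s) + (∫ s in Ioi c, E s) := by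
    rw [← setIntegral_univ (f := E), ← setIntegral_congr_set hU,
      setIntegral_union hdisj₃ measurableSet_Ioi (hIE₁.union hIE₂) hIE₃,
      setIntegral_union hdisj₁₂ measurableSet_Ioo hIE₁ hIE₂]
  -- put it together
  rw [stepB, hunion, hcv₁, hcv₂, hcv₃, ← integral_add hint₁ hint₂,
    ← integral_add (show Integrable (fun u : ℝ => g₁ u + g₂ u) volume from hint₁.add hint₂) hint₃]
  have : (fun u : ℝ => g₁ u + g₂ u + g₃ u) = fun u => (u^2 + (a-b)) * Real.exp (-u^2) :=
    funext hsum
  rw [this, integral_comb (a-b) (by linarith)]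
end

section
/- For 0 < b < a, the integral over (0, ∞) of t²·exp(-(t·(t² - a)/(t² - b))²) dt, interpreted as the sum of the integrals over (0, √b) and (√b, ∞), equals (√π/2)·(a - b + 1/2). -/
set_option linter.unusedSectionVars false
open MeasureTheory Set Real

noncomputable section GK
namespace GK
variable (a b : ℝ)
def phi (t : ℝ) : ℝ := t * (t ^ 2 - a) / (t ^ 2 - b)
def g (t : ℝ) : ℝ := t ^ 2 * Real.exp (-(t * (t ^ 2 - a) / (t ^ 2 - b)) ^ 2)
def mm (t : ℝ) : ℝ := (a - b) * t / (t ^ 2 - b)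
def mp (t : ℝ) : ℝ := -((a - b) * (t ^ 2 + b)) / (t ^ 2 - b) ^ 2
def EE (t : ℝ) : ℝ := ((a - b) * t / (t ^ 2 - b)) ^ 2 + 4 * b * (t ^ 2 - a) / (t ^ 2 - b)
def Ep (t : ℝ) : ℝ := 2 * mm a b t * mp a b t + 8 * b * (a - b) * t / (t ^ 2 - b) ^ 2
def uu (t : ℝ) : ℝ := (-(mm a b t) + Real.sqrt (EE a b t)) / 2
def vv (t : ℝ) : ℝ := (-(mm a b t) - Real.sqrt (EE a b t)) / 2
def UU (t : ℝ) : ℝ := (-(mp a b t) + Ep a b t / (2 * Real.sqrt (EE a b t))) / 2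
def VV (t : ℝ) : ℝ := (-(mp a b t) - Ep a b t / (2 * Real.sqrt (EE a b t))) / 2
def Phi (t : ℝ) : ℝ := (t ^ 4 + (a - 3 * b) * t ^ 2 + a * b) / (t ^ 2 - b) ^ 2

lemma gval (t : ℝ) : g a b t = t ^ 2 * Real.exp (-(phi a b t) ^ 2) := rfl

variable {a b} (hb : 0 < b) (hab : b < a)
section pt
variable {t : ℝ} (hden : t ^ 2 - b ≠ 0)
include hden

lemma hasDerivAt_phi : HasDerivAt (phi a b) (Phi a b t) t := by
  have h1 : HasDerivAt (fun s : ℝ => s * (s ^ 2 - a)) (1 * (t ^ 2 - a) + t * (2 * t)) t := by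
    exact ((hasDerivAt_id' t).mul ((hasDerivAt_pow 2 t).sub_const a)).congr_deriv (by simp)
  have h2 : HasDerivAt (fun s : ℝ => s ^ 2 - b) (2 * t) t := by
    simpa using (hasDerivAt_pow 2 t).sub_const b
  have := h1.div h2 hden
  refine this.congr_deriv ?_
  unfold Phi
  field_simp
  ring

lemma hasDerivAt_mm : HasDerivAt (mm a b) (mp a b t) t := by
  have h1 : HasDerivAt (fun s : ℝ => (a - b) * s) (a - b) t := by
    simpa using (hasDerivAt_id t).const_mul (a - b)
  have h2 : HasDerivAt (fun s : ℝ => s ^ 2 - b) (2 * t) t := by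
    simpa using (hasDerivAt_pow 2 t).sub_const b
  have := h1.div h2 hden
  refine this.congr_deriv ?_
  unfold mp
  field_simp
  ring

lemma hasDerivAt_EE : HasDerivAt (EE a b) (Ep a b t) t := by
  have h1 : HasDerivAt (fun s : ℝ => ((a - b) * s / (s ^ 2 - b)) ^ 2)
      (2 * mm a b t * mp a b t) t := by
    have := (hasDerivAt_mm (a := a) (b := b) hden).pow 2
    exact this.congr_deriv (by rw [show (2:ℕ) - 1 = 1 from rfl]; push_cast; ring)
  have h2 : HasDerivAt (fun s : ℝ => 4 * b * (s ^ 2 - a)) (4 * b * (2 * t)) t := by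
    simpa using ((hasDerivAt_pow 2 t).sub_const a).const_mul (4 * b)
  have h3 : HasDerivAt (fun s : ℝ => s ^ 2 - b) (2 * t) t := by
    simpa using (hasDerivAt_pow 2 t).sub_const b
  have h4 := h2.div h3 hden
  have := h1.add h4
  refine this.congr_deriv ?_
  unfold Ep
  field_simp
  ring

end pt

include hb hab in
lemma phiPos_of_ne (r : ℝ) (hr : r ^ 2 - b ≠ 0) : 0 < Phi a b r := by
  have hb' := hb
  have hrw : Phi a b r = ((r ^ 2 - b) ^ 2 + (a - b) * (r ^ 2 + b)) / (r ^ 2 - b) ^ 2 := by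
    unfold Phi; field_simp; ring
  rw [hrw]
  apply div_pos
  · nlinarith [sq_nonneg (r ^ 2 - b), sq_nonneg r, hb']
  · positivity


variable {t : ℝ} (hct : Real.sqrt b < t)
include hb hab hct

lemma htpos : 0 < t := lt_trans (Real.sqrt_pos.mpr hb) hct

lemma htb : b < t ^ 2 := by
  have h1 : Real.sqrt b ^ 2 < t ^ 2 :=
    pow_lt_pow_left₀ hct (Real.sqrt_nonneg b) (by norm_num)
  rwa [Real.sq_sqrt hb.le] at h1

lemma hEpos : 0 < EE a b t := by
  have h := htb hb hab hct
  have hden : t ^ 2 - b ≠ 0 := by nlinarith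
  have hrw : EE a b t
      = (b * (2 * (t ^ 2 - b) - (a - b)) ^ 2 + (a - b) ^ 2 * (t ^ 2 - b)) / (t ^ 2 - b) ^ 2 := by
    unfold EE; field_simp; ring
  rw [hrw]
  apply div_pos
  · nlinarith [mul_nonneg hb.le (sq_nonneg (2 * (t ^ 2 - b) - (a - b))),
      mul_pos (pow_pos (by linarith : (0:ℝ) < a - b) 2) (by linarith : (0:ℝ) < t ^ 2 - b)]
  · nlinarith

lemma hSpos : 0 < Real.sqrt (EE a b t) := Real.sqrt_pos.mpr (hEpos hb hab hct)

lemma hS2 : Real.sqrt (EE a b t) ^ 2 = EE a b t := Real.sq_sqrt (hEpos hb hab hct).le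

lemma hPhipos : 0 < Phi a b t := by
  have h := htb hb hab hct
  have hden : t ^ 2 - b ≠ 0 := by nlinarith
  have hrw : Phi a b t
      = ((t ^ 2 - b) ^ 2 + (a - b) * (t ^ 2 + b)) / (t ^ 2 - b) ^ 2 := by
    unfold Phi; field_simp; ring
  rw [hrw]
  apply div_pos
  · nlinarith
  · nlinarith


lemma hdenpos : 0 < t ^ 2 - b := by have := htb hb hab hct; linarith

lemma hden' : t ^ 2 - b ≠ 0 := (hdenpos hb hab hct).ne'

-- cleared-denominator facts
lemma hw_u : 2 * (t ^ 2 - b) * uu a b t = -((a - b) * t) + Real.sqrt (EE a b t) * (t ^ 2 - b) := by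
  have hden := hden' hb hab hct
  unfold uu mm
  field_simp

lemma hw_v : 2 * (t ^ 2 - b) * vv a b t = -((a - b) * t) - Real.sqrt (EE a b t) * (t ^ 2 - b) := by
  have hden := hden' hb hab hct
  unfold vv mm
  field_simp

lemma hS2c : Real.sqrt (EE a b t) ^ 2 * (t ^ 2 - b) ^ 2
    = ((a - b) * t) ^ 2 + 4 * b * (t ^ 2 - a) * (t ^ 2 - b) := by
  have hden := hden' hb hab hct
  have h := hS2 hb hab hct
  rw [h]
  unfold EE
  field_simp

lemma quad_u : (t ^ 2 - b) * uu a b t ^ 2 + (a - b) * t * uu a b t - b * (t ^ 2 - a) = 0 := by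
  have hw := hw_u hb hab hct
  have hs := hS2c hb hab hct
  have hden := hden' hb hab hct
  have h4 : 4 * (t ^ 2 - b) * ((t ^ 2 - b) * uu a b t ^ 2 + (a - b) * t * uu a b t - b * (t ^ 2 - a)) = 0 := by
    linear_combination (2 * (t ^ 2 - b) * uu a b t + (a - b) * t + Real.sqrt (EE a b t) * (t ^ 2 - b)) * hw + hs
  exact (mul_eq_zero.mp h4).resolve_left (by positivity)

lemma quad_v : (t ^ 2 - b) * vv a b t ^ 2 + (a - b) * t * vv a b t - b * (t ^ 2 - a) = 0 := by
  have hw := hw_v hb hab hct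
  have hs := hS2c hb hab hct
  have hden := hden' hb hab hct
  have h4 : 4 * (t ^ 2 - b) * ((t ^ 2 - b) * vv a b t ^ 2 + (a - b) * t * vv a b t - b * (t ^ 2 - a)) = 0 := by
    linear_combination (2 * (t ^ 2 - b) * vv a b t + (a - b) * t - Real.sqrt (EE a b t) * (t ^ 2 - b)) * hw + hs
  exact (mul_eq_zero.mp h4).resolve_left (by positivity)


lemma hmmpos : 0 < mm a b t := by
  have h1 := hdenpos hb hab hct
  have h2 := htpos hb hab hct
  exact div_pos (mul_pos (by linarith) h2) h1

lemma uu_lt : uu a b t < Real.sqrt b := by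
  have hden := hdenpos hb hab hct
  have hm := hmmpos hb hab hct
  have hc0 : 0 < Real.sqrt b := Real.sqrt_pos.mpr hb
  have ht := htpos hb hab hct
  set c := Real.sqrt b with hcdef
  have hc2 : c ^ 2 = b := Real.sq_sqrt hb.le
  have hkey : Real.sqrt (EE a b t) < 2 * c + mm a b t := by
    rw [Real.sqrt_lt' (by linarith)]
    have hden2 : t ^ 2 - c ^ 2 ≠ 0 := by rw [hc2]; exact hden.ne'
    have heq : (2 * c + mm a b t) ^ 2 - EE a b t
        = 4 * (a - b) * (b + c * t) / (t ^ 2 - b) := by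
      unfold EE mm
      rw [← hc2]
      field_simp
      ring
    nlinarith [div_pos (by nlinarith [mul_pos hc0 ht] : (0:ℝ) < 4 * (a - b) * (b + c * t)) hden]
  unfold uu
  nlinarith

lemma neg_lt_uu : -Real.sqrt b < uu a b t := by
  have hden := hdenpos hb hab hct
  have hm := hmmpos hb hab hct
  have hc0 : 0 < Real.sqrt b := Real.sqrt_pos.mpr hb
  have ht := htpos hb hab hct
  set c := Real.sqrt b with hcdef
  have hc2 : c ^ 2 = b := Real.sq_sqrt hb.le
  have hden2 : t ^ 2 - c ^ 2 ≠ 0 := by rw [hc2]; exact hden.ne'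
  have heq : EE a b t - (mm a b t - 2 * c) ^ 2
      = 4 * (a - b) * (c * t - b) / (t ^ 2 - b) := by
    unfold EE mm
    rw [← hc2]
    field_simp
    ring
  have hctb : 0 < c * t - b := by nlinarith
  have hEgt : (mm a b t - 2 * c) ^ 2 < EE a b t := by
    nlinarith [div_pos (by nlinarith : (0:ℝ) < 4 * (a - b) * (c * t - b)) hden]
  have habs : |mm a b t - 2 * c| < Real.sqrt (EE a b t) := by
    rw [← Real.sqrt_sq_eq_abs]
    exact Real.sqrt_lt_sqrt (sq_nonneg _) hEgt
  have := (abs_lt.mp habs).2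
  unfold uu
  linarith

lemma vv_lt : vv a b t < -Real.sqrt b := by
  have hden := hdenpos hb hab hct
  have hm := hmmpos hb hab hct
  have hc0 : 0 < Real.sqrt b := Real.sqrt_pos.mpr hb
  have ht := htpos hb hab hct
  set c := Real.sqrt b with hcdef
  have hc2 : c ^ 2 = b := Real.sq_sqrt hb.le
  have hden2 : t ^ 2 - c ^ 2 ≠ 0 := by rw [hc2]; exact hden.ne'
  have heq : EE a b t - (mm a b t - 2 * c) ^ 2
      = 4 * (a - b) * (c * t - b) / (t ^ 2 - b) := by
    unfold EE mm
    rw [← hc2]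
    field_simp
    ring
  have hctb : 0 < c * t - b := by nlinarith
  have hEgt : (mm a b t - 2 * c) ^ 2 < EE a b t := by
    nlinarith [div_pos (by nlinarith : (0:ℝ) < 4 * (a - b) * (c * t - b)) hden]
  have habs : |mm a b t - 2 * c| < Real.sqrt (EE a b t) := by
    rw [← Real.sqrt_sq_eq_abs]
    exact Real.sqrt_lt_sqrt (sq_nonneg _) hEgt
  have h2 : -(Real.sqrt (EE a b t)) < mm a b t - 2 * c := (abs_lt.mp habs).1
  have h3 : 2 * c - mm a b t < Real.sqrt (EE a b t) := by linarith
  unfold vv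
  linarith


lemma uu_sq_lt : uu a b t ^ 2 - b < 0 := by
  have h1 := uu_lt hb hab hct
  have h2 := neg_lt_uu hb hab hct
  have hc2 : Real.sqrt b ^ 2 = b := Real.sq_sqrt hb.le
  nlinarith

lemma vv_sq_gt : 0 < vv a b t ^ 2 - b := by
  have h1 := vv_lt hb hab hct
  have hc0 : 0 < Real.sqrt b := Real.sqrt_pos.mpr hb
  have hc2 : Real.sqrt b ^ 2 = b := Real.sq_sqrt hb.le
  nlinarith

lemma phi_uu : phi a b (uu a b t) = phi a b t := by
  have hq := quad_u hb hab hct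
  have hden := hden' hb hab hct
  have hu2 : uu a b t ^ 2 - b ≠ 0 := (uu_sq_lt hb hab hct).ne
  unfold phi
  rw [div_eq_div_iff hu2 hden]
  linear_combination (uu a b t - t) * hq

lemma phi_vv : phi a b (vv a b t) = phi a b t := by
  have hq := quad_v hb hab hct
  have hden := hden' hb hab hct
  have hv2 : vv a b t ^ 2 - b ≠ 0 := (vv_sq_gt hb hab hct).ne'
  unfold phi
  rw [div_eq_div_iff hv2 hden]
  linear_combination (vv a b t - t) * hq

lemma hasDerivAt_uu : HasDerivAt (uu a b) (UU a b t) t := by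
  have hden := hden' hb hab hct
  have hE := (hEpos hb hab hct).ne'
  have h1 := ((hasDerivAt_mm (a := a) (b := b) hden).neg.add
    ((hasDerivAt_EE (a := a) (b := b) hden).sqrt hE)).div_const 2
  exact h1

lemma hasDerivAt_vv : HasDerivAt (vv a b) (VV a b t) t := by
  have hden := hden' hb hab hct
  have hE := (hEpos hb hab hct).ne'
  have h1 := ((hasDerivAt_mm (a := a) (b := b) hden).neg.sub
    ((hasDerivAt_EE (a := a) (b := b) hden).sqrt hE)).div_const 2
  exact h1

lemma chain_uu : Phi a b (uu a b t) * UU a b t = Phi a b t := by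
  have hu2 : uu a b t ^ 2 - b ≠ 0 := (uu_sq_lt hb hab hct).ne
  have h1 : HasDerivAt (phi a b) (Phi a b (uu a b t)) (uu a b t) := hasDerivAt_phi hu2
  have h2 := h1.comp t (hasDerivAt_uu hb hab hct)
  have h3 : (fun s => phi a b (uu a b s)) =ᶠ[nhds t] phi a b := by
    filter_upwards [IsOpen.mem_nhds isOpen_Ioi hct] with s hs
    exact phi_uu hb hab hs
  have h4 : HasDerivAt (phi a b) (Phi a b (uu a b t) * UU a b t) t := by
    rw [show (fun s => phi a b (uu a b s)) = phi a b ∘ uu a b from rfl] at h3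
    exact h2.congr_of_eventuallyEq h3.symm
  exact (h4.unique (hasDerivAt_phi (hden' hb hab hct)))

lemma chain_vv : Phi a b (vv a b t) * VV a b t = Phi a b t := by
  have hv2 : vv a b t ^ 2 - b ≠ 0 := (vv_sq_gt hb hab hct).ne'
  have h1 : HasDerivAt (phi a b) (Phi a b (vv a b t)) (vv a b t) := hasDerivAt_phi hv2
  have h2 := h1.comp t (hasDerivAt_vv hb hab hct)
  have h3 : (fun s => phi a b (vv a b s)) =ᶠ[nhds t] phi a b := by
    filter_upwards [IsOpen.mem_nhds isOpen_Ioi hct] with s hs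
    exact phi_vv hb hab hs
  have h4 : HasDerivAt (phi a b) (Phi a b (vv a b t) * VV a b t) t := by
    exact h2.congr_of_eventuallyEq h3.symm
  exact (h4.unique (hasDerivAt_phi (hden' hb hab hct)))

lemma UUpos : 0 < UU a b t := by
  have h1 := chain_uu hb hab hct
  have h2 := phiPos_of_ne (a := a) (b := b) hb hab _ ((uu_sq_lt hb hab hct).ne)
  have h3 := phiPos_of_ne (a := a) (b := b) hb hab t (hden' hb hab hct)
  by_contra h
  push_neg at h
  nlinarith

lemma VVpos : 0 < VV a b t := by
  have h1 := chain_vv hb hab hct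
  have h2 := phiPos_of_ne (a := a) (b := b) hb hab _ ((vv_sq_gt hb hab hct).ne')
  have h3 := phiPos_of_ne (a := a) (b := b) hb hab t (hden' hb hab hct)
  by_contra h
  push_neg at h
  nlinarith


omit hb hab hct in
lemma gen_alg (s m mp Ep : ℝ) (hs : s ≠ 0) :
    ((-mp + Ep / (2 * s)) / 2) * ((-m + s) / 2) ^ 2 + ((-mp - Ep / (2 * s)) / 2) * ((-m - s) / 2) ^ 2
      = -(Ep * m + mp * (s ^ 2 + m ^ 2)) / 4 := by
  field_simp
  ring

lemma key_identity :
    UU a b t * uu a b t ^ 2 + VV a b t * vv a b t ^ 2 + t ^ 2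
      = ((phi a b t) ^ 2 + (a - b)) * Phi a b t := by
  have hs0 : Real.sqrt (EE a b t) ≠ 0 := (hSpos hb hab hct).ne'
  have hden := hden' hb hab hct
  have ht0 : t ≠ 0 := (htpos hb hab hct).ne'
  have hgen := gen_alg (Real.sqrt (EE a b t)) (mm a b t) (mp a b t) (Ep a b t) hs0
  rw [hS2 hb hab hct] at hgen
  have hUV : UU a b t * uu a b t ^ 2 + VV a b t * vv a b t ^ 2
      = -(Ep a b t * mm a b t + mp a b t * (EE a b t + mm a b t ^ 2)) / 4 := by
    unfold UU VV uu vv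
    linear_combination hgen
  rw [hUV]
  unfold Ep mp mm EE phi Phi
  field_simp
  ring


lemma phi_eq_sub : phi a b t = t - mm a b t := by
  have hden := hden' hb hab hct
  unfold phi mm
  field_simp
  ring

lemma prod_uv : (t ^ 2 - b) * (uu a b t * vv a b t) + b * (t ^ 2 - a) = 0 := by
  have hwu := hw_u hb hab hct
  have hwv := hw_v hb hab hct
  have hs := hS2c hb hab hct
  have hden := hden' hb hab hct
  have h4 : 4 * (t ^ 2 - b) * ((t ^ 2 - b) * (uu a b t * vv a b t) + b * (t ^ 2 - a)) = 0 := by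
    linear_combination (2 * (t ^ 2 - b) * vv a b t) * hwu
      + (Real.sqrt (EE a b t) * (t ^ 2 - b) - (a - b) * t) * hwv - hs
  exact (mul_eq_zero.mp h4).resolve_left (by positivity)

lemma sum_uv : (t ^ 2 - b) * (uu a b t + vv a b t) + (a - b) * t = 0 := by
  have hwu := hw_u hb hab hct
  have hwv := hw_v hb hab hct
  linear_combination (1/2) * hwu + (1/2) * hwv

lemma quad_factor (s : ℝ) :
    (t ^ 2 - b) * ((s - uu a b t) * (s - vv a b t))
      = (t ^ 2 - b) * s ^ 2 + (a - b) * t * s - b * (t ^ 2 - a) := by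
  have h1 := sum_uv hb hab hct
  have h2 := prod_uv hb hab hct
  linear_combination (-s) * h1 + h2

omit hct in
include hb hab in
lemma phi_surj (x : ℝ) : ∃ t : ℝ, Real.sqrt b < t ∧ phi a b t = x := by
  have hc0 : 0 < Real.sqrt b := Real.sqrt_pos.mpr hb
  have hc2 : Real.sqrt b ^ 2 = b := Real.sq_sqrt hb.le
  set c := Real.sqrt b with hcdef
  set K : ℝ := c * (a - b) / 2 with hK
  have hK0 : 0 < K := by rw [hK]; exact div_pos (mul_pos hc0 (by linarith)) (by norm_num)
  set d : ℝ := min (K / (|x| + 1)) ((a - b) / 2) with hd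
  have hd0 : 0 < d := by
    apply lt_min
    · positivity
    · linarith
  set tlo : ℝ := Real.sqrt (b + d) with htlo
  set thi : ℝ := max (Real.sqrt (b + 2 * (a - b))) (max (2 * |x| + 1) (c + 1)) with hthi
  have htlo_gt : c < tlo := Real.sqrt_lt_sqrt hb.le (by linarith)
  have htlo_sq : tlo ^ 2 = b + d := Real.sq_sqrt (by linarith)
  have htlo_pos : 0 < tlo := lt_trans hc0 htlo_gt
  have hthi_gt : c < thi := by
    have : c + 1 ≤ thi := le_trans (le_max_right _ _) (le_max_right _ _)
    linarith
  have hthi_pos : 0 < thi := lt_trans hc0 hthi_gt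
  have hthi_sq : b + 2 * (a - b) ≤ thi ^ 2 := by
    have h1 : Real.sqrt (b + 2 * (a - b)) ≤ thi := le_max_left _ _
    have h2 := Real.sq_sqrt (by linarith : (0:ℝ) ≤ b + 2 * (a - b))
    nlinarith [Real.sqrt_nonneg (b + 2 * (a - b))]
  have htlo_le : tlo ≤ thi := by
    have h1 : tlo ≤ Real.sqrt (b + 2 * (a - b)) :=
      Real.sqrt_le_sqrt (by have : d ≤ (a - b)/2 := min_le_right _ _; linarith)
    exact le_trans h1 (le_max_left _ _)
  -- phi tlo ≤ x
  have hlo : phi a b tlo ≤ x := by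
    have hdenlo : tlo ^ 2 - b = d := by rw [htlo_sq]; ring
    have hnum : tlo * (tlo ^ 2 - a) ≤ -K := by
      have h1 : tlo ^ 2 - a ≤ -((a - b) / 2) := by
        have : d ≤ (a - b) / 2 := min_le_right _ _
        rw [htlo_sq]; linarith
      rw [hK]
      nlinarith
    have hphi : phi a b tlo = tlo * (tlo ^ 2 - a) / d := by unfold phi; rw [hdenlo]
    have h2 : tlo * (tlo ^ 2 - a) / d ≤ (-K) / d := (div_le_div_iff_of_pos_right hd0).mpr hnum
    have h3 : |x| + 1 ≤ K / d := by
      rw [le_div_iff₀ hd0]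
      have h4 : d ≤ K / (|x| + 1) := min_le_left _ _
      have h5 : 0 < |x| + 1 := by positivity
      rw [le_div_iff₀ h5] at h4
      nlinarith
    have h6 : -K / d ≤ -(|x| + 1) := by
      rw [neg_div]
      linarith
    have h7 : -(|x| + 1) ≤ x := by
      have := neg_abs_le x
      linarith
    rw [hphi]
    linarith
  -- x ≤ phi thi
  have hhi : x ≤ phi a b thi := by
    have hdenhi : 0 < thi ^ 2 - b := by linarith
    have hphi : phi a b thi = thi - mm a b thi := phi_eq_sub hb hab hthi_gt
    have hmm : mm a b thi ≤ thi / 2 := by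
      unfold mm
      rw [div_le_iff₀ hdenhi]
      nlinarith
    have h8 : 2 * |x| + 1 ≤ thi := le_trans (le_max_left _ _) (le_max_right _ _)
    have h9 : x ≤ |x| := le_abs_self x
    rw [hphi]
    linarith
  have hsub : Icc tlo thi ⊆ Ioi c := fun z hz => lt_of_lt_of_le htlo_gt hz.1
  have hcont : ContinuousOn (phi a b) (Icc tlo thi) := by
    intro z hz
    have hz2 : z ^ 2 - b ≠ 0 := by
      have := htb hb hab (hsub hz)
      linarith
    exact (hasDerivAt_phi (a := a) hz2).continuousAt.continuousWithinAt
  obtain ⟨tt, htt, htteq⟩ := intermediate_value_Icc htlo_le hcont ⟨hlo, hhi⟩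
  exact ⟨tt, hsub htt, htteq⟩


omit hct in
include hb hab in
lemma root_cases {t y : ℝ} (hct : Real.sqrt b < t) (hy2 : y ^ 2 - b ≠ 0)
    (hyt : y ≠ t) (hphi : phi a b y = phi a b t) : y = uu a b t ∨ y = vv a b t := by
  have hden := hden' hb hab hct
  have hcross : y * (y ^ 2 - a) * (t ^ 2 - b) = t * (t ^ 2 - a) * (y ^ 2 - b) := by
    have := hphi
    unfold phi at this
    rw [div_eq_div_iff hy2 hden] at this
    exact this
  have hQ : (y - t) * ((t ^ 2 - b) * y ^ 2 + (a - b) * t * y - b * (t ^ 2 - a)) = 0 := by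
    linear_combination hcross
  have hQy : (t ^ 2 - b) * y ^ 2 + (a - b) * t * y - b * (t ^ 2 - a) = 0 :=
    (mul_eq_zero.mp hQ).resolve_left (sub_ne_zero.mpr hyt)
  have hfac := quad_factor hb hab hct y
  have h0 : (t ^ 2 - b) * ((y - uu a b t) * (y - vv a b t)) = 0 := by
    rw [hfac]; exact hQy
  have h1 : (y - uu a b t) * (y - vv a b t) = 0 := (mul_eq_zero.mp h0).resolve_left hden
  rcases mul_eq_zero.mp h1 with h | h
  · exact Or.inl (by linarith [sub_eq_zero.mp h])
  · exact Or.inr (by linarith [sub_eq_zero.mp h])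

omit hct in
include hb hab in
lemma uu_image : uu a b '' (Ioi (Real.sqrt b)) = Ioo (-(Real.sqrt b)) (Real.sqrt b) := by
  apply Subset.antisymm
  · rintro y ⟨t, ht, rfl⟩
    exact ⟨neg_lt_uu hb hab ht, uu_lt hb hab ht⟩
  · rintro y ⟨hy1, hy2⟩
    have hc2 : Real.sqrt b ^ 2 = b := Real.sq_sqrt hb.le
    have hy2b : y ^ 2 - b ≠ 0 := by nlinarith
    obtain ⟨t, hct, hphit⟩ := phi_surj hb hab (phi a b y)
    have hyt : y ≠ t := by
      intro h; rw [h] at hy2; exact absurd hct (not_lt.mpr hy2.le)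
    rcases root_cases hb hab hct hy2b hyt hphit.symm with h | h
    · exact ⟨t, hct, h.symm⟩
    · exfalso
      have := vv_lt hb hab hct
      rw [h] at hy1
      linarith
  
omit hct in
include hb hab in
lemma vv_image : vv a b '' (Ioi (Real.sqrt b)) = Iio (-(Real.sqrt b)) := by
  apply Subset.antisymm
  · rintro y ⟨t, ht, rfl⟩
    exact vv_lt hb hab ht
  · intro y hy
    have hc0 : 0 < Real.sqrt b := Real.sqrt_pos.mpr hb
    have hc2 : Real.sqrt b ^ 2 = b := Real.sq_sqrt hb.le
    have hy' : y < -(Real.sqrt b) := hy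
    have hy2b : y ^ 2 - b ≠ 0 := by nlinarith
    obtain ⟨t, hct, hphit⟩ := phi_surj hb hab (phi a b y)
    have hyt : y ≠ t := by
      intro h
      rw [h] at hy'
      linarith [lt_trans (neg_lt_self hc0) hct]
    rcases root_cases hb hab hct hy2b hyt hphit.symm with h | h
    · exfalso
      have := neg_lt_uu hb hab hct
      rw [h] at hy'
      linarith
    · exact ⟨t, hct, h.symm⟩

omit hct in
include hb hab in
lemma phi_image : phi a b '' (Ioi (Real.sqrt b)) = univ := by
  apply eq_univ_of_forall
  intro x
  obtain ⟨t, hct, heq⟩ := phi_surj hb hab x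
  exact ⟨t, hct, heq⟩

omit hct in
include hb hab in
lemma uu_inj : InjOn (uu a b) (Ioi (Real.sqrt b)) := by
  apply StrictMonoOn.injOn
  apply strictMonoOn_of_deriv_pos (convex_Ioi _)
  · intro z hz
    exact (hasDerivAt_uu hb hab hz).continuousAt.continuousWithinAt
  · intro z hz
    rw [interior_Ioi] at hz
    rw [(hasDerivAt_uu hb hab hz).deriv]
    exact UUpos hb hab hz

omit hct in
include hb hab in
lemma vv_inj : InjOn (vv a b) (Ioi (Real.sqrt b)) := by
  apply StrictMonoOn.injOn
  apply strictMonoOn_of_deriv_pos (convex_Ioi _)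
  · intro z hz
    exact (hasDerivAt_vv hb hab hz).continuousAt.continuousWithinAt
  · intro z hz
    rw [interior_Ioi] at hz
    rw [(hasDerivAt_vv hb hab hz).deriv]
    exact VVpos hb hab hz

omit hct in
include hb hab in
lemma phi_inj : InjOn (phi a b) (Ioi (Real.sqrt b)) := by
  apply StrictMonoOn.injOn
  apply strictMonoOn_of_deriv_pos (convex_Ioi _)
  · intro z hz
    exact (hasDerivAt_phi (a := a) (hden' hb hab hz)).continuousAt.continuousWithinAt
  · intro z hz
    rw [interior_Ioi] at hz
    rw [(hasDerivAt_phi (a := a) (hden' hb hab hz)).deriv]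
    exact phiPos_of_ne hb hab z (hden' hb hab hz)


omit hb hab hct in
lemma g_meas : Measurable (g a b) := by
  unfold g
  fun_prop

omit hb hab hct in
lemma g_nonneg (y : ℝ) : 0 ≤ g a b y := by
  unfold g
  positivity

omit hb hab hct in
lemma g_even (y : ℝ) : g a b (-y) = g a b y := by
  unfold g
  have h : -y * ((-y) ^ 2 - a) / ((-y) ^ 2 - b) = -(y * (y ^ 2 - a) / (y ^ 2 - b)) := by
    ring
  rw [h]
  ring_nf

omit hb hab hct in
lemma sq_exp_integrable : Integrable (fun x : ℝ => x ^ 2 * Real.exp (-x ^ 2)) := by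
  have h1 : Integrable (fun x : ℝ => x ^ (2:ℝ) * Real.exp (-1 * x ^ 2)) :=
    integrable_rpow_mul_exp_neg_mul_sq one_pos (by norm_num)
  convert h1 using 2 with x
  rw [show ((2:ℝ)) = ((2:ℕ):ℝ) by norm_num, Real.rpow_natCast]
  norm_num

omit hb hab hct in
lemma exp_integrable : Integrable (fun x : ℝ => Real.exp (-x ^ 2)) := by
  have h1 : Integrable (fun x : ℝ => Real.exp (-1 * x ^ 2)) := integrable_exp_neg_mul_sq one_pos
  convert h1 using 2 with x
  norm_num

omit hct in
include hb hab in
lemma G_integrable : Integrable (fun x : ℝ => (x ^ 2 + (a - b)) * Real.exp (-x ^ 2)) := by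
  have h := (sq_exp_integrable).add
    (exp_integrable.const_mul (a - b))
  refine h.congr (Filter.Eventually.of_forall fun x => ?_)
  simp only [Pi.add_apply]
  ring

omit hb hab hct in
lemma exp_integral : ∫ x : ℝ, Real.exp (-x ^ 2) = Real.sqrt π := by
  have h := integral_gaussian 1
  simpa using h

omit hb hab hct in
lemma sq_exp_integral : ∫ x : ℝ, x ^ 2 * Real.exp (-x ^ 2) = Real.sqrt π / 2 := by
  set f : ℝ → ℝ := fun x => x ^ 2 * Real.exp (-x ^ 2) with hf
  have hfint := sq_exp_integrable
  have hIoi : ∫ x in Ioi (0:ℝ), f x = Real.sqrt π / 4 := by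
    have h1 := integral_rpow_mul_exp_neg_rpow (p := 2) (q := 2) (by norm_num) (by norm_num)
    have h2 : ∀ x ∈ Ioi (0:ℝ), x ^ (2:ℝ) * Real.exp (-x ^ (2:ℝ)) = f x := by
      intro x hx
      rw [hf]
      rw [show ((2:ℝ)) = ((2:ℕ):ℝ) by norm_num, Real.rpow_natCast]
    rw [setIntegral_congr_fun measurableSet_Ioi h2] at h1
    rw [h1, show ((2:ℝ)+1)/2 = 1/2 + 1 by norm_num,
      Real.Gamma_add_one (by norm_num), Real.Gamma_one_half_eq]
    ring
  have heven : ∫ x in Iic (0:ℝ), f x = ∫ x in Ioi (0:ℝ), f x := by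
    have h1 := integral_comp_neg_Ioi (0:ℝ) f
    have h2 : (fun x => f (-x)) = f := by
      funext x
      simp only [hf, neg_sq]
    rw [neg_zero] at h1
    simp only [h2] at h1
    exact h1.symm
  have htot := integral_add_compl (measurableSet_Ioi (a := (0:ℝ))) hfint
  rw [compl_Ioi] at htot
  linarith


omit hct in
include hb hab in
lemma change_u : ∫ y in Ioo (-Real.sqrt b) (Real.sqrt b), g a b y
    = ∫ t in Ioi (Real.sqrt b), |UU a b t| • g a b (uu a b t) := by
  rw [← uu_image hb hab]
  exact integral_image_eq_integral_abs_deriv_smul measurableSet_Ioi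
    (fun z hz => (hasDerivAt_uu hb hab hz).hasDerivWithinAt) (uu_inj hb hab) _

omit hct in
include hb hab in
lemma change_v : ∫ y in Iio (-Real.sqrt b), g a b y
    = ∫ t in Ioi (Real.sqrt b), |VV a b t| • g a b (vv a b t) := by
  rw [← vv_image hb hab]
  exact integral_image_eq_integral_abs_deriv_smul measurableSet_Ioi
    (fun z hz => (hasDerivAt_vv hb hab hz).hasDerivWithinAt) (vv_inj hb hab) _

omit hct in
include hb hab in
lemma change_phi : ∫ x : ℝ, (x ^ 2 + (a - b)) * Real.exp (-x ^ 2)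
    = ∫ t in Ioi (Real.sqrt b),
        |Phi a b t| • ((phi a b t ^ 2 + (a - b)) * Real.exp (-(phi a b t) ^ 2)) := by
  have h := integral_image_eq_integral_abs_deriv_smul measurableSet_Ioi
    (fun z hz => (hasDerivAt_phi (a := a) (hden' hb hab hz)).hasDerivWithinAt)
    (phi_inj hb hab) (fun x => (x ^ 2 + (a - b)) * Real.exp (-x ^ 2))
  rw [phi_image hb hab, setIntegral_univ] at h
  exact h

omit hct in
include hb hab in
lemma dom_int : IntegrableOn
    (fun t => |Phi a b t| • ((phi a b t ^ 2 + (a - b)) * Real.exp (-(phi a b t) ^ 2)))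
    (Ioi (Real.sqrt b)) := by
  have h := integrableOn_image_iff_integrableOn_abs_deriv_smul measurableSet_Ioi
    (fun z hz => (hasDerivAt_phi (a := a) (hden' hb hab hz)).hasDerivWithinAt)
    (phi_inj hb hab) (fun x => (x ^ 2 + (a - b)) * Real.exp (-x ^ 2))
  rw [phi_image hb hab] at h
  exact h.mp (G_integrable hb hab).integrableOn

omit hct in
include hb hab in
lemma pointwise_id : ∀ t ∈ Ioi (Real.sqrt b),
    |UU a b t| • g a b (uu a b t) + |VV a b t| • g a b (vv a b t) + g a b t
      = |Phi a b t| • ((phi a b t ^ 2 + (a - b)) * Real.exp (-(phi a b t) ^ 2)) := by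
  intro t hct
  rw [abs_of_pos (UUpos hb hab hct), abs_of_pos (VVpos hb hab hct),
    abs_of_pos (phiPos_of_ne hb hab t (hden' hb hab hct))]
  simp only [smul_eq_mul]
  have hgu : g a b (uu a b t) = uu a b t ^ 2 * Real.exp (-(phi a b t) ^ 2) := by
    rw [gval, phi_uu hb hab hct]
  have hgv : g a b (vv a b t) = vv a b t ^ 2 * Real.exp (-(phi a b t) ^ 2) := by
    rw [gval, phi_vv hb hab hct]
  rw [hgu, hgv, gval]
  have hk := key_identity hb hab hct
  have he : (0:ℝ) < Real.exp (-(phi a b t) ^ 2) := Real.exp_pos _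
  nlinarith [hk, he]

omit hb hab hct in
lemma pieceU_meas : Measurable (fun t => |UU a b t| • g a b (uu a b t)) := by
  unfold UU uu Ep mp mm EE g
  fun_prop

omit hb hab hct in
lemma pieceV_meas : Measurable (fun t => |VV a b t| • g a b (vv a b t)) := by
  unfold VV vv Ep mp mm EE g
  fun_prop


omit hb hab hct in
lemma pieceU_nonneg (t : ℝ) : 0 ≤ |UU a b t| • g a b (uu a b t) := by
  simp only [smul_eq_mul]
  exact mul_nonneg (abs_nonneg _) (g_nonneg _)

omit hb hab hct in
lemma pieceV_nonneg (t : ℝ) : 0 ≤ |VV a b t| • g a b (vv a b t) := by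
  simp only [smul_eq_mul]
  exact mul_nonneg (abs_nonneg _) (g_nonneg _)

omit hct in
include hb hab in
lemma int_u : IntegrableOn (fun t => |UU a b t| • g a b (uu a b t)) (Ioi (Real.sqrt b)) := by
  apply Integrable.mono' (dom_int hb hab) pieceU_meas.aestronglyMeasurable
  filter_upwards [ae_restrict_mem measurableSet_Ioi] with t hct
  have hid := pointwise_id hb hab t hct
  have h1 := pieceV_nonneg (a := a) (b := b) t
  have h2 := g_nonneg (a := a) (b := b) t
  have h3 := pieceU_nonneg (a := a) (b := b) t
  rw [Real.norm_eq_abs, abs_of_nonneg h3]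
  linarith

omit hct in
include hb hab in
lemma int_v : IntegrableOn (fun t => |VV a b t| • g a b (vv a b t)) (Ioi (Real.sqrt b)) := by
  apply Integrable.mono' (dom_int hb hab) pieceV_meas.aestronglyMeasurable
  filter_upwards [ae_restrict_mem measurableSet_Ioi] with t hct
  have hid := pointwise_id hb hab t hct
  have h1 := pieceV_nonneg (a := a) (b := b) t
  have h2 := g_nonneg (a := a) (b := b) t
  have h3 := pieceU_nonneg (a := a) (b := b) t
  rw [Real.norm_eq_abs, abs_of_nonneg h1]
  linarith

omit hct in
include hb hab in
lemma int_g : IntegrableOn (g a b) (Ioi (Real.sqrt b)) := by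
  apply Integrable.mono' (dom_int hb hab) g_meas.aestronglyMeasurable
  filter_upwards [ae_restrict_mem measurableSet_Ioi] with t hct
  have hid := pointwise_id hb hab t hct
  have h1 := pieceV_nonneg (a := a) (b := b) t
  have h2 := g_nonneg (a := a) (b := b) t
  have h3 := pieceU_nonneg (a := a) (b := b) t
  rw [Real.norm_eq_abs, abs_of_nonneg h2]
  linarith

omit hct in
include hb hab in
lemma gOoo : IntegrableOn (g a b) (Ioo (-Real.sqrt b) (Real.sqrt b)) := by
  have h := integrableOn_image_iff_integrableOn_abs_deriv_smul measurableSet_Ioi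
    (fun z hz => (hasDerivAt_uu hb hab hz).hasDerivWithinAt) (uu_inj hb hab) (g a b)
  rw [uu_image hb hab] at h
  exact h.mpr (int_u hb hab)

omit hct in
include hb hab in
lemma sum_eq : ∫ t in Ioi (Real.sqrt b),
      |Phi a b t| • ((phi a b t ^ 2 + (a - b)) * Real.exp (-(phi a b t) ^ 2))
    = (∫ t in Ioi (Real.sqrt b), |UU a b t| • g a b (uu a b t))
      + (∫ t in Ioi (Real.sqrt b), |VV a b t| • g a b (vv a b t))
      + ∫ t in Ioi (Real.sqrt b), g a b t := by
  have h0 : EqOn (fun t => |Phi a b t| • ((phi a b t ^ 2 + (a - b)) * Real.exp (-(phi a b t) ^ 2)))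
      (fun t => |UU a b t| • g a b (uu a b t) + |VV a b t| • g a b (vv a b t) + g a b t)
      (Ioi (Real.sqrt b)) := fun t ht => pointwise_id hb hab t ht |>.symm
  rw [setIntegral_congr_fun measurableSet_Ioi h0]
  have hI1 : Integrable (fun t => |UU a b t| • g a b (uu a b t) + |VV a b t| • g a b (vv a b t))
      (volume.restrict (Ioi (Real.sqrt b))) := (int_u hb hab).add (int_v hb hab)
  rw [integral_add hI1 (int_g hb hab), integral_add (int_u hb hab) (int_v hb hab)]

omit hct in
include hb hab in
lemma ioo_split : ∫ y in Ioo (-Real.sqrt b) (Real.sqrt b), g a b y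
    = 2 * ∫ y in Ioo (0:ℝ) (Real.sqrt b), g a b y := by
  have hc0 : 0 < Real.sqrt b := Real.sqrt_pos.mpr hb
  have h1 : IntervalIntegrable (g a b) volume (-Real.sqrt b) 0 :=
    (intervalIntegrable_iff_integrableOn_Ioo_of_le (by linarith)).mpr
      ((gOoo hb hab).mono_set (Ioo_subset_Ioo_right hc0.le))
  have h2 : IntervalIntegrable (g a b) volume 0 (Real.sqrt b) :=
    (intervalIntegrable_iff_integrableOn_Ioo_of_le hc0.le).mpr
      ((gOoo hb hab).mono_set (Ioo_subset_Ioo_left (by linarith)))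
  have hadj := intervalIntegral.integral_add_adjacent_intervals h1 h2
  have hrefl : ∫ x in (-Real.sqrt b)..0, g a b x = ∫ x in (0:ℝ)..(Real.sqrt b), g a b x := by
    have h := intervalIntegral.integral_comp_neg (a := (0:ℝ)) (b := Real.sqrt b) (g a b)
    simp only [g_even, neg_zero] at h
    exact h.symm
  have e1 : ∫ y in Ioo (-Real.sqrt b) (Real.sqrt b), g a b y
      = ∫ x in (-Real.sqrt b)..(Real.sqrt b), g a b x := by
    rw [intervalIntegral.integral_of_le (by linarith), integral_Ioc_eq_integral_Ioo]
  have e2 : ∫ y in Ioo (0:ℝ) (Real.sqrt b), g a b y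
      = ∫ x in (0:ℝ)..(Real.sqrt b), g a b x := by
    rw [intervalIntegral.integral_of_le hc0.le, integral_Ioc_eq_integral_Ioo]
  rw [e1, e2, ← hadj, hrefl]
  ring

omit hct in
include hb hab in
lemma iio_eq : ∫ y in Iio (-Real.sqrt b), g a b y = ∫ t in Ioi (Real.sqrt b), g a b t := by
  have h := integral_comp_neg_Ioi (Real.sqrt b) (g a b)
  simp only [g_even] at h
  rw [integral_Iic_eq_integral_Iio] at h
  exact h.symm

end GK
end GK

theorem example_integral_I1' (a b : ℝ) (hb : 0 < b) (hab : b < a) :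
    (∫ t in Ioo (0:ℝ) (Real.sqrt b), t ^ 2 * Real.exp (-(t * (t ^ 2 - a) / (t ^ 2 - b)) ^ 2)) +
    (∫ t in Ioi (Real.sqrt b), t ^ 2 * Real.exp (-(t * (t ^ 2 - a) / (t ^ 2 - b)) ^ 2))
      = Real.sqrt π / 2 * (a - b + 1/2) := by
  show (∫ t in Ioo (0:ℝ) (Real.sqrt b), GK.g a b t) + (∫ t in Ioi (Real.sqrt b), GK.g a b t)
      = Real.sqrt π / 2 * (a - b + 1/2)
  have e0 : ∫ x : ℝ, (x ^ 2 + (a - b)) * Real.exp (-x ^ 2)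
      = Real.sqrt π / 2 + (a - b) * Real.sqrt π := by
    have h1 : ∫ x : ℝ, (x ^ 2 + (a - b)) * Real.exp (-x ^ 2)
        = (∫ x : ℝ, x ^ 2 * Real.exp (-x ^ 2)) + ∫ x : ℝ, (a - b) * Real.exp (-x ^ 2) := by
      rw [← integral_add GK.sq_exp_integrable (GK.exp_integrable.const_mul (a - b))]
      congr 1
      funext x
      ring
    rw [h1, GK.sq_exp_integral, integral_const_mul, GK.exp_integral]
  have e1 := GK.change_phi hb hab
  have e2 := GK.sum_eq hb hab
  have e3 := GK.change_u hb hab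
  have e4 := GK.change_v hb hab
  have e5 := GK.ioo_split hb hab
  have e6 := GK.iio_eq hb hab
  have hfin : Real.sqrt π / 2 + (a - b) * Real.sqrt π
      = 2 * (∫ t in Ioo (0:ℝ) (Real.sqrt b), GK.g a b t)
        + (∫ t in Ioi (Real.sqrt b), GK.g a b t) + ∫ t in Ioi (Real.sqrt b), GK.g a b t := by
    rw [← e0, e1, e2, ← e3, ← e4, e5, e6]
  have hhalf : Real.sqrt π / 2 * (a - b + 1/2)
      = (Real.sqrt π / 2 + (a - b) * Real.sqrt π) / 2 := by ring
  rw [hhalf]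
  linarith
end

section
/- For all real x not an integer, π/tan(π x) = 1/x + Σ_{k=1}^∞ (1/(x - k) + 1/(x + k)), where the series converges. -/
open Real

open Complex Filter Finset Metric Topology


lemma norm_prod_one_add_sub_one_le (s : Finset ℕ) (a : ℕ → ℂ) :
    ‖∏ i ∈ s, (1 + a i) - 1‖ ≤ ∏ i ∈ s, (1 + ‖a i‖) - 1 := by
  induction s using Finset.cons_induction with
  | empty => simp
  | cons j s hj ih =>
    have hP : ‖∏ i ∈ s, (1 + a i)‖ ≤ ∏ i ∈ s, (1 + ‖a i‖) := by
      refine (Finset.norm_prod_le _ _).trans (Finset.prod_le_prod (fun i _ => norm_nonneg _)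
        fun i _ => (norm_add_le _ _).trans (by simp))
    rw [Finset.prod_cons, Finset.prod_cons]
    calc ‖(1 + a j) * ∏ i ∈ s, (1 + a i) - 1‖
        = ‖(∏ i ∈ s, (1 + a i) - 1) + a j * ∏ i ∈ s, (1 + a i)‖ := by congr 1; ring
      _ ≤ ‖∏ i ∈ s, (1 + a i) - 1‖ + ‖a j‖ * ‖∏ i ∈ s, (1 + a i)‖ := by
          refine (norm_add_le _ _).trans ?_; rw [norm_mul]
      _ ≤ (∏ i ∈ s, (1 + ‖a i‖) - 1) + ‖a j‖ * ∏ i ∈ s, (1 + ‖a i‖) := by gcongr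
      _ = (1 + ‖a j‖) * ∏ i ∈ s, (1 + ‖a i‖) - 1 := by ring

lemma prod_one_add_le_exp_sum (s : Finset ℕ) (b : ℕ → ℝ) (hb : ∀ i, 0 ≤ b i) :
    ∏ i ∈ s, (1 + b i) ≤ Real.exp (∑ i ∈ s, b i) := by
  rw [Real.exp_sum]
  exact Finset.prod_le_prod (fun i _ => by have := hb i; linarith) fun i _ => by
    simpa [add_comm] using Real.add_one_le_exp (b i)

lemma euler_tlu : TendstoLocallyUniformly
    (fun (n : ℕ) (z : ℂ) => ↑π * z * ∏ j ∈ Finset.range n, (1 - z ^ 2 / ((j : ℂ) + 1) ^ 2))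
    (fun z => Complex.sin (π * z)) atTop := by
  rw [tendstoLocallyUniformly_iff_forall_isCompact]
  intro K hK
  obtain ⟨R0, hR0⟩ := hK.isBounded.subset_closedBall 0
  have hR : K ⊆ closedBall 0 |R0| :=
    hR0.trans (closedBall_subset_closedBall (le_abs_self _))
  set R := |R0| with hRdef
  have hR0' : 0 ≤ R := abs_nonneg _
  refine TendstoUniformlyOn.mono ?_ hR
  set F : ℕ → ℂ → ℂ :=
    fun n z => ↑π * z * ∏ j ∈ Finset.range n, (1 - z ^ 2 / ((j : ℂ) + 1) ^ 2) with hF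
  -- the bounding sequence
  set b : ℕ → ℝ := fun j => R ^ 2 / ((j : ℝ) + 1) ^ 2 with hbdef
  have hb : ∀ j, 0 ≤ b j := fun j => by positivity
  have hbsum : Summable b := by
    have h1 : Summable (fun j : ℕ => 1 / ((j : ℝ) + 1) ^ 2) := by
      have := (summable_nat_add_iff (f := fun n : ℕ => 1 / (n : ℝ) ^ 2) 1).mpr
        (summable_one_div_nat_pow.mpr one_lt_two)
      simpa using this
    simpa [hbdef, div_eq_mul_inv, one_div] using h1.mul_left (R ^ 2)
  set S : ℕ → ℝ := fun n => ∑ j ∈ Finset.range n, b j with hSdef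
  have hScauchy : CauchySeq S := hbsum.hasSum.tendsto_sum_nat.cauchySeq
  have hSle : ∀ n, S n ≤ ∑' j, b j := fun n => Summable.sum_le_tsum _ (fun i _ => hb i) hbsum
  set L : ℝ := ∑' j, b j with hLdef
  set C : ℝ := (π * R + 1) * Real.exp L with hCdef
  have hC : 0 < C := by
    have : 0 ≤ π * R := by positivity
    positivity
  -- norm bounds on factors
  have hnorm : ∀ (z : ℂ), z ∈ closedBall (0 : ℂ) R → ∀ j : ℕ,
      ‖z ^ 2 / ((j : ℂ) + 1) ^ 2‖ ≤ b j := by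
    intro z hz j
    have hz' : ‖z‖ ≤ R := by simpa [dist_eq_norm] using hz
    have h2 : ((j : ℂ) + 1) = (((j : ℝ) + 1 : ℝ) : ℂ) := by push_cast; ring
    rw [norm_div, norm_pow, norm_pow, h2, Complex.norm_real, Real.norm_eq_abs]
    have : |((j : ℝ) + 1)| = (j : ℝ) + 1 := abs_of_pos (by positivity)
    rw [this, hbdef]
    exact (div_le_div_iff_of_pos_right (by positivity)).mpr (pow_le_pow_left₀ (norm_nonneg z) hz' 2)
  have hfac : ∀ (z : ℂ), z ∈ closedBall (0 : ℂ) R → ∀ (s : Finset ℕ),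
      ‖∏ j ∈ s, (1 - z ^ 2 / ((j : ℂ) + 1) ^ 2)‖ ≤ Real.exp (∑ j ∈ s, b j) := by
    intro z hz s
    refine le_trans (Finset.norm_prod_le _ _) ?_
    refine le_trans (Finset.prod_le_prod (fun i _ => norm_nonneg _) (fun i _ => ?_))
      ((Finset.prod_le_prod (fun i _ => by have := hb i; linarith)
        (fun i _ => le_refl _)).trans (prod_one_add_le_exp_sum s b hb))
    calc ‖1 - z ^ 2 / ((i : ℂ) + 1) ^ 2‖ ≤ ‖(1 : ℂ)‖ + ‖z ^ 2 / ((i : ℂ) + 1) ^ 2‖ :=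
          norm_sub_le _ _
      _ ≤ 1 + b i := by rw [norm_one]; linarith [hnorm z hz i]
  -- the uniform bound on F m
  have hFbound : ∀ (z : ℂ), z ∈ closedBall (0 : ℂ) R → ∀ m, ‖F m z‖ ≤ C := by
    intro z hz m
    have hz' : ‖z‖ ≤ R := by simpa [dist_eq_norm] using hz
    rw [hF]
    simp only [norm_mul, Complex.norm_real, Real.norm_eq_abs, abs_of_pos pi_pos]
    calc π * ‖z‖ * ‖∏ j ∈ Finset.range m, (1 - z ^ 2 / ((j : ℂ) + 1) ^ 2)‖
        ≤ π * R * Real.exp (S m) := by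
          apply mul_le_mul (by gcongr) (hfac z hz _) (norm_nonneg _)
          positivity
      _ ≤ (π * R + 1) * Real.exp L := by
          have h1 : Real.exp (S m) ≤ Real.exp L := Real.exp_le_exp.mpr (hSle m)
          have : 0 ≤ π * R := by positivity
          nlinarith [Real.exp_pos (S m), Real.exp_pos L]
  -- uniform Cauchy
  have hUC : UniformCauchySeqOn F atTop (closedBall (0:ℂ) R) := by
    rw [Metric.uniformCauchySeqOn_iff]
    intro ε hε
    have hδpos : 0 < Real.log (1 + ε / (2 * C)) := by
      apply Real.log_pos; have : 0 < ε / (2 * C) := by positivity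
      linarith
    set δ := Real.log (1 + ε / (2 * C)) with hδdef
    obtain ⟨N, hN⟩ := Metric.cauchySeq_iff.mp hScauchy δ hδpos
    refine ⟨N, ?_⟩
    have key : ∀ m n, N ≤ m → m ≤ n → ∀ z ∈ closedBall (0:ℂ) R,
        dist (F m z) (F n z) < ε := by
      intro m n hm hmn z hz
      have hn : N ≤ n := hm.trans hmn
      have hSmn : S n - S m < δ := by
        have := hN n hn m hm
        rw [Real.dist_eq] at this
        calc S n - S m ≤ |S n - S m| := le_abs_self _
          _ < δ := this
      have hsplit : F n z = F m z * ∏ j ∈ Finset.Ico m n, (1 - z ^ 2 / ((j : ℂ) + 1) ^ 2) := by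
        rw [hF]; rw [mul_assoc, Finset.prod_range_mul_prod_Ico _ hmn]
      rw [dist_eq_norm, hsplit]
      have e1 : F m z - F m z * ∏ j ∈ Finset.Ico m n, (1 - z ^ 2 / ((j : ℂ) + 1) ^ 2)
          = F m z * (1 - ∏ j ∈ Finset.Ico m n, (1 - z ^ 2 / ((j : ℂ) + 1) ^ 2)) := by ring
      rw [e1, norm_mul]
      have h2 : ‖(1 : ℂ) - ∏ j ∈ Finset.Ico m n, (1 - z ^ 2 / ((j : ℂ) + 1) ^ 2)‖
          ≤ Real.exp (S n - S m) - 1 := by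
        rw [norm_sub_rev]
        have := _root_.norm_prod_one_add_sub_one_le (Finset.Ico m n)
          (fun j => -(z ^ 2 / ((j : ℂ) + 1) ^ 2))
        simp only [← sub_eq_add_neg] at this
        refine this.trans ?_
        have h3 : ∏ i ∈ Finset.Ico m n, (1 + ‖-(z ^ 2 / ((i : ℂ) + 1) ^ 2)‖)
            ≤ Real.exp (∑ i ∈ Finset.Ico m n, b i) := by
          refine le_trans (Finset.prod_le_prod (fun i _ => by positivity) (fun i _ => ?_))
            (prod_one_add_le_exp_sum _ b hb)
          rw [norm_neg]; linarith [hnorm z hz i]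
        have h4 : ∑ i ∈ Finset.Ico m n, b i = S n - S m := by
          rw [hSdef]; rw [Finset.sum_Ico_eq_sub _ hmn]
        rw [h4] at h3; linarith
      calc ‖F m z‖ * ‖(1:ℂ) - ∏ j ∈ Finset.Ico m n, (1 - z ^ 2 / ((j : ℂ) + 1) ^ 2)‖
          ≤ C * (Real.exp (S n - S m) - 1) := by
            apply mul_le_mul (hFbound z hz m) h2 (norm_nonneg _) hC.le
        _ < C * (Real.exp δ - 1) := by
            have := Real.exp_lt_exp.mpr hSmn
            have h5 : (0:ℝ) < Real.exp δ - Real.exp (S n - S m) := by linarith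
            nlinarith
        _ = C * (ε / (2 * C)) := by
            rw [hδdef, Real.exp_log (by positivity)]; ring
        _ = ε / 2 := by field_simp
        _ < ε := by linarith
    intro m hm n hn z hz
    rcases le_total m n with h | h
    · exact key m n hm h z hz
    · rw [dist_comm]; exact key n m hn h z hz
  exact hUC.tendstoUniformlyOn_of_tendsto
    (fun z _ => Complex.tendsto_euler_sin_prod z)

set_option maxHeartbeats 1000000 in
theorem cot_partial_fractions (x : ℝ) (hx : ∀ n : ℤ, x ≠ n) :
    HasSum (fun k : ℕ => 1 / (x - (k + 1)) + 1 / (x + (k + 1)))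
      (π / Real.tan (π * x) - 1 / x) := by
  have hX : ∀ n : ℤ, (x : ℂ) ≠ (n : ℂ) := by
    intro n h
    exact hx n (by exact_mod_cast h)
  set X : ℂ := (x : ℂ) with hXdef
  have hX0 : X ≠ 0 := by simpa using hX 0
  have hXsub : ∀ j : ℕ, X - ((j : ℂ) + 1) ≠ 0 := by
    intro j h
    apply hX ((j : ℤ) + 1)
    rw [sub_eq_zero] at h; rw [h]; push_cast; ring
  have hXadd : ∀ j : ℕ, X + ((j : ℂ) + 1) ≠ 0 := by
    intro j h
    apply hX (-((j : ℤ) + 1))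
    rw [add_eq_zero_iff_eq_neg] at h; rw [h]; push_cast; ring
  have hc0 : ∀ j : ℕ, ((j : ℂ) + 1) ≠ 0 := by
    intro j h
    have : ((j : ℂ) + 1) = ((j + 1 : ℕ) : ℂ) := by push_cast; ring
    rw [this] at h
    exact Nat.cast_ne_zero.mpr (Nat.succ_ne_zero j) h
  have hfacne : ∀ j : ℕ, (1 : ℂ) - X ^ 2 / ((j : ℂ) + 1) ^ 2 ≠ 0 := by
    intro j h
    have h2 : X ^ 2 = ((j : ℂ) + 1) ^ 2 := by
      field_simp [hc0 j] at h
      linear_combination -h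
    have h3 : (X - ((j : ℂ) + 1)) * (X + ((j : ℂ) + 1)) = 0 := by
      linear_combination h2
    rcases mul_eq_zero.mp h3 with h4 | h4
    · exact hXsub j h4
    · exact hXadd j h4
  have hsin : Complex.sin (↑π * X) ≠ 0 := by
    rw [Complex.sin_ne_zero_iff]
    intro k h
    apply hX k
    have hπ : (↑π : ℂ) ≠ 0 := Complex.ofReal_ne_zero.mpr pi_ne_zero
    rw [mul_comm] at h
    exact mul_right_cancel₀ hπ h
  -- differentiability of the partial products
  have hdiff : ∀ n : ℕ, DifferentiableOn ℂ
      (fun z : ℂ => ↑π * z * ∏ j ∈ Finset.range n, (1 - z ^ 2 / ((j : ℂ) + 1) ^ 2))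
      Set.univ := by
    intro n
    apply Differentiable.differentiableOn
    apply Differentiable.mul
    · exact (differentiable_const _).mul differentiable_id
    · apply Differentiable.fun_finsetProd
      intro j _
      exact (differentiable_const _).sub ((differentiable_pow 2).div_const _)
  -- logDeriv of the partial products
  have hlog : ∀ n : ℕ, logDeriv
      (fun z : ℂ => ↑π * z * ∏ j ∈ Finset.range n, (1 - z ^ 2 / ((j : ℂ) + 1) ^ 2)) X
      = 1 / X + ∑ j ∈ Finset.range n, (1 / (X - ((j : ℂ) + 1)) + 1 / (X + ((j : ℂ) + 1))) := by
    intro n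
    have e1 : logDeriv (fun z : ℂ => ↑π * z *
        ∏ j ∈ Finset.range n, (1 - z ^ 2 / ((j : ℂ) + 1) ^ 2)) X
        = logDeriv (fun z : ℂ => ↑π * z) X +
          logDeriv (fun z : ℂ => ∏ j ∈ Finset.range n, (1 - z ^ 2 / ((j : ℂ) + 1) ^ 2)) X := by
      apply logDeriv_mul
      · exact mul_ne_zero (Complex.ofReal_ne_zero.mpr pi_ne_zero) hX0
      · exact Finset.prod_ne_zero_iff.mpr fun j _ => hfacne j
      · exact ((differentiable_const _).mul differentiable_id).differentiableAt
      · exact (Differentiable.fun_finsetProd fun j _ =>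
          (differentiable_const _).sub ((differentiable_pow 2).div_const _)).differentiableAt
    have e2 : logDeriv (fun z : ℂ => ↑π * z) X = 1 / X := by
      rw [logDeriv_const_mul _ _ (Complex.ofReal_ne_zero.mpr pi_ne_zero)]
      exact logDeriv_id' X
    have e3 : logDeriv (fun z : ℂ =>
        ∏ j ∈ Finset.range n, (1 - z ^ 2 / ((j : ℂ) + 1) ^ 2)) X
        = ∑ j ∈ Finset.range n, (1 / (X - ((j : ℂ) + 1)) + 1 / (X + ((j : ℂ) + 1))) := by
      have hprod := logDeriv_prod (s := Finset.range n)
        (f := fun (j : ℕ) (z : ℂ) => 1 - z ^ 2 / ((j : ℂ) + 1) ^ 2) (x := X) (fun j _ => hfacne j)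
        (fun j _ =>
          ((differentiable_const _).sub ((differentiable_pow 2).div_const _)).differentiableAt)
      rw [hprod]
      apply Finset.sum_congr rfl
      intro j _
      have hder : HasDerivAt (fun z : ℂ => 1 - z ^ 2 / ((j : ℂ) + 1) ^ 2)
          (-(2 * X / ((j : ℂ) + 1) ^ 2)) X := by
        have := ((hasDerivAt_pow 2 X).div_const (((j : ℂ) + 1) ^ 2)).const_sub 1
        simpa using this
      rw [logDeriv_apply, hder.deriv, div_eq_iff (hfacne j)]
      have hcc := hc0 j
      have h1 := hXsub j
      have h2 := hXadd j
      field_simp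
      ring
    rw [e1, e2, e3]
  -- logDeriv of the limit
  have hlim : logDeriv (fun z : ℂ => Complex.sin (↑π * z)) X
      = ↑π * Complex.cos (↑π * X) / Complex.sin (↑π * X) := by
    have h1 : HasDerivAt (fun z : ℂ => ↑π * z) (↑π : ℂ) X := by
      simpa using (hasDerivAt_id X).const_mul (↑π : ℂ)
    have hder := h1.csin
    rw [logDeriv_apply, hder.deriv, mul_comm (Complex.cos (↑π * X)) (↑π : ℂ)]
  -- convergence of logDerivs
  have h1 : Tendsto (fun n : ℕ => logDeriv
      (fun z : ℂ => ↑π * z * ∏ j ∈ Finset.range n, (1 - z ^ 2 / ((j : ℂ) + 1) ^ 2)) X) atTop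
      (𝓝 (logDeriv (fun z => Complex.sin (↑π * z)) X)) := by
    have htlu : TendstoLocallyUniformlyOn
        (fun (n : ℕ) (z : ℂ) => ↑π * z * ∏ j ∈ Finset.range n, (1 - z ^ 2 / ((j : ℂ) + 1) ^ 2))
        (fun z => Complex.sin (↑π * z)) atTop Set.univ :=
      euler_tlu.tendstoLocallyUniformlyOn
    have hd := (htlu.deriv (Filter.Eventually.of_forall hdiff) isOpen_univ).tendsto_at
      (Set.mem_univ X)
    have hv := htlu.tendsto_at (Set.mem_univ X)
    simp only [logDeriv_apply]
    exact hd.div hv hsin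
  simp only [hlog, hlim] at h1
  have h2 : Tendsto (fun n : ℕ => ∑ j ∈ Finset.range n,
      (1 / (X - ((j : ℂ) + 1)) + 1 / (X + ((j : ℂ) + 1)))) atTop
      (𝓝 (↑π * Complex.cos (↑π * X) / Complex.sin (↑π * X) - 1 / X)) := by
    have := h1.sub (tendsto_const_nhds (x := (1 / X : ℂ)))
    refine this.congr fun n => by ring
  -- summability of the real series
  have hsum1 : Summable (fun j : ℕ => 1 / ((j : ℝ) + 1) ^ 2) := by
    have := (summable_nat_add_iff (f := fun n : ℕ => 1 / (n : ℝ) ^ 2) 1).mpr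
      (summable_one_div_nat_pow.mpr one_lt_two)
    simpa using this
  have hsummable : Summable (fun k : ℕ => 1 / (x - ((k : ℝ) + 1)) + 1 / (x + ((k : ℝ) + 1))) := by
    apply Summable.of_norm_bounded_eventually_nat
      (g := fun k => (8 * |x| + 1) * (1 / ((k : ℝ) + 1) ^ 2)) (hsum1.mul_left _)
    filter_upwards [eventually_ge_atTop ⌈2 * |x|⌉₊] with k hk
    set c : ℝ := (k : ℝ) + 1 with hcdef
    have hck : 2 * |x| + 1 ≤ c := by
      have : (2 * |x| : ℝ) ≤ (⌈2 * |x|⌉₊ : ℝ) := Nat.le_ceil _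
      have h2 : ((⌈2 * |x|⌉₊ : ℕ) : ℝ) ≤ (k : ℝ) := Nat.cast_le.mpr hk
      simp only [hcdef]; linarith
    have hxc : |x| < c := by have := abs_nonneg x; linarith
    have hc1 : (1 : ℝ) ≤ c := by have := abs_nonneg x; linarith
    have hxlt : x ^ 2 ≤ c ^ 2 / 4 := by
      have h3 : 2 * |x| ≤ c - 1 := by linarith
      have h4 : |x| ^ 2 ≤ ((c - 1) / 2) ^ 2 := by
        apply pow_le_pow_left₀ (abs_nonneg x); linarith
      have h5 : ((c - 1) / 2) ^ 2 ≤ c ^ 2 / 4 := by nlinarith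
      calc x ^ 2 = |x| ^ 2 := (_root_.sq_abs x).symm
        _ ≤ _ := h4.trans h5
    obtain ⟨hlt1, hlt2⟩ := abs_lt.mp hxc
    have hne1 : x - c ≠ 0 := by intro h; rw [sub_eq_zero] at h; linarith
    have hne2 : x + c ≠ 0 := by intro h; linarith
    have heq : 1 / (x - c) + 1 / (x + c) = 2 * x / ((x - c) * (x + c)) := by
      field_simp; ring
    rw [heq]
    have habs : |(x - c) * (x + c)| = c ^ 2 - x ^ 2 := by
      rw [abs_mul]
      have hx1 : x - c < 0 := by linarith
      have hx2 : 0 < x + c := by linarith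
      rw [_root_.abs_of_neg hx1, _root_.abs_of_pos hx2]; ring
    have hpos : (0:ℝ) < c ^ 2 - x ^ 2 := by nlinarith
    have h6 : |(2:ℝ)| = 2 := by norm_num
    rw [Real.norm_eq_abs, abs_div, habs, abs_mul, h6, div_le_iff₀ hpos]
    have h7 : c ^ 2 / 4 * 3 ≤ c ^ 2 - x ^ 2 := by nlinarith
    have h9 : (1 / c ^ 2) * c ^ 2 = 1 := by field_simp
    have h10 : (0:ℝ) < 1 / c ^ 2 := by positivity
    nlinarith [h7, h9, h10, abs_nonneg x, mul_le_mul_of_nonneg_left h7 h10.le]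
  -- put it together
  have hr : HasSum (fun k : ℕ => 1 / (x - ((k : ℝ) + 1)) + 1 / (x + ((k : ℝ) + 1)))
      (∑' k : ℕ, (1 / (x - ((k : ℝ) + 1)) + 1 / (x + ((k : ℝ) + 1)))) := hsummable.hasSum
  set Sr : ℝ := ∑' k : ℕ, (1 / (x - ((k : ℝ) + 1)) + 1 / (x + ((k : ℝ) + 1))) with hSrdef
  have hrC : HasSum (fun k : ℕ => ((1 / (x - ((k : ℝ) + 1)) + 1 / (x + ((k : ℝ) + 1)) : ℝ) : ℂ))
      ((Sr : ℝ) : ℂ) := Complex.hasSum_ofReal.mpr hr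
  have hcast : ∀ k : ℕ, ((1 / (x - ((k : ℝ) + 1)) + 1 / (x + ((k : ℝ) + 1)) : ℝ) : ℂ)
      = 1 / (X - ((k : ℂ) + 1)) + 1 / (X + ((k : ℂ) + 1)) := by
    intro k; rw [hXdef]; push_cast; ring
  have h3 : Tendsto (fun n : ℕ => ∑ j ∈ Finset.range n,
      (1 / (X - ((j : ℂ) + 1)) + 1 / (X + ((j : ℂ) + 1)))) atTop (𝓝 ((Sr : ℝ) : ℂ)) := by
    refine hrC.tendsto_sum_nat.congr fun n => Finset.sum_congr rfl fun j _ => hcast j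
  have hEq : ((Sr : ℝ) : ℂ) = ↑π * Complex.cos (↑π * X) / Complex.sin (↑π * X) - 1 / X :=
    tendsto_nhds_unique h3 h2
  have hsinR : Real.sin (π * x) ≠ 0 := by
    rw [Real.sin_ne_zero_iff]
    intro n h
    apply hx n
    have h2 : π * x = π * (n : ℝ) := by rw [← h]; ring
    exact (mul_left_cancel₀ pi_ne_zero h2)
  have htan : π / Real.tan (π * x) = π * Real.cos (π * x) / Real.sin (π * x) := by
    rw [Real.tan_eq_sin_div_cos]
    rcases eq_or_ne (Real.cos (π * x)) 0 with hc | hc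
    · simp [hc]
    · field_simp
  have hx0 : x ≠ 0 := by
    intro h; exact hx 0 (by rw [h]; norm_num)
  have hfinal : Sr = π / Real.tan (π * x) - 1 / x := by
    have heq2 : ((Sr : ℝ) : ℂ) = (((π / Real.tan (π * x) - 1 / x : ℝ)) : ℂ) := by
      rw [hEq, htan, hXdef]; push_cast; ring
    exact_mod_cast heq2
  rw [hfinal] at hr
  exact hr
end

section
/- The integral over (0, ∞) of x/sinh(x) dx equals π²/4. -/
open MeasureTheory Set Real

lemma aux_integral {c : ℝ} (hc : 0 < c) :
    ∫ x in Ioi (0:ℝ), x * Real.exp (-(c * x)) = 1 / c ^ 2 := by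
  have h := Real.integral_rpow_mul_exp_neg_mul_Ioi (by norm_num : (0:ℝ) < 2) hc
  rw [Real.Gamma_two, mul_one] at h
  have heq : ∀ x ∈ Ioi (0:ℝ), x ^ ((2:ℝ) - 1) * Real.exp (-(c * x)) = x * Real.exp (-(c * x)) := by
    intro x _
    norm_num
  rw [setIntegral_congr_fun measurableSet_Ioi heq] at h
  rw [h, show (2:ℝ) = ((2:ℕ):ℝ) by norm_num, Real.rpow_natCast, div_pow, one_pow]

lemma aux_integrable {c : ℝ} (hc : 0 < c) :
    IntegrableOn (fun x => x * Real.exp (-(c * x))) (Ioi (0:ℝ)) := by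
  have h := integrableOn_rpow_mul_exp_neg_mul_rpow (by norm_num : (-1:ℝ) < 1) (by norm_num : (0:ℝ) < 1) hc
  apply h.congr_fun ?_ measurableSet_Ioi
  intro x hx
  simp only [Real.rpow_one, neg_mul]

lemma hasSum_odd_sq : HasSum (fun n : ℕ => (1:ℝ) / (2 * (n:ℝ) + 1) ^ 2) (π ^ 2 / 8) := by
  have h := hasSum_zeta_two
  set f : ℕ → ℝ := fun n => (1:ℝ) / (n:ℝ) ^ 2 with hf
  have heven : HasSum (fun k : ℕ => f (2 * k)) (π ^ 2 / 24) := by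
    have h4 := h.mul_left (1/4)
    have e : (fun n : ℕ => (1/4 : ℝ) * f n) = fun k : ℕ => f (2 * k) := by
      funext n; simp only [hf]; push_cast; ring
    rw [e] at h4
    convert h4 using 1; rfl; ring
  have hinj : Function.Injective (fun k : ℕ => 2 * k + 1) := fun a b hab => by
    simp only at hab; omega
  have hsumm : Summable (fun k : ℕ => f (2 * k + 1)) := h.summable.comp_injective hinj
  have hodd := hsumm.hasSum
  have htot := heven.even_add_odd hodd
  have huniq := h.unique htot
  have hval : (∑' k : ℕ, f (2 * k + 1)) = π ^ 2 / 8 := by linarith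
  rw [hval] at hodd
  have e2 : (fun k : ℕ => f (2 * k + 1)) = fun n : ℕ => (1:ℝ) / (2 * (n:ℝ) + 1) ^ 2 := by
    funext n; simp only [hf]; push_cast; ring
  rwa [e2] at hodd

lemma series_eq {x : ℝ} (hx : 0 < x) :
    HasSum (fun n : ℕ => 2 * (x * Real.exp (-((2 * (n:ℝ) + 1) * x)))) (x / Real.sinh x) := by
  have h1 : Real.exp (-(2 * x)) < 1 := by
    rw [Real.exp_lt_one_iff]; linarith
  have hg := (hasSum_geometric_of_lt_one (Real.exp_nonneg _) h1).mul_left (2 * (x * Real.exp (-x)))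
  have e : (fun n : ℕ => 2 * (x * Real.exp (-x)) * Real.exp (-(2 * x)) ^ n)
      = fun n : ℕ => 2 * (x * Real.exp (-((2 * (n:ℝ) + 1) * x))) := by
    funext n
    rw [← Real.exp_nat_mul, mul_assoc, mul_assoc, ← Real.exp_add]
    congr 2
    ring
  rw [e] at hg
  convert hg using 1; rfl
  have hs : Real.sinh x = (Real.exp x - Real.exp (-x)) / 2 := Real.sinh_eq x
  have hne : 1 - Real.exp (-(2 * x)) ≠ 0 := by linarith
  have hlt : Real.exp (-x) < Real.exp x := Real.exp_lt_exp.mpr (by linarith)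
  have he2 : Real.exp (-(2 * x)) = Real.exp (-x) * Real.exp (-x) := by
    rw [← Real.exp_add]; ring_nf
  have hne2 : 1 - Real.exp (-x) * Real.exp (-x) ≠ 0 := he2 ▸ hne
  have hu : Real.exp x * Real.exp (-x) = 1 := by rw [← Real.exp_add]; simp
  rw [hs, he2]
  rw [div_eq_iff (by linarith : (Real.exp x - Real.exp (-x)) / 2 ≠ 0)]
  have hy : (1 - Real.exp (-x) * Real.exp (-x)) * (1 - Real.exp (-x) * Real.exp (-x))⁻¹ = 1 :=
    mul_inv_cancel₀ hne2
  linear_combination (-x) * hy - x * (1 - Real.exp (-x) * Real.exp (-x))⁻¹ * hu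

theorem integral_x_div_sinh :
    (∫ x in Ioi (0:ℝ), x / Real.sinh x) = π ^ 2 / 4 := by
  set F : ℕ → ℝ → ℝ := fun n x => 2 * (x * Real.exp (-((2 * (n:ℝ) + 1) * x))) with hF
  have hc : ∀ n : ℕ, (0:ℝ) < 2 * (n:ℝ) + 1 := fun n => by positivity
  have hint : ∀ n, IntegrableOn (F n) (Ioi (0:ℝ)) := fun n =>
    (aux_integrable (hc n)).const_mul 2
  have hval : ∀ n, (∫ x in Ioi (0:ℝ), F n x) = 2 * (1 / (2 * (n:ℝ) + 1) ^ 2) := by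
    intro n
    simp only [hF]
    rw [integral_const_mul, aux_integral (hc n)]
  have hnorm : ∀ n, (∫ x in Ioi (0:ℝ), ‖F n x‖) = 2 * (1 / (2 * (n:ℝ) + 1) ^ 2) := by
    intro n
    rw [← hval n]
    apply setIntegral_congr_fun measurableSet_Ioi
    intro x hx
    have hx0 : 0 < x := hx
    simp only [hF]
    rw [Real.norm_of_nonneg (by positivity)]
  have hsum : Summable (fun n : ℕ => ∫ x in Ioi (0:ℝ), ‖F n x‖) := by
    simp_rw [hnorm]
    exact (hasSum_odd_sq.mul_left 2).summable
  have key := integral_tsum_of_summable_integral_norm hint hsum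
  have heq : (∫ x in Ioi (0:ℝ), x / Real.sinh x) = ∫ x in Ioi (0:ℝ), ∑' n, F n x := by
    apply setIntegral_congr_fun measurableSet_Ioi
    intro x hx
    exact (series_eq hx).tsum_eq.symm
  rw [heq, ← key]
  have e3 : (fun n : ℕ => ∫ x in Ioi (0:ℝ), F n x) = fun n : ℕ => 2 * (1 / (2 * (n:ℝ) + 1) ^ 2) :=
    funext hval
  rw [e3, (hasSum_odd_sq.mul_left 2).tsum_eq]
  ring
end

section
/- The integral over ℝ of exp(-((x² - 1)/x)²) dx, interpreted as the sum of integrals over (-∞, 0) and (0, ∞), equals √π. -/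
open MeasureTheory Set Real

noncomputable def rr (u : ℝ) : ℝ := Real.sqrt (u ^ 2 + 4)

lemma rr_pos (u : ℝ) : 0 < rr u := Real.sqrt_pos.2 (by positivity)

lemma rr_sq (u : ℝ) : rr u ^ 2 = u ^ 2 + 4 := Real.sq_sqrt (by positivity)

lemma abs_lt_rr (u : ℝ) : |u| < rr u := by
  have : Real.sqrt (u ^ 2) < Real.sqrt (u ^ 2 + 4) :=
    Real.sqrt_lt_sqrt (by positivity) (by linarith)
  simpa [rr, Real.sqrt_sq_eq_abs] using this

lemma rr_hasDeriv (u : ℝ) : HasDerivAt rr (u / rr u) u := by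
  have h : HasDerivAt (fun u : ℝ => u ^ 2 + 4) (2 * u) u := by
    simpa using ((hasDerivAt_pow 2 u).add_const 4)
  have := (Real.hasDerivAt_sqrt (x := u ^ 2 + 4) (by positivity)).comp u h
  refine HasDerivAt.congr_deriv (f := rr) this ?_
  unfold rr
  field_simp

noncomputable def ψ (ε u : ℝ) : ℝ := (u + ε * rr u) / 2

lemma ψ_hasDeriv (ε u : ℝ) : HasDerivAt (ψ ε) ((1 + ε * (u / rr u)) / 2) u := by
  have := ((hasDerivAt_id u).add ((rr_hasDeriv u).const_mul ε)).div_const 2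
  exact this

lemma deriv_pos (ε u : ℝ) (hε : |ε| = 1) : 0 < (1 + ε * (u / rr u)) / 2 := by
  have h1 : |ε * (u / rr u)| < 1 := by
    rw [abs_mul, hε, one_mul, abs_div, abs_of_pos (rr_pos u),
      div_lt_one (rr_pos u)]
    exact abs_lt_rr u
  have := (abs_lt.1 h1).1
  linarith

lemma ψ_sign (ε u : ℝ) (hε : |ε| = 1) : 0 < ε * ψ ε u := by
  have hε2 : ε ^ 2 = 1 := by
    have := sq_abs ε; rw [hε] at this; linarith
  have h : ε * ψ ε u = (ε * u + rr u) / 2 := by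
    simp only [ψ]
    rw [show ε * ((u + ε * rr u) / 2) = (ε * u + ε ^ 2 * rr u) / 2 by ring, hε2, one_mul]
  rw [h]
  have h2 : |ε * u| < rr u := by rw [abs_mul, hε, one_mul]; exact abs_lt_rr u
  have h3 := (abs_lt.1 h2).1
  linarith

lemma ψ_eq (ε u : ℝ) (hε : |ε| = 1) : ((ψ ε u) ^ 2 - 1) / ψ ε u = u := by
  have hε2 : ε ^ 2 = 1 := by
    have := sq_abs ε; rw [hε] at this; linarith
  have hne : ψ ε u ≠ 0 := by
    intro h
    have := ψ_sign ε u hε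
    rw [h, mul_zero] at this; exact lt_irrefl _ this
  have hkey : (ψ ε u) ^ 2 - 1 = u * ψ ε u := by
    have hr := rr_sq u
    simp only [ψ]
    field_simp
    nlinarith [hε2]
  rw [hkey, mul_div_assoc, div_self hne, mul_one]

lemma ψ_image (ε : ℝ) (hε : |ε| = 1) : ψ ε '' univ = {x : ℝ | 0 < ε * x} := by
  have hε2 : ε ^ 2 = 1 := by
    have := sq_abs ε; rw [hε] at this; linarith
  ext x
  simp only [image_univ, mem_range, mem_setOf_eq]
  constructor
  · rintro ⟨u, rfl⟩; exact ψ_sign ε u hε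
  · intro hx
    have hxne : x ≠ 0 := by
      intro h; rw [h, mul_zero] at hx; exact lt_irrefl _ hx
    refine ⟨x - 1/x, ?_⟩
    have hxx : 0 < ε * x + ε * (1/x) := by
      have h1 : 0 < (ε * x) * (ε * (1/x)) := by
        have : (ε * x) * (ε * (1/x)) = ε ^ 2 * (x * (1/x)) := by ring
        rw [this, hε2, one_mul, mul_one_div, div_self hxne]; norm_num
      nlinarith
    have hrr : rr (x - 1/x) = ε * (x + 1/x) := by
      rw [rr, show (x - 1/x) ^ 2 + 4 = (ε * (x + 1/x)) ^ 2 by field_simp; nlinarith [hε2]]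
      exact Real.sqrt_sq (by linarith)
    simp only [ψ, hrr]
    field_simp
    nlinarith [hε2]

lemma half_integral (ε : ℝ) (hε : |ε| = 1) :
    (∫ x in {x : ℝ | 0 < ε * x}, Real.exp (-((x ^ 2 - 1) / x) ^ 2))
      = ∫ u : ℝ, (1 + ε * (u / rr u)) / 2 * Real.exp (-u ^ 2) := by
  rw [← ψ_image ε hε]
  rw [integral_image_eq_integral_abs_deriv_smul MeasurableSet.univ
    (fun u _ => (ψ_hasDeriv ε u).hasDerivWithinAt)
    (fun a _ b _ hab => ?inj) _]
  · rw [← setIntegral_univ (f := fun u : ℝ => (1 + ε * (u / rr u)) / 2 * Real.exp (-u ^ 2)) (μ := volume)]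
    refine setIntegral_congr_fun MeasurableSet.univ fun u _ => ?_
    rw [ψ_eq ε u hε, abs_of_pos (deriv_pos ε u hε)]
    simp [smul_eq_mul]
  case inj =>
    have hmono : StrictMono (ψ ε) :=
      strictMono_of_deriv_pos (fun u => by
        rw [(ψ_hasDeriv ε u).deriv]; exact deriv_pos ε u hε)
    exact hmono.injective hab

lemma cont_term (ε : ℝ) : Continuous (fun u : ℝ => (1 + ε * (u / rr u)) / 2 * Real.exp (-u ^ 2)) := by
  have hrr : Continuous rr := by
    apply Real.continuous_sqrt.comp; continuity
  apply Continuous.mul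
  · apply Continuous.div_const
    apply continuous_const.add
    apply continuous_const.mul
    exact continuous_id.div hrr fun u => (rr_pos u).ne'
  · exact Real.continuous_exp.comp (by continuity)

lemma integrable_term (ε : ℝ) (hε : |ε| = 1) :
    Integrable (fun u : ℝ => (1 + ε * (u / rr u)) / 2 * Real.exp (-u ^ 2)) := by
  have hg : Integrable (fun u : ℝ => Real.exp (-u ^ 2)) := by
    simpa using integrable_exp_neg_mul_sq (one_pos)
  refine hg.mono (cont_term ε).aestronglyMeasurable ?_
  simp only [Real.norm_eq_abs]
  filter_upwards with u
  have h1 : 0 < (1 + ε * (u / rr u)) / 2 := deriv_pos ε u hε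
  have h2 : (1 + ε * (u / rr u)) / 2 ≤ 1 := by
    have h3 : |ε * (u / rr u)| < 1 := by
      rw [abs_mul, hε, one_mul, abs_div, abs_of_pos (rr_pos u), div_lt_one (rr_pos u)]
      exact abs_lt_rr u
    have := (abs_lt.1 h3).2
    linarith
  rw [abs_mul, abs_of_pos h1, abs_of_pos (Real.exp_pos _)]
  nlinarith [Real.exp_pos (-u ^ 2)]

theorem iterate_identity_one :
    (∫ x in Iio (0:ℝ), Real.exp (-((x ^ 2 - 1) / x) ^ 2)) +
    (∫ x in Ioi (0:ℝ), Real.exp (-((x ^ 2 - 1) / x) ^ 2))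
      = Real.sqrt π := by
  have hm1 : |(-1 : ℝ)| = 1 := by norm_num
  have h1 : |(1 : ℝ)| = 1 := by norm_num
  have hIio : Iio (0:ℝ) = {x : ℝ | 0 < (-1 : ℝ) * x} := by
    ext x; simp [neg_pos]
  have hIoi : Ioi (0:ℝ) = {x : ℝ | 0 < (1 : ℝ) * x} := by
    ext x; simp
  rw [hIio, hIoi, half_integral (-1) hm1, half_integral 1 h1,
    ← integral_add (integrable_term (-1) hm1) (integrable_term 1 h1)]
  have : (fun u : ℝ => (1 + (-1 : ℝ) * (u / rr u)) / 2 * Real.exp (-u ^ 2)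
      + (1 + (1 : ℝ) * (u / rr u)) / 2 * Real.exp (-u ^ 2))
      = fun u : ℝ => Real.exp (-(1 : ℝ) * u ^ 2) := by
    ext u; ring_nf
  rw [this, integral_gaussian]
  norm_num
end
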